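/- arXiv:0810.4015 — 10 statements merged into one kernel-verified Lean document; each statement's English description precedes it below -/
import Mathlib

section
/- Let k be a positive integer and l < k with gcd(l,k)=1. For any a in GF(2^k)*, the polynomial P_a(x) = x^{2^l+1} + x + a has either 0, 1, or 3 zeros in GF(2^k). -/
/-- If `t^(2^l) = t` in a field of `2^k` elements with `gcd(l,k)=1`, `1<k`, `0<l`, then `t∈{0,1}`. -/
lemma fix_aux {F : Type*} [Field F] [Fintype F] {k l : ℕ} (hk : 1 < k)
    (hgcd : Nat.gcd l k = 1) (hF : Fintype.card F = 2 ^ k) (t : F)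
    (ht : t ^ (2 ^ l) = t) : t = 0 ∨ t = 1 := by
  have key : ∀ m, t ^ (2 ^ (l * m)) = t := by
    intro m
    induction m with
    | zero => simp
    | succ m ih =>
      have : 2 ^ (l * (m + 1)) = 2 ^ (l * m) * 2 ^ l := by ring
      rw [this, pow_mul, ih, ht]
  have hck : t ^ (2 ^ k) = t := by rw [← hF, FiniteField.pow_card]
  have keyk : ∀ m, t ^ (2 ^ (k * m)) = t := by
    intro m
    induction m with
    | zero => simp
    | succ m ih =>
      have : 2 ^ (k * (m + 1)) = 2 ^ (k * m) * 2 ^ k := by ring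
      rw [this, pow_mul, ih, hck]
  obtain ⟨m, -, hm⟩ := Nat.exists_mul_mod_eq_one_of_coprime hgcd hk
  have hdm : l * m = k * (l * m / k) + 1 := by
    conv_lhs => rw [← Nat.div_add_mod (l * m) k, hm]
  have ht2 : t ^ 2 = t := by
    have := key m
    rw [hdm, pow_add, pow_mul, pow_one] at this
    conv_rhs => rw [← this]
    rw [keyk]
  have : t * (t - 1) = 0 := by linear_combination ht2
  rcases mul_eq_zero.1 this with h | h
  · exact Or.inl h
  · exact Or.inr (by linear_combination h)

lemma surj_aux {F : Type*} [Field F] [Fintype F] {k l : ℕ} (hk : 1 < k)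
    (hgcd : Nat.gcd l k = 1) (hF : Fintype.card F = 2 ^ k) (c : F) (hc : c ≠ 0) :
    ∃ w : F, w ≠ 0 ∧ w ^ (2 ^ l) = c * w := by
  classical
  have hinj : Function.Injective (fun u : Fˣ => u ^ (2 ^ l) * u⁻¹) := by
    intro u v huv
    simp only at huv
    have h1 : ((u * v⁻¹ : Fˣ) : F) ^ (2 ^ l) = ((u * v⁻¹ : Fˣ) : F) := by
      have : (u * v⁻¹) ^ (2 ^ l) * (u * v⁻¹)⁻¹ = 1 := by
        rw [mul_pow, mul_inv]
        have : u ^ 2 ^ l * v⁻¹ ^ 2 ^ l * (u⁻¹ * v⁻¹⁻¹) =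
            (u ^ 2 ^ l * u⁻¹) * (v ^ 2 ^ l * v⁻¹)⁻¹ := by
          rw [mul_inv, inv_pow]; exact mul_mul_mul_comm _ _ _ _
        rw [this, huv, mul_inv_cancel]
      have h2 : (u * v⁻¹) ^ (2 ^ l) = u * v⁻¹ := by
        rwa [mul_inv_eq_one] at this
      exact_mod_cast congrArg (Units.val) h2
    rcases fix_aux hk hgcd hF _ h1 with h | h
    · exact absurd h (Units.ne_zero _)
    · have : (u * v⁻¹ : Fˣ) = 1 := Units.ext h
      rwa [mul_inv_eq_one] at this
  have hsurj := (Finite.injective_iff_surjective).1 hinj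
  obtain ⟨u, hu⟩ := hsurj (Units.mk0 c hc)
  refine ⟨(u : F), Units.ne_zero u, ?_⟩
  have : ((u ^ (2 ^ l) * u⁻¹ : Fˣ) : F) = c := by
    have := congrArg Units.val hu
    simpa using this
  have h3 : (u : F) ^ (2 ^ l) * (u : F)⁻¹ = c := by
    simpa using this
  field_simp at h3
  linear_combination h3

/-- For `gcd(l,k)=1`, `P_a(x) = x^(2^l+1) + x + a` has 0, 1, or 3 zeros in `GF(2^k)`. -/
theorem stmt_0 (k l : ℕ) (hk : 0 < k) (hlk : l < k) (hgcd : Nat.gcd l k = 1)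
    (F : Type*) [Field F] [Fintype F] [DecidableEq F] (hF : Fintype.card F = 2 ^ k)
    (a : F) (ha : a ≠ 0) :
    (Finset.univ.filter (fun x : F => x ^ (2 ^ l + 1) + x + a = 0)).card ∈
      ({0, 1, 3} : Set ℕ) := by
  -- characteristic 2
  obtain ⟨p, hp⟩ := CharP.exists F
  haveI := hp
  obtain ⟨n, hpn, hn⟩ := FiniteField.card F p
  have hp2 : p = 2 := by
    have hdvd : p ∣ 2 ^ k := by
      have h1 : p ∣ p ^ (n : ℕ) := dvd_pow_self p n.pos.ne'
      rwa [← hn, hF] at h1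
    have := (Nat.Prime.dvd_of_dvd_pow hpn hdvd)
    exact (Nat.prime_dvd_prime_iff_eq hpn Nat.prime_two).1 this
  subst hp2
  haveI : Fact (Nat.Prime 2) := ⟨Nat.prime_two⟩
  have h2 : (2 : F) = 0 := by exact_mod_cast CharP.cast_eq_zero F 2
  -- trivial case k = 1
  rcases eq_or_lt_of_le (show 1 ≤ k from hk) with hk1 | hk2
  · have hl0 : l = 0 := by omega
    have hempty : (Finset.univ.filter (fun x : F => x ^ (2 ^ l + 1) + x + a = 0)) = ∅ := by
      rw [Finset.filter_eq_empty_iff]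
      intro x _
      have hx2 : x ^ (2 : ℕ) = x := by
        have := FiniteField.pow_card x
        rwa [hF, ← hk1, pow_one] at this
      subst hl0
      simp only [pow_zero, pow_one]
      rw [show (1 : ℕ) + 1 = 2 from rfl, hx2]
      intro h
      apply ha
      linear_combination h - x * h2
    rw [hempty]
    simp
  -- main case
  have hk' : 1 < k := hk2
  have hl : 0 < l := by
    rcases Nat.eq_zero_or_pos l with h | h
    · subst h; simp [Nat.gcd] at hgcd; omega
    · exact h
  set q : ℕ := 2 ^ l with hq
  have frob : ∀ u v : F, (u + v) ^ q = u ^ q + v ^ q := fun u v =>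
    add_pow_char_pow u v 2 l
  set S := Finset.univ.filter (fun x : F => x ^ (q + 1) + x + a = 0) with hS
  rcases S.eq_empty_or_nonempty with hSe | ⟨x, hx⟩
  · rw [hSe]; simp
  have hroot : x ^ (q + 1) + x + a = 0 := (Finset.mem_filter.1 hx).2
  have hx0 : x ≠ 0 := by
    intro h; subst h
    rw [zero_pow (by positivity)] at hroot
    apply ha; linear_combination hroot
  have hb0 : x ^ q + 1 ≠ 0 := by
    intro h
    apply ha
    have hxq : x ^ (q + 1) = x := by
      rw [pow_succ]
      have : x ^ q = 1 := by linear_combination h - h2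
      rw [this, one_mul]
    rw [hxq] at hroot
    linear_combination hroot - x * h2
  have hbx : (x ^ q + 1) * x = a := by
    have : x ^ q * x = x ^ (q + 1) := (pow_succ x q).symm
    linear_combination hroot + this - a * h2
  -- the affine linearized equation
  set T := Finset.univ.filter (fun w : F => (x ^ q + 1) * w ^ q + x * w = 1) with hT
  have hcrux : ∀ w : F, w ≠ 0 →
      ((x + w⁻¹) ^ (q + 1) + (x + w⁻¹) + a = 0 ↔ (x ^ q + 1) * w ^ q + x * w = 1) := by
    intro w hw
    have hinv : w * w⁻¹ = 1 := mul_inv_cancel₀ hw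
    have hinvq : w ^ q * (w⁻¹) ^ q = 1 := by rw [← mul_pow, hinv, one_pow]
    have hwq0 : w ^ q * w ≠ 0 := mul_ne_zero (pow_ne_zero _ hw) hw
    have hmain : ((x + w⁻¹) ^ (q + 1) + (x + w⁻¹) + a) * (w ^ q * w) =
        (x ^ q + 1) * w ^ q + x * w + 1 := by
      rw [pow_succ, frob]
      linear_combination (w ^ q * w) * hroot +
        (x ^ q * w ^ q + (w⁻¹) ^ q * w ^ q + w ^ q) * hinv + (x * w + 1) * hinvq
    constructor
    · intro h
      rw [h, zero_mul] at hmain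
      linear_combination -hmain - h2
    · intro h
      have : ((x + w⁻¹) ^ (q + 1) + (x + w⁻¹) + a) * (w ^ q * w) = 0 := by
        linear_combination hmain + h + h2
      exact (mul_eq_zero.1 this).resolve_right hwq0
  -- bijection between S.erase x and T, via y ↦ (x+y)⁻¹
  have hST : S.card = T.card + 1 := by
    have hbij : (S.erase x).card = T.card := by
      apply Finset.card_bij' (fun y _ => (x + y)⁻¹) (fun w _ => x + w⁻¹)
      · intro y hy
        obtain ⟨hyx, hyS⟩ := Finset.mem_erase.1 hy
        have hyroot : y ^ (q + 1) + y + a = 0 := (Finset.mem_filter.1 hyS).2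
        have hz : x + y ≠ 0 := by
          intro h; exact hyx (by linear_combination h - x * h2)
        have hw0 : (x + y)⁻¹ ≠ 0 := inv_ne_zero hz
        rw [hT, Finset.mem_filter]
        refine ⟨Finset.mem_univ _, ?_⟩
        rw [← hcrux _ hw0, inv_inv]
        have hxy : x + (x + y) = y := by linear_combination x * h2
        rw [hxy]; exact hyroot
      · intro w hw
        have hwT : (x ^ q + 1) * w ^ q + x * w = 1 := (Finset.mem_filter.1 hw).2
        have hw0 : w ≠ 0 := by
          intro h; subst h
          rw [zero_pow (by positivity), mul_zero, mul_zero, add_zero] at hwT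
          exact one_ne_zero hwT.symm
        rw [Finset.mem_erase]
        constructor
        · intro h
          have : w⁻¹ = 0 := by linear_combination h
          exact inv_ne_zero hw0 this
        · rw [hS, Finset.mem_filter]
          exact ⟨Finset.mem_univ _, (hcrux w hw0).2 hwT⟩
      · intro y hy
        have hyx := (Finset.mem_erase.1 hy).1
        have hz : x + y ≠ 0 := by
          intro h; exact hyx (by linear_combination h - x * h2)
        rw [inv_inv]; linear_combination x * h2
      · intro w hw
        have hwT : (x ^ q + 1) * w ^ q + x * w = 1 := (Finset.mem_filter.1 hw).2
        have hw0 : w ≠ 0 := by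
          intro h; subst h
          rw [zero_pow (by positivity), mul_zero, mul_zero, add_zero] at hwT
          exact one_ne_zero hwT.symm
        have h1 : x + (x + w⁻¹) = w⁻¹ := by linear_combination x * h2
        rw [h1, inv_inv]
    rw [← hbij, Finset.card_erase_of_mem hx]
    have : 0 < S.card := Finset.card_pos.2 ⟨x, hx⟩
    omega
  have hTcard : T.card = 0 ∨ T.card = 2 := by
    rcases T.eq_empty_or_nonempty with hTe | ⟨w1, hw1T⟩
    · left; rw [hTe]; rfl
    right
    have hw1 : (x ^ q + 1) * w1 ^ q + x * w1 = 1 := (Finset.mem_filter.1 hw1T).2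
    obtain ⟨w0, hw00, hw0q⟩ := surj_aux hk' hgcd hF (x * (x ^ q + 1)⁻¹)
      (mul_ne_zero hx0 (inv_ne_zero hb0))
    have hker : (x ^ q + 1) * w0 ^ q = x * w0 := by
      rw [hw0q]; field_simp
    have hT2 : T = {w1, w1 + w0} := by
      ext w
      rw [hT, Finset.mem_filter, Finset.mem_insert, Finset.mem_singleton]
      simp only [Finset.mem_univ, true_and]
      constructor
      · intro hwT
        have hu : (x ^ q + 1) * (w + w1) ^ q + x * (w + w1) = 0 := by
          rw [frob]; linear_combination hwT + hw1 + h2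
        by_cases hu0 : w + w1 = 0
        · left; linear_combination hu0 - w1 * h2
        · right
          have hb : (x ^ q + 1) * (w + w1) ^ q = x * (w + w1) := by
            linear_combination hu - (x * (w + w1)) * h2
          have hcross : (w + w1) ^ q * w0 = w0 ^ q * (w + w1) := by
            apply mul_left_cancel₀ hb0
            linear_combination w0 * hb - (w + w1) * hker
          have ht : ((w + w1) * w0⁻¹) ^ q = (w + w1) * w0⁻¹ := by
            rw [mul_pow, inv_pow]
            field_simp
            linear_combination hcross
          rcases fix_aux hk' hgcd hF _ ht with h | h
          · exact absurd ((mul_eq_zero.1 h).resolve_right (inv_ne_zero hw00)) hu0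
          · have hu : w + w1 = w0 := (mul_inv_eq_one₀ hw00).1 h
            linear_combination hu - w1 * h2
      · rintro (rfl | rfl)
        · exact hw1
        · rw [frob]; linear_combination hw1 + hker + (x * w0) * h2
    rw [hT2, Finset.card_insert_of_notMem, Finset.card_singleton]
    rw [Finset.mem_singleton]
    intro h
    exact hw00 (by linear_combination -h)
  rcases hTcard with h | h <;> rw [hST, h] <;> norm_num
end

section
/- Let k be a positive integer, l < k with gcd(l,k)=1, and a in GF(2^k)*. Suppose x_0 in GF(2^k) satisfies x_0^{2^l+1} + x_0 = a (so P_a(x_0)=0). Then P_a(x) has exactly one zero in GF(2^k) if and only if Tr_k((1+x_0^{-1})^{e(l')}) = 1, where l' = l^{-1} mod k, e(l') = 1 + 2^l + 2^{2l} + ... + 2^{(l'-1)l}, and Tr_k is the absolute trace of GF(2^k). -/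
open Finset

set_option linter.unusedSectionVars false
set_option linter.unusedVariables false

namespace Stmt1Aux
variable {F : Type*} [Field F]

noncomputable def T (k : ℕ) (x : F) : F := ∑ i ∈ Finset.range k, x ^ 2 ^ i

variable [CharP F 2]

lemma frob_add (n : ℕ) (x y : F) : (x + y) ^ 2 ^ n = x ^ 2 ^ n + y ^ 2 ^ n := by
  haveI : Fact (Nat.Prime 2) := ⟨Nat.prime_two⟩
  exact add_pow_char_pow x y 2 n

lemma pow_pow_fix (d m : ℕ) (x : F) (h : x ^ 2 ^ d = x) : x ^ 2 ^ (d * m) = x := by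
  induction m with
  | zero => simp
  | succ m ih =>
    have : (2:ℕ) ^ (d * (m+1)) = 2 ^ (d*m) * 2 ^ d := by rw [← pow_add]; ring_nf
    rw [this, pow_mul, ih, h]

variable {k : ℕ} [Fintype F] (hF : Fintype.card F = 2 ^ k)

include hF

lemma pow_card (x : F) : x ^ 2 ^ k = x := by rw [← hF]; exact FiniteField.pow_card x

lemma T_add (x y : F) : T k (x + y) = T k x + T k y := by
  simp [T, frob_add, Finset.sum_add_distrib]

lemma T_sq (x : F) : T k (x ^ 2) = T k x := by
  have h1 := Finset.sum_range_succ' (fun i => x ^ 2 ^ i) k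
  have h2 := Finset.sum_range_succ (fun i => x ^ 2 ^ i) k
  have e1 : T k (x ^ 2) = ∑ i ∈ Finset.range k, x ^ 2 ^ (i + 1) := by
    unfold T
    congr 1; funext i
    rw [← pow_mul, ← pow_succ']
  rw [e1]
  have h3 : (∑ i ∈ Finset.range k, x ^ 2 ^ (i+1)) + x ^ 2 ^ 0 = (∑ i ∈ Finset.range k, x ^ 2 ^ i) + x ^ 2 ^ k := by
    rw [← h1, h2]
  rw [pow_card hF] at h3
  have : (∑ i ∈ Finset.range k, x ^ 2 ^ (i+1)) = ∑ i ∈ Finset.range k, x ^ 2 ^ i := by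
    have h0 : x ^ 2 ^ 0 = x := by simp
    rw [h0] at h3
    exact add_right_cancel h3
  rw [this]; rfl

lemma T_pow (n : ℕ) (x : F) : T k (x ^ 2 ^ n) = T k x := by
  induction n with
  | zero => simp
  | succ n ih =>
    have : x ^ 2 ^ (n+1) = (x ^ 2 ^ n) ^ 2 := by rw [← pow_mul, pow_succ]
    rw [this, T_sq hF, ih]

lemma T_mul_self (x : F) : T k x * T k x = T k x := by
  haveI : Fact (Nat.Prime 2) := ⟨Nat.prime_two⟩
  have h : T k x * T k x = T k (x ^ 2) := by
    have e : T k x * T k x = frobenius F 2 (T k x) := by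
      rw [frobenius_def]; ring
    rw [e]
    unfold T
    rw [map_sum (frobenius F 2)]
    congr 1; funext i
    rw [frobenius_def, ← pow_mul, ← pow_mul, mul_comm (2^i) 2]
  rw [h, T_sq hF]

lemma T_zero_or_one (x : F) : T k x = 0 ∨ T k x = 1 := by
  have h : T k x * (T k x - 1) = 0 := by linear_combination T_mul_self hF x
  rcases mul_eq_zero.mp h with h | h
  · exact Or.inl h
  · exact Or.inr (by linear_combination h)

lemma exists_T_one (hk : 0 < k) : ∃ x : F, T k x = 1 := by
  by_contra hc
  push_neg at hc
  have hzero : ∀ x : F, T k x = 0 := fun x => (T_zero_or_one hF x).resolve_right (hc x)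
  set p : Polynomial F := ∑ i ∈ Finset.range k, Polynomial.X ^ 2 ^ i with hp
  have heval : ∀ x : F, p.eval x = 0 := by
    intro x
    have : p.eval x = T k x := by simp [hp, T, Polynomial.eval_finset_sum]
    rw [this]; exact hzero x
  have hdeg : p.natDegree ≤ 2 ^ (k - 1) := by
    apply Polynomial.natDegree_sum_le_of_forall_le
    intro i hi
    rw [Polynomial.natDegree_X_pow]
    have := Finset.mem_range.mp hi
    exact Nat.pow_le_pow_right (by norm_num) (by omega)
  have hlt : p.natDegree < Fintype.card F := by
    rw [hF]
    calc p.natDegree ≤ 2 ^ (k-1) := hdeg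
    _ < 2 ^ k := Nat.pow_lt_pow_right (by norm_num) (by omega)
  have hpz : p = 0 :=
    Polynomial.eq_zero_of_natDegree_lt_card_of_eval_eq_zero p (f := (id : F → F))
      Function.injective_id (fun x => heval x) hlt
  have hcoeff : p.coeff (2 ^ (k-1)) = 1 := by
    rw [hp, Polynomial.finset_sum_coeff]
    rw [Finset.sum_eq_single (k-1)]
    · simp
    · intro i hi hne
      rw [Polynomial.coeff_X_pow]
      have : ¬ (2:ℕ) ^ (k-1) = 2 ^ i := fun h =>
        hne (Nat.pow_right_injective (le_refl 2) h.symm)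
      simp [this]
    · intro h
      exact absurd (Finset.mem_range.mpr (by omega)) h
  rw [hpz] at hcoeff
  simp at hcoeff


section Phi
variable {l l' q : ℕ} (hq : l * l' = k * q + 1)

include hq

lemma ker_phi (v : F) (h : v ^ 2 ^ l + v = 0) : v = 0 ∨ v = 1 := by
  have hv : v ^ 2 ^ l = v := by
    have : (2:F) = 0 := by exact_mod_cast CharP.cast_eq_zero F 2
    linear_combination h - v * this
  have h1 : v ^ 2 ^ (l * l') = v := pow_pow_fix l l' v hv
  have h2 : v ^ 2 ^ (k * q) = v := pow_pow_fix k q v (pow_card hF v)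
  have h3 : v ^ 2 ^ (k * q + 1) = v ^ 2 := by
    rw [pow_succ, pow_mul, h2]
  rw [hq, h3] at h1
  have hz : v * (v - 1) = 0 := by linear_combination h1
  rcases mul_eq_zero.mp hz with h' | h'
  · exact Or.inl h'
  · exact Or.inr (by linear_combination h')


lemma phi_fiber (v w : F) (h : v ^ 2 ^ l + v = w ^ 2 ^ l + w) : w = v ∨ w = v + 1 := by
  have hadd : (v + w) ^ 2 ^ l + (v + w) = 0 := by
    rw [frob_add]
    have h2 : (2:F) = 0 := by exact_mod_cast CharP.cast_eq_zero F 2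
    linear_combination h + (w ^ 2 ^ l + w) * h2
  have h2 : (2:F) = 0 := by exact_mod_cast CharP.cast_eq_zero F 2
  rcases ker_phi hF hq (v + w) hadd with h' | h'
  · exact Or.inl (by linear_combination h' - v * h2)
  · exact Or.inr (by linear_combination h' - v * h2)


lemma phi_mem_iff [DecidableEq F] (hk : 0 < k) (b : F) :
    (∃ v : F, v ^ 2 ^ l + v = b) ↔ T k b = 0 := by
  have h2 : (2:F) = 0 := by exact_mod_cast CharP.cast_eq_zero F 2
  constructor
  · rintro ⟨v, rfl⟩
    rw [T_add hF, T_pow hF]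
    linear_combination T k v * h2
  · intro hb
    -- counting argument
    set S : Finset F := Finset.univ.image (fun v : F => v ^ 2 ^ l + v) with hS
    set K : Finset F := Finset.univ.filter (fun b : F => T k b = 0) with hK
    have hSK : S ⊆ K := by
      intro c hc
      rw [hS, Finset.mem_image] at hc
      obtain ⟨v, _, rfl⟩ := hc
      rw [hK, Finset.mem_filter]
      refine ⟨Finset.mem_univ _, ?_⟩
      rw [T_add hF, T_pow hF]
      linear_combination T k v * h2
    -- card S = 2^(k-1)
    have hone : (1:F) ≠ 0 := one_ne_zero
    have hcardS : 2 * S.card = 2 ^ k := by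
      have := Finset.card_eq_sum_card_image (fun v : F => v ^ 2 ^ l + v) Finset.univ
      rw [Finset.card_univ, hF] at this
      rw [this, ← hS]
      rw [Finset.sum_congr rfl (fun c hc => ?_), Finset.sum_const, smul_eq_mul, mul_comm]
      -- each fiber has card 2
      rw [hS, Finset.mem_image] at hc
      obtain ⟨v, _, rfl⟩ := hc
      have hfib : Finset.univ.filter (fun w : F => w ^ 2 ^ l + w = v ^ 2 ^ l + v) = {v, v + 1} := by
        ext w
        simp only [Finset.mem_filter, Finset.mem_univ, true_and, Finset.mem_insert,
          Finset.mem_singleton]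
        constructor
        · intro hw; exact phi_fiber hF hq v w hw.symm
        · rintro (rfl | rfl)
          · rfl
          · rw [frob_add]
            have : (1:F) ^ 2 ^ l = 1 := one_pow _
            linear_combination this + h2
      rw [hfib, Finset.card_insert_of_notMem, Finset.card_singleton]
      simp only [Finset.mem_singleton]
      intro hcon
      have : (1:F) = 0 := by linear_combination -hcon + v*h2 - v*h2
      exact hone this
    -- card K = 2^(k-1)
    obtain ⟨c, hc1⟩ := exists_T_one hF hk
    have hcardK : 2 * K.card = 2 ^ k := by
      have hbij : K.card = (Finset.univ.filter (fun b : F => T k b = 1)).card := by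
        apply Finset.card_bij (fun x _ => x + c)
        · intro x hx
          rw [hK, Finset.mem_filter] at hx
          rw [Finset.mem_filter]
          refine ⟨Finset.mem_univ _, ?_⟩
          rw [T_add hF, hx.2, hc1, zero_add]
        · intro x hx y hy hxy
          exact add_right_cancel hxy
        · intro y hy
          refine ⟨y + c, ?_, ?_⟩
          · rw [Finset.mem_filter] at hy
            rw [hK, Finset.mem_filter]
            refine ⟨Finset.mem_univ _, ?_⟩
            rw [T_add hF, hy.2, hc1]
            linear_combination h2
          · linear_combination c * h2
      have hpart : K.card + (Finset.univ.filter (fun b : F => T k b = 1)).card = 2 ^ k := by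
        have hneg : (Finset.univ.filter (fun b : F => ¬ T k b = 0)) =
            (Finset.univ.filter (fun b : F => T k b = 1)) := by
          apply Finset.filter_congr
          intro x _
          constructor
          · intro hx
            rcases T_zero_or_one hF x with h | h
            · exact absurd h hx
            · exact h
          · intro hx hx0
            rw [hx0] at hx
            exact hone hx.symm
        have hpc := Finset.card_filter_add_card_filter_not
          (s := (Finset.univ : Finset F)) (p := fun b : F => T k b = 0)
        rw [hneg, Finset.card_univ, hF] at hpc
        rw [hK]
        exact hpc
      omega
    have hcards : S.card = K.card := by omega
    have hSeqK : S = K := Finset.eq_of_subset_of_card_le hSK (le_of_eq hcards.symm)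
    have hbK : b ∈ K := by
      rw [hK, Finset.mem_filter]; exact ⟨Finset.mem_univ _, hb⟩
    rw [← hSeqK, hS, Finset.mem_image] at hbK
    obtain ⟨v, _, hv⟩ := hbK
    exact ⟨v, hv⟩

end Phi
end Stmt1Aux


/-- criterion for `P_a` having exactly one zero in terms of
`Tr_k((1+x0⁻¹)^(e(l')))` where `x0` is a zero of `P_a`. -/
theorem stmt_1 (k l l' : ℕ) (hk : 0 < k) (hlk : l < k) (hgcd : Nat.gcd l k = 1)
    (hl' : l * l' ≡ 1 [MOD k])
    (F : Type*) [Field F] [Fintype F] [DecidableEq F] (hF : Fintype.card F = 2 ^ k)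
    (a : F) (ha : a ≠ 0) (x0 : F) (hx0 : x0 ^ (2 ^ l + 1) + x0 = a) :
    (Finset.univ.filter (fun x : F => x ^ (2 ^ l + 1) + x + a = 0)).card = 1 ↔
      ∑ i ∈ Finset.range k,
        ((1 + x0⁻¹) ^ (∑ j ∈ Finset.range l', 2 ^ (j * l))) ^ (2 ^ i) = 1 := by
  classical
  haveI hchar : CharP F 2 := by
    obtain ⟨n, hp, hc⟩ := FiniteField.card F (ringChar F)
    have hd : ringChar F ∣ 2 ^ k := by
      rw [← hF, hc]; exact dvd_pow_self _ (by positivity)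
    have h2 : ringChar F = 2 :=
      (Nat.prime_dvd_prime_iff_eq hp Nat.prime_two).mp (hp.dvd_of_dvd_pow hd)
    rw [← h2]; infer_instance
  have h2 : (2:F) = 0 := by exact_mod_cast CharP.cast_eq_zero F 2
  by_cases hl0 : l = 0
  · exfalso
    subst hl0
    simp only [Nat.gcd_zero_left] at hgcd
    subst hgcd
    have hpc : x0 ^ (2:ℕ) = x0 := by
      have := Stmt1Aux.pow_card hF x0
      simpa using this
    apply ha
    rw [← hx0]
    norm_num
    linear_combination hpc + x0 * h2
  · have hl : 0 < l := Nat.pos_of_ne_zero hl0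
    have hk2 : 2 ≤ k := by omega
    have hq' : l * l' % k = 1 := by
      have h : l * l' % k = 1 % k := hl'
      exact h.trans (Nat.one_mod_eq_one.mpr (by omega))
    have hq : l * l' = k * (l * l' / k) + 1 := by
      have := Nat.div_add_mod (l * l') k
      omega
    set q := l * l' / k with hqdef
    have hee : ∀ n : ℕ, (∑ j ∈ Finset.range n, 2 ^ (j * l)) * 2 ^ l + 1 =
        (∑ j ∈ Finset.range n, 2 ^ (j * l)) + 2 ^ (l * n) := by
      intro n
      induction n with
      | zero => simp
      | succ n ih =>
        have h1 : (2:ℕ) ^ (n * l) * 2 ^ l = 2 ^ (l * (n + 1)) := by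
          rw [← pow_add]; ring_nf
        rw [Finset.sum_range_succ]
        calc ((∑ j ∈ Finset.range n, 2 ^ (j * l)) + 2 ^ (n * l)) * 2 ^ l + 1
            = ((∑ j ∈ Finset.range n, 2 ^ (j * l)) * 2 ^ l + 1) + 2 ^ (n * l) * 2 ^ l := by ring
          _ = ((∑ j ∈ Finset.range n, 2 ^ (j * l)) + 2 ^ (l * n)) + 2 ^ (l * (n + 1)) := by
              rw [ih, h1]
          _ = ((∑ j ∈ Finset.range n, 2 ^ (j * l)) + 2 ^ (n * l)) + 2 ^ (l * (n + 1)) := by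
              rw [mul_comm l n]
    have heel := hee l'
    -- nonvanishing
    have hx0ne : x0 ≠ 0 := by
      intro h; apply ha; rw [← hx0, h]; simp
    have hx01 : x0 + 1 ≠ 0 := by
      intro h
      have hx1 : x0 = 1 := by linear_combination h - h2
      apply ha
      rw [← hx0, hx1]
      have h1 : (1:F) ^ (2 ^ l + 1) = 1 := one_pow _
      linear_combination h1 + h2
    set e := ∑ j ∈ Finset.range l', 2 ^ (j * l) with he
    set c : F := x0 * (x0 + 1)⁻¹ with hc
    have hcne : c ≠ 0 := by
      rw [hc]; exact mul_ne_zero hx0ne (inv_ne_zero hx01)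
    set u0 : F := c ^ e with hu0
    have hu0ne : u0 ≠ 0 := pow_ne_zero _ hcne
    have hc2 : c ^ 2 ^ (l * l') = c ^ 2 := by
      rw [hq, pow_succ, pow_mul, Stmt1Aux.pow_pow_fix k q c (Stmt1Aux.pow_card hF c)]
    have hu0l : u0 ^ 2 ^ l = c * u0 := by
      have h1 : u0 ^ 2 ^ l * c = u0 * c ^ 2 := by
        rw [hu0, ← pow_mul, ← pow_succ, heel, pow_add, hc2]
      -- h1 : u0 ^ 2^l * c = u0 * c^2
      have := mul_right_cancel₀ hcne (by linear_combination h1 : u0 ^ 2 ^ l * c = (c * u0) * c)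
      exact this
    set b : F := (c * u0)⁻¹ with hb
    have hbne : b ≠ 0 := by
      rw [hb]; exact inv_ne_zero (mul_ne_zero hcne hu0ne)
    have hcinv : (1 + x0⁻¹) = c⁻¹ := by
      rw [hc]
      field_simp
    have hrhs : (1 + x0⁻¹) ^ e = u0⁻¹ := by rw [hcinv, inv_pow, hu0]
    have hTb : Stmt1Aux.T k ((1 + x0⁻¹) ^ e) = Stmt1Aux.T k b := by
      rw [hrhs, ← Stmt1Aux.T_pow hF l (u0⁻¹)]
      congr 1
      rw [inv_pow, hu0l, hb]
    set Z := Finset.univ.filter (fun x : F => x ^ (2 ^ l + 1) + x + a = 0) with hZ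
    have hx0Z : x0 ∈ Z := by
      rw [hZ, Finset.mem_filter]
      exact ⟨Finset.mem_univ _, by linear_combination hx0 + a * h2⟩
    have hmain : (∃ x ∈ Z, x ≠ x0) ↔ (∃ v : F, v ^ 2 ^ l + v = b) := by
      constructor
      · rintro ⟨x, hxZ, hxne⟩
        rw [hZ, Finset.mem_filter] at hxZ
        have hroot := hxZ.2
        set y := x + x0 with hy
        have hyne : y ≠ 0 := by
          intro h
          apply hxne
          linear_combination h - x0 * h2
        have hAne : y ^ 2 ^ l ≠ 0 := pow_ne_zero _ hyne
        have hxy : x = y + x0 := by rw [hy]; linear_combination -x0 * h2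
        have hfrob := Stmt1Aux.frob_add (F := F) l y x0
        have hrel : y ^ 2 ^ l * y + x0 ^ 2 ^ l * y + x0 * y ^ 2 ^ l + y = 0 := by
          rw [hxy] at hroot
          rw [pow_succ, hfrob] at hroot
          linear_combination hroot - hx0 - a * h2
        refine ⟨(x0 + 1) * y⁻¹ * u0⁻¹, ?_⟩
        have hv : ((x0 + 1) * y⁻¹ * u0⁻¹) ^ 2 ^ l
            = (x0 ^ 2 ^ l + 1) * (y ^ 2 ^ l)⁻¹ * (c * u0)⁻¹ := by
          rw [mul_pow, mul_pow, inv_pow, inv_pow, hu0l, Stmt1Aux.frob_add, one_pow]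
        rw [hv, hb, hc]
        clear_value u0 y
        field_simp
        linear_combination hrel
          - (y ^ 2 ^ l * y) * h2
      · rintro ⟨v, hv⟩
        have hvne : v ≠ 0 := by
          intro h
          rw [h] at hv
          apply hbne
          rw [← hv, zero_pow (by positivity), add_zero]
        set u := u0 * v with hu
        have hune : u ≠ 0 := mul_ne_zero hu0ne hvne
        set y := (x0 + 1) * u⁻¹ with hy
        have hyne : y ≠ 0 := mul_ne_zero hx01 (inv_ne_zero hune)
        have hAne : y ^ 2 ^ l ≠ 0 := pow_ne_zero _ hyne
        have hu' : u ^ 2 ^ l + c * u = 1 := by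
          rw [hu, mul_pow, hu0l]
          have hcu : c * u0 * (v ^ 2 ^ l + v) = c * u0 * b := by rw [hv]
          rw [hb, mul_inv_cancel₀ (mul_ne_zero hcne hu0ne)] at hcu
          linear_combination hcu
        have huy : u = (x0 + 1) * y⁻¹ := by
          rw [hy]
          field_simp
        have hrel : y ^ 2 ^ l * y + x0 ^ 2 ^ l * y + x0 * y ^ 2 ^ l + y = 0 := by
          rw [huy] at hu'
          have hv2 : ((x0 + 1) * y⁻¹) ^ 2 ^ l
              = (x0 ^ 2 ^ l + 1) * (y ^ 2 ^ l)⁻¹ := by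
            rw [mul_pow, inv_pow, Stmt1Aux.frob_add, one_pow]
          rw [hv2, hc] at hu'
          field_simp at hu'
          linear_combination hu' + y ^ 2 ^ l * y * h2
        refine ⟨y + x0, ?_, ?_⟩
        · rw [hZ, Finset.mem_filter]
          refine ⟨Finset.mem_univ _, ?_⟩
          rw [pow_succ, Stmt1Aux.frob_add]
          linear_combination hrel + hx0 + a * h2
        · intro hcon
          apply hyne
          linear_combination hcon
    have hTsum : (∑ i ∈ Finset.range k,
        ((1 + x0⁻¹) ^ (∑ j ∈ Finset.range l', 2 ^ (j * l))) ^ (2 ^ i))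
        = Stmt1Aux.T k ((1 + x0⁻¹) ^ e) := rfl
    rw [hTsum]
    constructor
    · intro hcard
      rcases Stmt1Aux.T_zero_or_one hF ((1 + x0⁻¹) ^ e) with h | h
      · exfalso
        have hex : ∃ v : F, v ^ 2 ^ l + v = b := by
          rw [Stmt1Aux.phi_mem_iff hF hq hk]
          rw [← hTb]; exact h
        obtain ⟨x, hxZ, hxne⟩ := hmain.mpr hex
        obtain ⟨z, hz⟩ := Finset.card_eq_one.mp hcard
        rw [hz, Finset.mem_singleton] at hx0Z hxZ
        exact hxne (hxZ.trans hx0Z.symm)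
      · exact h
    · intro hT
      have hno : ¬ ∃ x ∈ Z, x ≠ x0 := by
        rw [hmain, Stmt1Aux.phi_mem_iff hF hq hk, ← hTb, hT]
        exact one_ne_zero
      have hZsing : Z = {x0} := by
        apply Finset.Subset.antisymm
        · intro x hx
          rw [Finset.mem_singleton]
          by_contra hne
          exact hno ⟨x, hx, hne⟩
        · intro x hx
          rw [Finset.mem_singleton] at hx
          rw [hx]; exact hx0Z
      rw [hZsing, Finset.card_singleton]
end

section
/- Let k be odd and l < k with gcd(l,k)=1. Let M_0, M_1, M_3 denote the number of a in GF(2^k)* for which P_a(x) = x^{2^l+1}+x+a has exactly 0, 1, 3 zeros in GF(2^k) respectively. Then M_0 = (2^k+1)/3, M_1 = 2^{k-1}-1, and M_3 = (2^{k-1}-1)/3. -/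
open Finset


theorem mychar (k : ℕ) (hk : k ≠ 0) (F : Type*) [Field F] [Fintype F] (hF : Fintype.card F = 2 ^ k) :
    CharP F 2 := by
  have h : ((2:ℕ)^k : F) = 0 := by
    have := FiniteField.cast_card_eq_zero F
    rw [hF] at this; exact_mod_cast this
  have h2 : ((2:ℕ) : F) = 0 := by
    push_cast at h ⊢
    exact pow_eq_zero_iff hk |>.mp h
  have hdvd := ringChar.dvd (by exact_mod_cast h2)
  have hne : ringChar F ≠ 1 := CharP.ringChar_ne_one
  have : ringChar F = 2 := by
    have h3 := Nat.le_of_dvd (by norm_num) hdvd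
    interval_cases h' : (ringChar F) <;> first | rfl | simp_all
  rw [← this]; exact ringChar.charP F

section Aux
variable {F : Type*} [Field F] [Fintype F] [DecidableEq F] {k l : ℕ}

omit [Fintype F] [DecidableEq F] in
lemma two_eq_zero [CharP F 2] : (2:F) = 0 := by
  have := CharP.cast_eq_zero F 2
  exact_mod_cast this

omit [Fintype F] [DecidableEq F] in
lemma frob2 [CharP F 2] (x y : F) (m : ℕ) :
    (x+y)^((2:ℕ)^m) = x^((2:ℕ)^m)+y^((2:ℕ)^m) := add_pow_char_pow x y 2 m

omit [DecidableEq F] in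
lemma pow2k (hF : Fintype.card F = 2 ^ k) (x : F) (m : ℕ) : x ^ ((2:ℕ)^(k*m)) = x := by
  rw [pow_mul, ← hF]
  exact FiniteField.pow_card_pow m x

omit [Fintype F] [DecidableEq F] in
lemma qpow_inj [CharP F 2] (m : ℕ) {x y : F} (h : x^((2:ℕ)^m) = y^((2:ℕ)^m)) : x = y := by
  have h2 : (x + y)^((2:ℕ)^m) = 0 := by
    rw [frob2, h]
    linear_combination y^((2:ℕ)^m) * (two_eq_zero (F := F))
  have h3 : x + y = 0 := pow_eq_zero_iff (n := (2:ℕ)^m) (by positivity) |>.mp h2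
  linear_combination h3 - y * (two_eq_zero (F := F))

omit [DecidableEq F] in
lemma fix01 [CharP F 2] (hF : Fintype.card F = 2 ^ k) (hgcd : Nat.gcd l k = 1) (hk1 : 1 < k)
    {v : F} (h : v^((2:ℕ)^l) = v) : v = 0 ∨ v = 1 := by
  obtain ⟨c, -, hc⟩ := Nat.exists_mul_mod_eq_one_of_coprime hgcd hk1
  have hiter : ∀ m : ℕ, v^((2:ℕ)^(l*m)) = v := by
    intro m
    induction m with
    | zero => simp
    | succ m ih =>
      have e : (2:ℕ)^(l*(m+1)) = 2^(l*m) * 2^l := by rw [← pow_add, Nat.mul_succ]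
      rw [e, pow_mul, ih, h]
  have hb : l * c = k * (l * c / k) + 1 := by
    conv_lhs => rw [← Nat.div_add_mod (l*c) k, hc]
  have hv2 : v ^ (2:ℕ) = v := by
    have h1 := hiter c
    rw [hb, pow_succ, pow_mul, pow2k hF] at h1
    exact h1
  have h4 : v * (v - 1) = 0 := by linear_combination hv2
  rcases mul_eq_zero.mp h4 with h0 | h1
  · exact Or.inl h0
  · exact Or.inr (by linear_combination h1)

omit [DecidableEq F] in
lemma no_sol [CharP F 2] (hF : Fintype.card F = 2 ^ k) (hkodd : Odd k) (u : F) :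
    u^((2:ℕ)^l) + u ≠ 1 := by
  have htwo := two_eq_zero (F := F)
  intro heq
  have h1 : u^((2:ℕ)^l) = u + 1 := by linear_combination heq - u * htwo
  have claim : ∀ m : ℕ, u^((2:ℕ)^(l*m)) = u + ((m % 2 : ℕ) : F) := by
    intro m
    induction m with
    | zero => simp
    | succ m ih =>
      have e : (2:ℕ)^(l*(m+1)) = 2^(l*m) * 2^l := by rw [← pow_add, Nat.mul_succ]
      rw [e, pow_mul, ih, frob2, h1]
      rcases Nat.mod_two_eq_zero_or_one m with hm | hm
      · rw [hm]
        have e2 : (m+1) % 2 = 1 := by omega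
        rw [e2]
        norm_num
      · rw [hm]
        have e2 : (m+1) % 2 = 0 := by omega
        rw [e2]
        norm_num
        linear_combination htwo
  have hk2 := claim k
  rw [Nat.mul_comm, pow2k hF, Nat.odd_iff.mp hkodd] at hk2
  norm_num at hk2

end Aux

section Main
variable {F : Type*} [Field F] [Fintype F] [DecidableEq F] {k l : ℕ} [CharP F 2]

omit [Fintype F] [DecidableEq F] in
lemma fiber_zero (x : F) : x^((2:ℕ)^l+1) + x = 0 ↔ x = 0 ∨ x = 1 := by
  have htwo := two_eq_zero (F := F)
  constructor
  · intro h
    have hfac : x * (x^((2:ℕ)^l) + 1) = 0 := by linear_combination h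
    rcases mul_eq_zero.mp hfac with h0 | h1
    · exact Or.inl h0
    · refine Or.inr (qpow_inj l ?_)
      have : x^((2:ℕ)^l) = 1 := by linear_combination h1 - htwo
      simpa using this
  · rintro (rfl | rfl)
    · simp
    · simp; linear_combination htwo

omit [DecidableEq F] in
lemma powq1_inj (hF : Fintype.card F = 2 ^ k) (hgcd : Nat.gcd l k = 1) (hk1 : 1 < k)
    (hl : 1 ≤ l) {t1 t2 : F} (h : t1^((2:ℕ)^l - 1) = t2^((2:ℕ)^l - 1)) : t1 = t2 := by
  have he : 1 ≤ (2:ℕ)^l - 1 := by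
    have : (2:ℕ)^1 ≤ 2^l := Nat.pow_le_pow_right (by norm_num) hl
    omega
  by_cases h2 : t2 = 0
  · subst h2
    rw [zero_pow (by omega)] at h
    exact pow_eq_zero_iff (by omega) |>.mp h
  by_cases h1 : t1 = 0
  · subst h1
    rw [zero_pow (by omega)] at h
    exact (pow_eq_zero_iff (n := (2:ℕ)^l - 1) (by omega) |>.mp h.symm).symm
  · have hv : (t1 * t2⁻¹)^((2:ℕ)^l - 1) = 1 := by
      rw [mul_pow, inv_pow, h, mul_inv_cancel₀ (pow_ne_zero _ h2)]
    have hvq : (t1 * t2⁻¹)^((2:ℕ)^l) = t1 * t2⁻¹ := by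
      have e : (2:ℕ)^l = (2^l - 1) + 1 := by omega
      rw [e, pow_succ, hv, one_mul]
    rcases fix01 hF hgcd hk1 hvq with h0 | hone
    · exact absurd (mul_eq_zero.mp h0) (by push_neg; exact ⟨h1, inv_ne_zero h2⟩)
    · field_simp at hone
      exact hone
end Main

section Main2
variable {F : Type*} [Field F] [Fintype F] [DecidableEq F] {k l : ℕ} [CharP F 2]

omit [Fintype F] [DecidableEq F] in
lemma key {x a s : F} (hx : x^((2:ℕ)^l+1) + x = a) (hs : s ≠ 0) :
    ((x+s)^((2:ℕ)^l+1) + (x+s) = a) ↔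
      (x^((2:ℕ)^l)+1)*(s⁻¹)^((2:ℕ)^l) + x*s⁻¹ = 1 := by
  have htwo := two_eq_zero (F := F)
  have hq : ∀ z : F, z^((2:ℕ)^l+1) = z^((2:ℕ)^l) * z := fun z => pow_succ z _
  have hfr := frob2 x s l
  have hsq : s^((2:ℕ)^l) ≠ 0 := pow_ne_zero _ hs
  constructor
  · intro h
    have hP : x^((2:ℕ)^l)*s + x*s^((2:ℕ)^l) + s^((2:ℕ)^l)*s + s = 0 := by
      rw [hq, hfr] at h
      rw [hq] at hx
      linear_combination h - hx
    rw [inv_pow]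
    field_simp
    linear_combination hP - s^((2:ℕ)^l)*s*htwo
  · intro h
    rw [inv_pow] at h
    field_simp at h
    rw [hq] at hx
    rw [hq, hfr]
    linear_combination hx + h + s^((2:ℕ)^l)*s*htwo

lemma fiber_card (hF : Fintype.card F = 2 ^ k) (hgcd : Nat.gcd l k = 1) (hk1 : 1 < k)
    (hl : 1 ≤ l) {a : F} (ha : a ≠ 0) :
    (univ.filter fun x : F => x^((2:ℕ)^l+1) + x = a).card = 0 ∨
    (univ.filter fun x : F => x^((2:ℕ)^l+1) + x = a).card = 1 ∨
    (univ.filter fun x : F => x^((2:ℕ)^l+1) + x = a).card = 3 := by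
  have htwo := two_eq_zero (F := F)
  have hqpos : (0:ℕ) < 2^l := by positivity
  have h2l : 2 ≤ (2:ℕ)^l := by
    calc (2:ℕ) = 2^1 := (pow_one 2).symm
    _ ≤ 2^l := Nat.pow_le_pow_right (by norm_num) hl
  have hq1 : (2:ℕ)^l = ((2:ℕ)^l - 1) + 1 := (Nat.sub_add_cancel Nat.one_le_two_pow).symm
  rcases (univ.filter fun x : F => x^((2:ℕ)^l+1) + x = a).eq_empty_or_nonempty with hemp | ⟨x, hxF⟩
  · left; rw [hemp]; rfl
  right
  have hx : x^((2:ℕ)^l+1) + x = a := (mem_filter.mp hxF).2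
  have hx01 : ¬(x = 0 ∨ x = 1) := by
    intro h01
    exact ha (by rw [← hx]; exact (fiber_zero x).mpr h01)
  push_neg at hx01
  obtain ⟨hx0, hx1⟩ := hx01
  have hxq1 : x^((2:ℕ)^l) + 1 ≠ 0 := by
    intro h
    apply hx1
    refine qpow_inj l ?_
    rw [one_pow]
    linear_combination h - htwo
  -- the unique (q-1)-th root t₀ of c = x/(x^q+1)
  have hinj : Function.Injective (fun t : F => t^((2:ℕ)^l - 1)) :=
    fun t1 t2 h => powq1_inj hF hgcd hk1 hl h
  obtain ⟨t₀, ht₀⟩ := Finite.injective_iff_surjective.mp hinj (x * (x^((2:ℕ)^l)+1)⁻¹)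
  simp only at ht₀
  have hc0 : x * (x^((2:ℕ)^l)+1)⁻¹ ≠ 0 := mul_ne_zero hx0 (inv_ne_zero hxq1)
  have ht₀0 : t₀ ≠ 0 := by
    intro h
    apply hc0
    rw [← ht₀, h, zero_pow (by omega)]
  have ht₀q : t₀^((2:ℕ)^l) = (x * (x^((2:ℕ)^l)+1)⁻¹) * t₀ := by
    conv_lhs => rw [hq1]
    rw [pow_succ, ht₀]
  have hBt0 : (x^((2:ℕ)^l)+1)*t₀^((2:ℕ)^l) + x*t₀ = 0 := by
    rw [ht₀q]
    field_simp
    linear_combination x*t₀*htwo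
  have kerB : ∀ w : F, (x^((2:ℕ)^l)+1)*w^((2:ℕ)^l) + x*w = 0 ↔ w = 0 ∨ w = t₀ := by
    intro w
    constructor
    · intro hw
      by_cases hw0 : w = 0
      · exact Or.inl hw0
      right
      have hwq : w^((2:ℕ)^l) = w^((2:ℕ)^l - 1) * w := by
        conv_lhs => rw [hq1]
        rw [pow_succ]
      rw [hwq] at hw
      have hfac : w * ((x^((2:ℕ)^l)+1) * w^((2:ℕ)^l - 1) + x) = 0 := by linear_combination hw
      have h2 : (x^((2:ℕ)^l)+1) * w^((2:ℕ)^l - 1) + x = 0 := by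
        rcases mul_eq_zero.mp hfac with h' | h'
        · exact absurd h' hw0
        · exact h'
      have h3 : w^((2:ℕ)^l - 1) = x * (x^((2:ℕ)^l)+1)⁻¹ := by
        field_simp
        linear_combination h2 - x*htwo
      exact hinj (h3.trans ht₀.symm)
    · rintro (rfl | rfl)
      · rw [zero_pow (by omega)]; ring
      · exact hBt0
  -- fiber has card 1 + Tset.card
  have hcard : (univ.filter fun y : F => y^((2:ℕ)^l+1) + y = a).card
      = 1 + (univ.filter fun t : F => (x^((2:ℕ)^l)+1)*t^((2:ℕ)^l) + x*t = 1).card := by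
    have herase := card_erase_add_one hxF
    have hbij : ((univ.filter fun y : F => y^((2:ℕ)^l+1) + y = a).erase x).card
        = (univ.filter fun t : F => (x^((2:ℕ)^l)+1)*t^((2:ℕ)^l) + x*t = 1).card := by
      apply card_bij' (i := fun y _ => (x+y)⁻¹) (j := fun t _ => x + t⁻¹)
      · intro y hy
        obtain ⟨hyne, hyF⟩ := mem_erase.mp hy
        have hyFib : y^((2:ℕ)^l+1) + y = a := (mem_filter.mp hyF).2
        have hs : x + y ≠ 0 := by
          intro h
          exact hyne (by linear_combination h - x*htwo)
        have hk' := key hx hs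
        have hxs : x + (x+y) = y := by linear_combination x*htwo
        rw [hxs] at hk'
        exact mem_filter.mpr ⟨mem_univ _, by linear_combination hk'.mp hyFib⟩
      · intro t ht
        have hB : (x^((2:ℕ)^l)+1)*t^((2:ℕ)^l) + x*t = 1 := (mem_filter.mp ht).2
        have ht0 : t ≠ 0 := by
          rintro rfl
          rw [zero_pow (by omega)] at hB
          simp at hB
        have hk' := key hx (inv_ne_zero ht0)
        rw [inv_inv] at hk'
        refine mem_erase.mpr ⟨?_, mem_filter.mpr ⟨mem_univ _, hk'.mpr (by linear_combination hB)⟩⟩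
        intro h
        have : t⁻¹ = 0 := by linear_combination h
        exact ht0 (inv_eq_zero.mp this)
      · intro y hy
        rw [inv_inv]
        linear_combination x*htwo
      · intro t ht
        have hxs : x + (x + t⁻¹) = t⁻¹ := by linear_combination x*htwo
        rw [hxs, inv_inv]
    omega
  -- Tset has card 0 or 2
  have hT : (univ.filter fun t : F => (x^((2:ℕ)^l)+1)*t^((2:ℕ)^l) + x*t = 1).card = 0 ∨
      (univ.filter fun t : F => (x^((2:ℕ)^l)+1)*t^((2:ℕ)^l) + x*t = 1).card = 2 := by
    rcases (univ.filter fun t : F => (x^((2:ℕ)^l)+1)*t^((2:ℕ)^l) + x*t = 1).eq_empty_or_nonempty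
      with hemp | ⟨t1, ht1m⟩
    · left; rw [hemp]; rfl
    right
    have ht1 : (x^((2:ℕ)^l)+1)*t1^((2:ℕ)^l) + x*t1 = 1 := (mem_filter.mp ht1m).2
    have hTeq : (univ.filter fun t : F => (x^((2:ℕ)^l)+1)*t^((2:ℕ)^l) + x*t = 1)
        = {t1, t1 + t₀} := by
      ext t
      simp only [mem_filter, mem_univ, true_and, mem_insert, mem_singleton]
      constructor
      · intro ht
        have hker : (x^((2:ℕ)^l)+1)*(t+t1)^((2:ℕ)^l) + x*(t+t1) = 0 := by
          rw [frob2]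
          linear_combination ht + ht1 + htwo
        rcases (kerB _).mp hker with h0 | ht0'
        · left; linear_combination h0 - t1*htwo
        · right; linear_combination ht0' - t1*htwo
      · rintro (rfl | rfl)
        · exact ht1
        · rw [frob2]
          linear_combination ht1 + hBt0
    rw [hTeq]
    have hne : t1 ∉ ({t1 + t₀} : Finset F) := by
      simp only [mem_singleton]
      intro h
      exact ht₀0 (by linear_combination -h)
    rw [card_insert_of_notMem hne, card_singleton]
  rcases hT with h0 | h2
  · left; omega
  · right; omega

end Main2

section Main3
variable {F : Type*} [Field F] [Fintype F] [DecidableEq F] {k l : ℕ} [CharP F 2]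

omit [DecidableEq F] in
lemma root_pow (hF : Fintype.card F = 2 ^ k) (hk0 : k ≠ 0) (w : F) :
    (w^((2:ℕ)^(l*(k-1))))^((2:ℕ)^l) = w := by
  rw [← pow_mul, ← pow_add]
  obtain ⟨n, rfl⟩ : ∃ n, k = n+1 := ⟨k-1, by omega⟩
  have e : l*(n+1-1) + l = (n+1) * l := by
    rw [Nat.add_sub_cancel]; ring
  rw [e]
  exact pow2k hF w l

lemma D_card (hF : Fintype.card F = 2 ^ k) (hkodd : Odd k) (hl : 1 ≤ l) :
    (univ.filter fun p : F × F =>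
      p.1^((2:ℕ)^l+1) + p.1 = p.2^((2:ℕ)^l+1) + p.2 ∧ p.1 ≠ p.2).card = 2^k := by
  have htwo := two_eq_zero (F := F)
  rw [← hF, ← card_univ]
  apply card_bij' (i := fun (p : F × F) _ => p.1 * (p.1 + p.2)⁻¹)
    (j := fun (u : F) _ =>
      (u * (((u^((2:ℕ)^l) + u + 1)⁻¹)^((2:ℕ)^(l*(k-1)))),
       (u+1) * (((u^((2:ℕ)^l) + u + 1)⁻¹)^((2:ℕ)^(l*(k-1))))))
  · intro p _
    exact mem_univ _
  · -- j maps into D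
    intro u _
    set s : F := ((u^((2:ℕ)^l) + u + 1)⁻¹)^((2:ℕ)^(l*(k-1))) with hsdef
    have hA : u^((2:ℕ)^l) + u + 1 ≠ 0 := by
      intro h
      exact no_sol hF hkodd u (by linear_combination h - htwo)
    have hs : s ≠ 0 := pow_ne_zero _ (inv_ne_zero hA)
    have hsq' : (u^((2:ℕ)^l) + u + 1) * s^((2:ℕ)^l) = 1 := by
      rw [hsdef, root_pow hF hkodd.pos.ne']
      exact mul_inv_cancel₀ hA
    refine mem_filter.mpr ⟨mem_univ _, ?_, ?_⟩
    · -- equal f values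
      simp only
      rw [pow_succ, pow_succ, mul_pow, mul_pow]
      have hfr : (u+1)^((2:ℕ)^l) = u^((2:ℕ)^l) + 1 := by
        rw [frob2]; norm_num
      rw [hfr]
      linear_combination (-s) * hsq' - s*htwo
    · -- distinct
      simp only
      intro h
      exact hs (by linear_combination -h)
  · -- left inverse
    intro p hp
    obtain ⟨hfeq, hne⟩ := (mem_filter.mp hp).2
    obtain ⟨x, y⟩ := p
    simp only at hfeq hne ⊢
    have hs0 : x + y ≠ 0 := by
      intro h
      exact hne (by linear_combination h - y*htwo)
    set s : F := x + y with hsdef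
    set u : F := x * s⁻¹ with hudef
    clear_value s
    clear_value u
    have hxs : x + s = y := by rw [hsdef]; linear_combination x*htwo
    have hB : (x^((2:ℕ)^l)+1)*(s⁻¹)^((2:ℕ)^l) + x*s⁻¹ = 1 := by
      apply (key rfl hs0).mp
      rw [hxs]
      exact hfeq.symm
    have hsq : s^((2:ℕ)^l) ≠ 0 := pow_ne_zero _ hs0
    have hA2 : u^((2:ℕ)^l) + u + 1 = (s^((2:ℕ)^l))⁻¹ := by
      rw [hudef, mul_pow, inv_pow]
      rw [inv_pow] at hB
      field_simp
      field_simp at hB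
      linear_combination hB + (s*s^((2:ℕ)^l) - s)*htwo
    have hru : ((u^((2:ℕ)^l) + u + 1)⁻¹)^((2:ℕ)^(l*(k-1))) = s := by
      rw [hA2, inv_inv, ← pow_mul, mul_comm ((2:ℕ)^l) ((2:ℕ)^(l*(k-1))), pow_mul,
        root_pow hF hkodd.pos.ne']
    rw [hru]
    have h1 : u * s = x := by
      rw [hudef, mul_assoc, inv_mul_cancel₀ hs0, mul_one]
    have h2 : (u+1) * s = y := by
      linear_combination h1 + hxs
    rw [Prod.mk.injEq]
    exact ⟨h1, h2⟩
  · -- right inverse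
    intro u _
    simp only
    set s : F := ((u^((2:ℕ)^l) + u + 1)⁻¹)^((2:ℕ)^(l*(k-1))) with hsdef
    have hA : u^((2:ℕ)^l) + u + 1 ≠ 0 := by
      intro h
      exact no_sol hF hkodd u (by linear_combination h - htwo)
    have hs : s ≠ 0 := pow_ne_zero _ (inv_ne_zero hA)
    have hsum : u*s + (u+1)*s = s := by linear_combination u*s*htwo
    rw [hsum, mul_assoc, mul_inv_cancel₀ hs, mul_one]

end Main3

section Final
variable {F : Type*} [Field F] [Fintype F] [DecidableEq F] {k l : ℕ} [CharP F 2]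

lemma sum_fibers (hF : Fintype.card F = 2 ^ k) :
    ∑ a : F, (univ.filter fun x : F => x^((2:ℕ)^l+1) + x = a).card = 2^k := by
  rw [← hF, ← card_univ]
  exact (card_eq_sum_card_fiberwise
    (f := fun x : F => x^((2:ℕ)^l+1)+x) (t := univ) (fun x _ => mem_univ _)).symm

lemma diag_card' : (univ.filter fun p : F × F => p.1 = p.2).card = Fintype.card F := by
  rw [← card_univ]
  apply card_bij' (i := fun (p : F × F) _ => p.1) (j := fun (x : F) _ => (x, x))
  · intro p _; exact mem_univ _
  · intro x _
    exact mem_filter.mpr ⟨mem_univ _, rfl⟩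
  · intro p hp
    have := (mem_filter.mp hp).2
    exact Prod.ext rfl this
  · intro x _
    rfl

lemma sum_sq_fibers (hF : Fintype.card F = 2 ^ k) (hkodd : Odd k) (hl : 1 ≤ l) :
    ∑ a : F, ((univ.filter fun x : F => x^((2:ℕ)^l+1) + x = a).card)^2 = 2^(k+1) := by
  have hpairs : (univ.filter fun p : F × F =>
      p.1^((2:ℕ)^l+1) + p.1 = p.2^((2:ℕ)^l+1) + p.2).card
      = ∑ a : F, ((univ.filter fun x : F => x^((2:ℕ)^l+1) + x = a).card)^2 := by
    rw [card_eq_sum_card_fiberwise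
      (f := fun p : F × F => p.1^((2:ℕ)^l+1) + p.1) (t := univ) (fun p _ => mem_univ _)]
    apply sum_congr rfl
    intro a _
    have hset : ((univ.filter fun p : F × F =>
        p.1^((2:ℕ)^l+1) + p.1 = p.2^((2:ℕ)^l+1) + p.2).filter
          fun p => p.1^((2:ℕ)^l+1) + p.1 = a)
        = (univ.filter fun x : F => x^((2:ℕ)^l+1) + x = a) ×ˢ
          (univ.filter fun x : F => x^((2:ℕ)^l+1) + x = a) := by
      ext ⟨x, y⟩
      simp only [mem_filter, mem_univ, true_and, mem_product]
      constructor
      · rintro ⟨h1, h2⟩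
        exact ⟨h2, h1.symm.trans h2⟩
      · rintro ⟨hx, hy⟩
        exact ⟨hx.trans hy.symm, hx⟩
    rw [hset, card_product, sq]
  rw [← hpairs]
  have hsplit := card_filter_add_card_filter_not
    (s := univ.filter fun p : F × F =>
      p.1^((2:ℕ)^l+1) + p.1 = p.2^((2:ℕ)^l+1) + p.2) (p := fun p => p.1 = p.2)
  have hdiag : ((univ.filter fun p : F × F =>
      p.1^((2:ℕ)^l+1) + p.1 = p.2^((2:ℕ)^l+1) + p.2).filter fun p => p.1 = p.2).card
      = 2^k := by
    have : ((univ.filter fun p : F × F =>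
        p.1^((2:ℕ)^l+1) + p.1 = p.2^((2:ℕ)^l+1) + p.2).filter fun p => p.1 = p.2)
        = univ.filter fun p : F × F => p.1 = p.2 := by
      ext ⟨x, y⟩
      simp only [mem_filter, mem_univ, true_and]
      constructor
      · rintro ⟨_, h⟩; exact h
      · rintro rfl; exact ⟨rfl, rfl⟩
    rw [this, diag_card', hF]
  have hoff : ((univ.filter fun p : F × F =>
      p.1^((2:ℕ)^l+1) + p.1 = p.2^((2:ℕ)^l+1) + p.2).filter fun p => ¬(p.1 = p.2)).card
      = 2^k := by
    rw [filter_filter]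
    exact D_card hF hkodd hl
  omega
end Final

/-- distribution of the number of zeros of `P_a` for odd `k`, `gcd(l,k)=1`. -/
theorem stmt_2 (k l : ℕ) (hk : Odd k) (hlk : l < k) (hgcd : Nat.gcd l k = 1)
    (F : Type*) [Field F] [Fintype F] [DecidableEq F] (hF : Fintype.card F = 2 ^ k) :
    ((Finset.univ.filter (fun a : F => a ≠ 0 ∧
        (Finset.univ.filter (fun x : F => x ^ (2 ^ l + 1) + x + a = 0)).card = 0)).card
        = (2 ^ k + 1) / 3) ∧
    ((Finset.univ.filter (fun a : F => a ≠ 0 ∧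
        (Finset.univ.filter (fun x : F => x ^ (2 ^ l + 1) + x + a = 0)).card = 1)).card
        = 2 ^ (k - 1) - 1) ∧
    ((Finset.univ.filter (fun a : F => a ≠ 0 ∧
        (Finset.univ.filter (fun x : F => x ^ (2 ^ l + 1) + x + a = 0)).card = 3)).card
        = (2 ^ (k - 1) - 1) / 3) := by
  have hk0 : k ≠ 0 := hk.pos.ne'
  haveI : CharP F 2 := mychar k hk0 F hF
  have htwo : (2:F) = 0 := two_eq_zero
  -- rewrite the root condition
  have hinner : ∀ a : F, (univ.filter fun x : F => x ^ (2^l + 1) + x + a = 0)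
      = (univ.filter fun x : F => x ^ ((2:ℕ)^l + 1) + x = a) := by
    intro a
    ext x
    simp only [mem_filter, mem_univ, true_and]
    constructor
    · intro h; linear_combination h - a*htwo
    · intro h; linear_combination h + a*htwo
  by_cases hk1 : k = 1
  · -- degenerate case k = 1, l = 0
    subst hk1
    have hl0 : l = 0 := by omega
    subst hl0
    have hcard2 : Fintype.card F = 2 := by simpa using hF
    have hx2 : ∀ x : F, x^(2:ℕ) = x := by
      intro x
      have := FiniteField.pow_card x
      rwa [hcard2] at this
    have hroots : ∀ a : F, a ≠ 0 → (univ.filter fun x : F => x ^ (2^(0:ℕ) + 1) + x + a = 0) = ∅ := by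
      intro a ha
      apply filter_false_of_mem
      intro x _
      norm_num
      intro h
      exact ha (by linear_combination h - hx2 x - x*htwo)
    have hS0 : (univ.filter (fun a : F => a ≠ 0 ∧
        (univ.filter (fun x : F => x ^ (2^(0:ℕ) + 1) + x + a = 0)).card = 0))
        = univ.erase 0 := by
      ext a
      simp only [mem_filter, mem_univ, true_and, mem_erase, and_true]
      constructor
      · rintro ⟨h, _⟩; exact h
      · intro h; exact ⟨h, by rw [hroots a h]; rfl⟩
    have hS13 : ∀ i : ℕ, i ≠ 0 → (univ.filter (fun a : F => a ≠ 0 ∧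
        (univ.filter (fun x : F => x ^ (2^(0:ℕ) + 1) + x + a = 0)).card = i)) = ∅ := by
      intro i hi
      apply filter_false_of_mem
      intro a _
      rintro ⟨ha, hcard⟩
      rw [hroots a ha] at hcard
      simp at hcard
      omega
    refine ⟨?_, ?_, ?_⟩
    · rw [hS0, card_erase_of_mem (mem_univ _), card_univ, hcard2]
      norm_num
    · rw [hS13 1 one_ne_zero]; norm_num
    · rw [hS13 3 (by norm_num)]; norm_num
  -- main case
  have hk2 : 1 < k := by omega
  have hl1 : 1 ≤ l := by
    rcases Nat.eq_zero_or_pos l with h | h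
    · subst h; simp [Nat.gcd] at hgcd; omega
    · exact h
  set n : F → ℕ := fun a => (univ.filter fun x : F => x ^ ((2:ℕ)^l + 1) + x = a).card with hn
  have hsum : ∑ a : F, n a = 2^k := sum_fibers hF
  have hsq : ∑ a : F, (n a)^2 = 2^(k+1) := sum_sq_fibers hF hk hl1
  have hn0 : n 0 = 2 := by
    have : (univ.filter fun x : F => x ^ ((2:ℕ)^l + 1) + x = (0:F)) = {0, 1} := by
      ext x
      simp only [mem_filter, mem_univ, true_and, mem_insert, mem_singleton]
      exact fiber_zero x
    rw [hn]
    simp only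
    rw [this, card_insert_of_notMem (by simp), card_singleton]
  have h013 : ∀ a : F, a ≠ 0 → n a = 0 ∨ n a = 1 ∨ n a = 3 :=
    fun a ha => fiber_card hF hgcd hk2 hl1 ha
  -- sums over nonzero a
  have hsumE : ∑ a ∈ univ.erase (0:F), n a = 2^k - 2 := by
    have := sum_erase_add univ n (mem_univ (0:F))
    omega
  have hsqE : ∑ a ∈ univ.erase (0:F), (n a)^2 = 2^(k+1) - 4 := by
    have := sum_erase_add univ (fun a => (n a)^2) (mem_univ (0:F))
    rw [hn0] at this
    omega
  have hcardE : (univ.erase (0:F)).card = 2^k - 1 := by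
    rw [card_erase_of_mem (mem_univ _), card_univ, hF]
  -- partition into A0, A1, A3
  set E := univ.erase (0:F) with hE
  set E' := E.filter (fun a => ¬ n a = 0) with hE'
  have hEsplit1 : E'.filter (fun a => n a = 1) = E.filter (fun a => n a = 1) := by
    ext a
    simp only [hE', mem_filter]
    constructor
    · rintro ⟨⟨h1, _⟩, h3⟩; exact ⟨h1, h3⟩
    · rintro ⟨h1, h3⟩; exact ⟨⟨h1, by omega⟩, h3⟩
  have hEsplit3 : E'.filter (fun a => ¬ n a = 1) = E.filter (fun a => n a = 3) := by
    ext a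
    simp only [hE', mem_filter]
    constructor
    · rintro ⟨⟨h1, h2⟩, h3⟩
      refine ⟨h1, ?_⟩
      rcases h013 a (mem_erase.mp h1).1 with h | h | h <;> omega
    · rintro ⟨h1, h3⟩
      exact ⟨⟨h1, by omega⟩, by omega⟩
  -- generic: sum over E of g ∘ n in terms of M1, M3 when g 0 = 0
  have hsum_gen : ∀ g : ℕ → ℕ, g 0 = 0 →
      ∑ a ∈ E, g (n a) = g 1 * (E.filter (fun a => n a = 1)).card
        + g 3 * (E.filter (fun a => n a = 3)).card := by
    intro g hg0
    rw [← sum_filter_add_sum_filter_not E (fun a => n a = 0) (fun a => g (n a))]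
    have hz : ∑ a ∈ E.filter (fun a => n a = 0), g (n a) = 0 := by
      apply sum_eq_zero
      intro a ha
      rw [(mem_filter.mp ha).2, hg0]
    rw [hz, zero_add,
      ← sum_filter_add_sum_filter_not (E.filter (fun a => ¬ n a = 0)) (fun a => n a = 1)
        (fun a => g (n a)), ← hE', hEsplit1, hEsplit3]
    have h1 : ∑ a ∈ E.filter (fun a => n a = 1), g (n a)
        = g 1 * (E.filter (fun a => n a = 1)).card := by
      rw [sum_congr rfl (fun a ha => by rw [(mem_filter.mp ha).2])]
      rw [sum_const, smul_eq_mul, mul_comm]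
    have h3 : ∑ a ∈ E.filter (fun a => n a = 3), g (n a)
        = g 3 * (E.filter (fun a => n a = 3)).card := by
      rw [sum_congr rfl (fun a ha => by rw [(mem_filter.mp ha).2])]
      rw [sum_const, smul_eq_mul, mul_comm]
    rw [h1, h3]
  have eq1 : (E.filter (fun a => n a = 1)).card + 3 * (E.filter (fun a => n a = 3)).card
      = 2^k - 2 := by
    have := hsum_gen id rfl
    simp only [id_eq] at this
    omega
  have eq2 : (E.filter (fun a => n a = 1)).card + 9 * (E.filter (fun a => n a = 3)).card
      = 2^(k+1) - 4 := by
    have := hsum_gen (fun m => m^2) (by norm_num)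
    norm_num at this
    omega
  have eq3 : (E.filter (fun a => n a = 0)).card + (E.filter (fun a => n a = 1)).card
      + (E.filter (fun a => n a = 3)).card = 2^k - 1 := by
    have hc1 := card_filter_add_card_filter_not (s := E) (p := fun a => n a = 0)
    have hc2 := card_filter_add_card_filter_not (s := E') (p := fun a => n a = 1)
    rw [hEsplit1, hEsplit3] at hc2
    rw [← hE'] at hc1
    omega
  -- identify the goal sets with the filters
  have hSets : ∀ i : ℕ, (univ.filter (fun a : F => a ≠ 0 ∧
      (univ.filter (fun x : F => x ^ (2^l + 1) + x + a = 0)).card = i))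
      = E.filter (fun a => n a = i) := by
    intro i
    ext a
    simp only [mem_filter, mem_univ, true_and, hE, mem_erase, and_true]
    rw [hinner a]
  -- final arithmetic
  have hpow : 2^k = 2 * 2^(k-1) := by
    conv_lhs => rw [show k = (k-1)+1 by omega]
    rw [pow_succ]
    ring
  have hpow1 : (1:ℕ) ≤ 2^(k-1) := Nat.one_le_two_pow
  have hpowk1 : 2^(k+1) = 2 * 2^k := by rw [pow_succ]; ring
  refine ⟨?_, ?_, ?_⟩
  · rw [hSets 0]; omega
  · rw [hSets 1]; omega
  · rw [hSets 3]; omega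
end

section
/- Let k be even and l < k with gcd(l,k)=1. Let M_0, M_1, M_3 denote the number of a in GF(2^k)* for which P_a(x) = x^{2^l+1}+x+a has exactly 0, 1, 3 zeros in GF(2^k) respectively. Then M_0 = (2^k-1)/3, M_1 = 2^{k-1}, and M_3 = (2^{k-1}-2)/3. -/
open Finset
set_option linter.unusedSectionVars false

section Aux

variable {F : Type*} [Field F] [Fintype F] [DecidableEq F]

lemma aux_char2 {k : ℕ} (hF : Fintype.card F = 2 ^ k) : CharP F 2 := by
  obtain ⟨p, hc⟩ := CharP.exists F
  haveI := hc
  obtain ⟨n, hp, hn⟩ := FiniteField.card F p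
  have hdvd : p ∣ 2 ^ k := by
    rw [← hF, hn]
    exact dvd_pow_self p (PNat.ne_zero n)
  have : p = 2 := by
    have h2 := Nat.Prime.dvd_of_dvd_pow hp hdvd
    have := Nat.Prime.two_le hp
    have := Nat.le_of_dvd (by norm_num) h2
    omega
  subst this; exact hc

lemma aux_pow_pow_mod {k : ℕ} (hF : Fintype.card F = 2 ^ k) (hk0 : 0 < k) :
    ∀ (m : ℕ) (u : F), u ^ 2 ^ (m % k) = u ^ 2 ^ m := by
  intro m
  induction m using Nat.strong_induction_on with
  | _ m ih =>
    intro u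
    rcases lt_or_ge m k with h | h
    · rw [Nat.mod_eq_of_lt h]
    · have hm : m = (m - k) + k := by omega
      have h1 : u ^ 2 ^ m = (u ^ 2 ^ (m - k)) ^ 2 ^ k := by
        rw [← pow_mul, ← pow_add, ← hm]
      have h2 : (u ^ 2 ^ (m - k)) ^ 2 ^ k = u ^ 2 ^ (m - k) := by
        rw [← hF]; exact FiniteField.pow_card _
      have h3 : m % k = (m - k) % k := by
        conv_lhs => rw [hm]
        rw [Nat.add_mod_right]
      rw [h3, ih (m - k) (by omega) u, h1, h2]

lemma aux_fixed {k l : ℕ} (hF : Fintype.card F = 2 ^ k) (hgcd : Nat.gcd l k = 1) (hk2 : 2 ≤ k) :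
    ∀ u : F, u ^ 2 ^ l = u → u = 0 ∨ u = 1 := by
  intro u hu
  have hiter : ∀ t : ℕ, u ^ 2 ^ (l * t) = u := by
    intro t
    induction t with
    | zero => simp
    | succ t ih =>
      have : l * (t + 1) = l * t + l := by ring
      rw [this, pow_add, pow_mul, ih, hu]
  obtain ⟨t, -, ht⟩ := Nat.exists_mul_mod_eq_one_of_coprime hgcd hk2
  have h1 : u ^ 2 ^ (l * t) = u ^ 2 ^ ((l * t) % k) := (aux_pow_pow_mod hF (by omega) (l * t) u).symm
  rw [ht] at h1
  have h2 : u ^ 2 = u := by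
    have := (hiter t).symm.trans h1
    simpa using this.symm
  have : u * (u - 1) = 0 := by ring_nf; linear_combination h2
  rcases mul_eq_zero.mp this with h | h
  · left; exact h
  · right; exact sub_eq_zero.mp h

lemma aux_two {k : ℕ} (hF : Fintype.card F = 2 ^ k) : (2 : F) = 0 := by
  haveI := aux_char2 hF
  exact CharP.cast_eq_zero F 2

lemma aux_frob_add {k : ℕ} (hF : Fintype.card F = 2 ^ k) (l : ℕ) (x y : F) :
    (x + y) ^ 2 ^ l = x ^ 2 ^ l + y ^ 2 ^ l := by
  haveI := aux_char2 hF
  exact add_pow_char_pow ..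

lemma aux_frob_inj {k : ℕ} (hF : Fintype.card F = 2 ^ k) (l : ℕ) :
    Function.Injective (fun x : F => x ^ 2 ^ l) := by
  intro x y hxy
  simp only at hxy
  have h2 := aux_two hF
  have h : (x + y) ^ 2 ^ l = 0 := by
    rw [aux_frob_add hF l x y, hxy]
    linear_combination y ^ 2 ^ l * h2
  have := pow_eq_zero_iff (pow_ne_zero l two_ne_zero) |>.mp h
  linear_combination this - y * h2

lemma aux_frob_surj {k : ℕ} (hF : Fintype.card F = 2 ^ k) (l : ℕ) :
    Function.Surjective (fun x : F => x ^ 2 ^ l) :=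
  Finite.surjective_of_injective (aux_frob_inj hF l)

lemma aux_lpos {k l : ℕ} (hgcd : Nat.gcd l k = 1) (hk2 : 2 ≤ k) : 1 ≤ l := by
  rcases Nat.eq_zero_or_pos l with h | h
  · subst h; simp [Nat.gcd] at hgcd; omega
  · exact h

lemma aux_pow_q1_inj {k l : ℕ} (hF : Fintype.card F = 2 ^ k) (hgcd : Nat.gcd l k = 1)
    (hk2 : 2 ≤ k) : Function.Injective (fun e : F => e ^ (2 ^ l - 1)) := by
  have hl := aux_lpos hgcd hk2
  have hQ1 : 2 ^ l - 1 ≠ 0 := by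
    have := Nat.one_lt_two_pow_iff.mpr (by omega : l ≠ 0); omega
  intro e1 e2 h
  simp only at h
  rcases eq_or_ne e2 0 with h0 | h0
  · subst h0
    rw [zero_pow hQ1] at h
    exact pow_eq_zero_iff hQ1 |>.mp h
  · have h1 : e1 ≠ 0 := by
      intro h1; subst h1
      rw [zero_pow hQ1] at h
      exact h0 (pow_eq_zero_iff hQ1 |>.mp h.symm)
    have hu : (e1 / e2) ^ (2 ^ l - 1) = 1 := by
      rw [div_pow, h, div_self (pow_ne_zero _ h0)]
    have hfix : (e1 / e2) ^ 2 ^ l = e1 / e2 := by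
      have he : 2 ^ l = (2 ^ l - 1) + 1 := by omega
      rw [he, pow_succ, hu, one_mul]
    rcases aux_fixed hF hgcd hk2 _ hfix with h' | h'
    · exact absurd h' (div_ne_zero h1 h0)
    · field_simp at h'
      exact h'

lemma aux_pow_q1_surj {k l : ℕ} (hF : Fintype.card F = 2 ^ k) (hgcd : Nat.gcd l k = 1)
    (hk2 : 2 ≤ k) : Function.Surjective (fun e : F => e ^ (2 ^ l - 1)) :=
  Finite.surjective_of_injective (aux_pow_q1_inj hF hgcd hk2)

lemma aux_psi_ker {k l : ℕ} (hF : Fintype.card F = 2 ^ k) (hgcd : Nat.gcd l k = 1)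
    (hk2 : 2 ≤ k) : ∀ u : F, u ^ 2 ^ l + u = 0 → u = 0 ∨ u = 1 := by
  intro u hu
  have h2 := aux_two hF
  have : u ^ 2 ^ l = u := by linear_combination hu - u * h2
  exact aux_fixed hF hgcd hk2 u this

lemma aux_psi_fiber {k l : ℕ} (hF : Fintype.card F = 2 ^ k) (hgcd : Nat.gcd l k = 1)
    (hk2 : 2 ≤ k) (c u0 : F) (h : u0 ^ 2 ^ l + u0 = c) :
    univ.filter (fun u : F => u ^ 2 ^ l + u = c) = {u0, u0 + 1} := by
  have h2 := aux_two hF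
  ext u
  simp only [mem_filter, mem_univ, true_and, mem_insert, mem_singleton]
  constructor
  · intro hu
    have hz : (u + u0) ^ 2 ^ l + (u + u0) = 0 := by
      rw [aux_frob_add hF l]
      linear_combination hu + h + c * h2
    rcases aux_psi_ker hF hgcd hk2 _ hz with h' | h'
    · left; linear_combination h' - u0 * h2
    · right; linear_combination h' - u0 * h2
  · rintro (rfl | rfl)
    · exact h
    · rw [aux_frob_add hF l, one_pow]
      linear_combination h + h2

lemma aux_psi_fiber_card {k l : ℕ} (hF : Fintype.card F = 2 ^ k) (hgcd : Nat.gcd l k = 1)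
    (hk2 : 2 ≤ k) (c : F) :
    (univ.filter (fun u : F => u ^ 2 ^ l + u = c)).card =
      if c ∈ univ.image (fun u : F => u ^ 2 ^ l + u) then 2 else 0 := by
  have h2 := aux_two hF
  split_ifs with h
  · obtain ⟨u0, -, hu0⟩ := mem_image.mp h
    rw [aux_psi_fiber hF hgcd hk2 c u0 hu0]
    have hne : u0 ≠ u0 + 1 := by
      intro hh
      have : (1 : F) = 0 := by linear_combination - hh
      simp at this
    rw [card_insert_of_notMem (by simpa using hne), card_singleton]
  · rw [filter_eq_empty_iff.mpr, card_empty]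
    intro u _ hc
    exact h (mem_image.mpr ⟨u, mem_univ u, hc⟩)

lemma aux_img_card {k l : ℕ} (hF : Fintype.card F = 2 ^ k) (hgcd : Nat.gcd l k = 1)
    (hk2 : 2 ≤ k) :
    (univ.image (fun u : F => u ^ 2 ^ l + u)).card = 2 ^ (k - 1) := by
  have h := card_eq_sum_card_image (fun u : F => u ^ 2 ^ l + u) (univ : Finset F)
  rw [card_univ, hF] at h
  have h' : ∀ c ∈ univ.image (fun u : F => u ^ 2 ^ l + u),
      (univ.filter (fun u : F => u ^ 2 ^ l + u = c)).card = 2 := by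
    intro c hc
    rw [aux_psi_fiber_card hF hgcd hk2 c, if_pos hc]
  rw [Finset.sum_congr rfl h', Finset.sum_const, smul_eq_mul] at h
  have hk' : 2 ^ k = 2 ^ (k - 1) * 2 := by
    rw [← pow_succ]; congr 1; omega
  omega

lemma aux_one_mem {k l : ℕ} (hF : Fintype.card F = 2 ^ k) (hk : Even k) (hk2 : 2 ≤ k)
    (hgcd : Nat.gcd l k = 1) : ∃ w : F, w ^ 2 ^ l + w = 1 := by
  have h2 := aux_two hF
  obtain ⟨m, hm⟩ := hk
  have h4k : (4 : ℕ) ^ m = 2 ^ k := by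
    rw [show (4:ℕ) = 2 ^ 2 from rfl, ← pow_mul]
    congr 1; omega
  have hdvd3 : 3 ∣ 2 ^ k - 1 := by
    have h := Nat.sub_dvd_pow_sub_pow 4 1 m
    rw [one_pow, h4k] at h
    exact h
  have hk4 : 4 ≤ 2 ^ k := by
    calc (4:ℕ) = 2 ^ 2 := rfl
    _ ≤ 2 ^ k := Nat.pow_le_pow_right (by norm_num) hk2
  obtain ⟨g, hg⟩ := IsCyclic.exists_generator (α := Fˣ)
  have horder : orderOf g = 2 ^ k - 1 := by
    rw [orderOf_eq_card_of_forall_mem_zpowers hg, Nat.card_eq_fintype_card,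
      Fintype.card_units, hF]
  set n := 2 ^ k - 1 with hn
  have hw3 : (g ^ (n / 3)) ^ 3 = 1 := by
    rw [← pow_mul, Nat.div_mul_cancel hdvd3, ← horder]
    exact pow_orderOf_eq_one g
  have hwne : g ^ (n / 3) ≠ 1 := by
    intro h
    have hdd := orderOf_dvd_of_pow_eq_one h
    rw [horder] at hdd
    have h5 := Nat.le_of_dvd (by omega) hdd
    have h6 := Nat.div_lt_self (by omega : 0 < n) (by norm_num : 1 < 3)
    omega
  set w : F := ((g ^ (n / 3) : Fˣ) : F) with hwdef
  have hw3' : w ^ 3 = 1 := by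
    rw [hwdef, ← Units.val_pow_eq_pow_val, hw3, Units.val_one]
  have hwne' : w ≠ 1 := by
    intro h; exact hwne (Units.ext h)
  have hroot : w ^ 2 + w + 1 = 0 := by
    have hfac : (w - 1) * (w ^ 2 + w + 1) = 0 := by linear_combination hw3'
    rcases mul_eq_zero.mp hfac with h | h
    · exact absurd (sub_eq_zero.mp h) hwne'
    · exact h
  have hlodd : l % 2 = 1 := by
    rcases Nat.even_or_odd l with he | ho
    · exfalso
      obtain ⟨a, ha⟩ := he
      have hd : 2 ∣ Nat.gcd l k := Nat.dvd_gcd (by omega) (by omega)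
      rw [hgcd] at hd
      exact absurd hd (by norm_num)
    · exact Nat.odd_iff.mp ho
  have hQmod : 2 ^ l % 3 = 2 := by
    obtain ⟨a, ha⟩ : ∃ a, l = 2 * a + 1 := ⟨l / 2, by omega⟩
    have h4 : 4 ^ a % 3 = 1 := by
      rw [Nat.pow_mod]; norm_num
    have hQ : 2 ^ l = 2 * 4 ^ a := by
      rw [ha, show (4:ℕ) = 2 ^ 2 from rfl, ← pow_mul, pow_succ, mul_comm]
    rw [hQ, Nat.mul_mod, h4]
  have hwQ : w ^ 2 ^ l = w ^ 2 := by
    have e1 : w ^ 2 ^ l = (w ^ 3) ^ (2 ^ l / 3) * w ^ (2 ^ l % 3) := by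
      rw [← pow_mul, ← pow_add, Nat.div_add_mod]
    rw [e1, hw3', one_pow, one_mul, hQmod]
  refine ⟨w, ?_⟩
  rw [hwQ]
  linear_combination hroot - h2

lemma aux_C_psi {k : ℕ} (hF : Fintype.card F = 2 ^ k) (l : ℕ) (x e : F) :
    ((x ^ 2 ^ l + 1) * e ^ 2 ^ l + x * e = 1) ↔
      ((e * x) ^ 2 ^ l + e * x = 1 + e ^ 2 ^ l) := by
  have h2 := aux_two hF
  rw [mul_pow]
  constructor <;> intro h
  · linear_combination h - e ^ 2 ^ l * h2
  · linear_combination h + e ^ 2 ^ l * h2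

lemma aux_key {k : ℕ} (hF : Fintype.card F = 2 ^ k) (l : ℕ) (x d e : F) (hde : d * e = 1) :
    ((x + d) ^ (2 ^ l + 1) + (x + d) = x ^ (2 ^ l + 1) + x) ↔
      ((x ^ 2 ^ l + 1) * e ^ 2 ^ l + x * e = 1) := by
  have h2 := aux_two hF
  have hQQ : e ^ 2 ^ l * d ^ 2 ^ l = 1 := by
    rw [← mul_pow, mul_comm e d, hde, one_pow]
  have claim : (x + d) ^ (2 ^ l + 1) + (x + d) + (x ^ (2 ^ l + 1) + x)
      = ((x ^ 2 ^ l + 1) * e ^ 2 ^ l + x * e + 1) * d ^ (2 ^ l + 1) := by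
    rw [pow_succ, aux_frob_add hF l x d]
    linear_combination (x ^ (2 ^ l) * x + x) * h2 - (x ^ 2 ^ l * d + d) * hQQ - x * d ^ 2 ^ l * hde
  have hd0 : d ≠ 0 := by
    intro h; rw [h, zero_mul] at hde; exact one_ne_zero hde.symm
  constructor <;> intro h
  · have hz : ((x ^ 2 ^ l + 1) * e ^ 2 ^ l + x * e + 1) * d ^ (2 ^ l + 1) = 0 := by
      rw [← claim, h]
      linear_combination (x ^ (2 ^ l + 1) + x) * h2
    have := mul_eq_zero.mp hz
    rcases this with h' | h'
    · linear_combination h' - h2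
    · exact absurd h' (pow_ne_zero _ hd0)
  · have hz : (x + d) ^ (2 ^ l + 1) + (x + d) + (x ^ (2 ^ l + 1) + x) = 0 := by
      rw [claim]
      linear_combination d ^ (2 ^ l + 1) * h + d ^ (2 ^ l + 1) * h2
    linear_combination hz - (x ^ (2 ^ l + 1) + x) * h2

end Aux

set_option maxHeartbeats 1000000 in
/-- distribution of the number of zeros of `P_a` for even `k`, `gcd(l,k)=1`. -/
theorem stmt_3 (k l : ℕ) (hk : Even k) (hk0 : 0 < k) (hlk : l < k) (hgcd : Nat.gcd l k = 1)
    (F : Type*) [Field F] [Fintype F] [DecidableEq F] (hF : Fintype.card F = 2 ^ k) :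
    ((Finset.univ.filter (fun a : F => a ≠ 0 ∧
        (Finset.univ.filter (fun x : F => x ^ (2 ^ l + 1) + x + a = 0)).card = 0)).card
        = (2 ^ k - 1) / 3) ∧
    ((Finset.univ.filter (fun a : F => a ≠ 0 ∧
        (Finset.univ.filter (fun x : F => x ^ (2 ^ l + 1) + x + a = 0)).card = 1)).card
        = 2 ^ (k - 1)) ∧
    ((Finset.univ.filter (fun a : F => a ≠ 0 ∧
        (Finset.univ.filter (fun x : F => x ^ (2 ^ l + 1) + x + a = 0)).card = 3)).card
        = (2 ^ (k - 1) - 2) / 3) := by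
  classical
  have hk2 : 2 ≤ k := by obtain ⟨m, hm⟩ := hk; omega
  have h2 := aux_two hF
  set g : F → F := fun x => x ^ (2 ^ l + 1) + x with hg
  set N : F → ℕ := fun a => (univ.filter fun x => g x = a).card with hN
  have hfilter : ∀ a : F, (univ.filter fun x : F => x ^ (2 ^ l + 1) + x + a = 0)
      = univ.filter fun x => g x = a := by
    intro a
    apply filter_congr
    intro x _
    simp only [hg]
    constructor
    · intro h; linear_combination h - a * h2
    · intro h; linear_combination h + a * h2
  -- the three goal sets
  have hgoal : ∀ i : ℕ, (Finset.univ.filter (fun a : F => a ≠ 0 ∧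
        (Finset.univ.filter (fun x : F => x ^ (2 ^ l + 1) + x + a = 0)).card = i))
      = (univ.filter (fun a : F => a ≠ 0)).filter (fun a => N a = i) := by
    intro i
    rw [filter_filter]
    apply filter_congr
    intro a _
    rw [hfilter a]
  have hQ0 : (2:ℕ) ^ l ≠ 0 := pow_ne_zero l two_ne_zero
  have hC0 : ∀ x : F, ¬ ((x ^ 2 ^ l + 1) * (0:F) ^ 2 ^ l + x * 0 = 1) := by
    intro x h
    rw [zero_pow hQ0, mul_zero, mul_zero, add_zero] at h
    exact one_ne_zero h.symm
  have hCne : ∀ x e : F, ((x ^ 2 ^ l + 1) * e ^ 2 ^ l + x * e = 1) → e ≠ 0 := by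
    intro x e h he
    subst he
    exact hC0 x h
  -- the per-x bijection
  have hbijx : ∀ x : F,
      (univ.filter fun e : F => (x ^ 2 ^ l + 1) * e ^ 2 ^ l + x * e = 1).card
        = ((univ.filter fun y : F => g y = g x).erase x).card := by
    intro x
    refine card_bij' (fun e _ => x + e⁻¹) (fun y _ => (x + y)⁻¹) ?_ ?_ ?_ ?_
    · intro e he
      rw [mem_filter] at he
      have he0 : e ≠ 0 := hCne x e he.2
      rw [mem_erase, mem_filter]
      refine ⟨?_, mem_univ _, ?_⟩
      · intro hxe
        have hxe' : x + e⁻¹ = x := hxe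
        exact inv_ne_zero he0 (add_eq_left.mp hxe')
      · simp only [hg]
        exact (aux_key hF l x e⁻¹ e (inv_mul_cancel₀ he0)).mpr he.2
    · intro y hy
      rw [mem_erase, mem_filter] at hy
      obtain ⟨hyx, -, hgy⟩ := hy
      have hd0 : x + y ≠ 0 := by
        intro hxy
        exact hyx (by linear_combination hxy - x * h2)
      rw [mem_filter]
      refine ⟨mem_univ _, ?_⟩
      have hxx : x + (x + y) = y := by linear_combination x * h2
      refine (aux_key hF l x (x + y) (x + y)⁻¹ (mul_inv_cancel₀ hd0)).mp ?_
      rw [hxx]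
      simp only [hg] at hgy
      exact hgy
    · intro e he
      rw [mem_filter] at he
      have he0 : e ≠ 0 := hCne x e he.2
      have hxx : x + (x + e⁻¹) = e⁻¹ := by linear_combination x * h2
      show (x + (x + e⁻¹))⁻¹ = e
      rw [hxx, inv_inv]
    · intro y hy
      show x + ((x + y)⁻¹)⁻¹ = y
      rw [inv_inv]
      linear_combination x * h2
  -- per-e bijection
  have hbije : ∀ e : F, e ≠ 0 →
      (univ.filter fun x : F => (x ^ 2 ^ l + 1) * e ^ 2 ^ l + x * e = 1).card
        = (univ.filter fun y : F => y ^ 2 ^ l + y = 1 + e ^ 2 ^ l).card := by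
    intro e he0
    refine card_bij' (fun x _ => e * x) (fun y _ => e⁻¹ * y) ?_ ?_ ?_ ?_
    · intro x hx
      rw [mem_filter] at hx
      rw [mem_filter]
      exact ⟨mem_univ _, (aux_C_psi hF l x e).mp hx.2⟩
    · intro y hy
      rw [mem_filter] at hy
      rw [mem_filter]
      refine ⟨mem_univ _, ?_⟩
      have := (aux_C_psi hF l (e⁻¹ * y) e).mpr ?_
      · exact this
      · rw [mul_inv_cancel_left₀ he0]
        exact hy.2
    · intro x hx
      show e⁻¹ * (e * x) = x
      rw [inv_mul_cancel_left₀ he0]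
    · intro y hy
      show e * (e⁻¹ * y) = y
      rw [mul_inv_cancel_left₀ he0]
  -- the image of ψ
  set img : Finset F := univ.image (fun u : F => u ^ 2 ^ l + u) with himg
  have hone_mem : (1 : F) ∈ img := by
    obtain ⟨w, hw⟩ := aux_one_mem hF hk hk2 hgcd
    rw [himg, mem_image]
    exact ⟨w, mem_univ w, hw⟩
  have himgcard : img.card = 2 ^ (k - 1) := aux_img_card hF hgcd hk2
  -- LHS evaluation
  have hcount : card ((univ.erase (0:F)).filter (fun e => 1 + e ^ 2 ^ l ∈ img))
      = img.card - 1 := by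
    rw [← card_erase_of_mem hone_mem]
    refine card_bij (fun e _ => 1 + e ^ 2 ^ l) ?_ ?_ ?_
    · intro e he
      rw [mem_filter, mem_erase] at he
      rw [mem_erase]
      refine ⟨?_, he.2⟩
      intro hh
      have hh' : 1 + e ^ 2 ^ l = 1 := hh
      have : e ^ 2 ^ l = 0 := by linear_combination hh'
      exact he.1.1 (pow_eq_zero_iff hQ0 |>.mp this)
    · intro e1 h1 e2 h2'
      intro hh
      have hh' : 1 + e1 ^ 2 ^ l = 1 + e2 ^ 2 ^ l := hh
      have : e1 ^ 2 ^ l = e2 ^ 2 ^ l := by linear_combination hh'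
      exact aux_frob_inj hF l this
    · intro c hc
      rw [mem_erase] at hc
      obtain ⟨e, he⟩ := aux_frob_surj hF l (c + 1)
      simp only at he
      have he0 : e ≠ 0 := by
        intro h0
        rw [h0, zero_pow hQ0] at he
        exact hc.1 (by linear_combination - he - h2)
      have hval : 1 + e ^ 2 ^ l = c := by linear_combination he + h2
      refine ⟨e, ?_, hval⟩
      rw [mem_filter, mem_erase]
      exact ⟨⟨he0, mem_univ e⟩, by rw [hval]; exact hc.2⟩
  have hLHS : ∑ e : F, (univ.filter fun x : F =>
      (x ^ 2 ^ l + 1) * e ^ 2 ^ l + x * e = 1).card = 2 * (2 ^ (k - 1) - 1) := by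
    rw [← Finset.sum_erase_add _ _ (mem_univ (0:F))]
    have hzero : (univ.filter fun x : F =>
        (x ^ 2 ^ l + 1) * (0:F) ^ 2 ^ l + x * 0 = 1).card = 0 := by
      rw [Finset.card_eq_zero, filter_eq_empty_iff]
      intro x _
      exact hC0 x
    rw [hzero, add_zero]
    have hstep : ∀ e ∈ univ.erase (0:F),
        (univ.filter fun x : F => (x ^ 2 ^ l + 1) * e ^ 2 ^ l + x * e = 1).card
          = if (1 + e ^ 2 ^ l) ∈ img then 2 else 0 := by
      intro e he
      rw [hbije e (mem_erase.mp he).1]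
      have := aux_psi_fiber_card hF hgcd hk2 (c := 1 + e ^ 2 ^ l)
      rw [this, himg]
    rw [Finset.sum_congr rfl hstep, ← Finset.sum_filter, Finset.sum_const, smul_eq_mul,
      hcount, himgcard, mul_comm]
  -- RHS evaluation
  have hxm : ∀ x : F, x ∈ univ.filter fun y : F => g y = g x := by
    intro x
    rw [mem_filter]
    exact ⟨mem_univ x, rfl⟩
  have hNpos : ∀ x : F, 1 ≤ N (g x) := by
    intro x
    rw [hN]
    exact card_pos.mpr ⟨x, hxm x⟩
  have hRHS : ∀ x : F,
      (univ.filter fun e : F => (x ^ 2 ^ l + 1) * e ^ 2 ^ l + x * e = 1).card + 1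
        = N (g x) := by
    intro x
    rw [hbijx x, card_erase_of_mem (hxm x)]
    have := hNpos x
    simp only [hN] at this ⊢
    omega
  have hdouble : ∑ e : F, (univ.filter fun x : F =>
        (x ^ 2 ^ l + 1) * e ^ 2 ^ l + x * e = 1).card
      = ∑ x : F, (univ.filter fun e : F =>
        (x ^ 2 ^ l + 1) * e ^ 2 ^ l + x * e = 1).card := by
    simp only [card_filter]
    exact Finset.sum_comm
  have hsum2 : ∑ x : F, N (g x) = 2 * (2 ^ (k - 1) - 1) + 2 ^ k := by
    have e1 : ∑ x : F, N (g x)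
        = ∑ x : F, ((univ.filter fun e : F =>
            (x ^ 2 ^ l + 1) * e ^ 2 ^ l + x * e = 1).card + 1) := by
      refine Finset.sum_congr rfl ?_
      intro x _
      rw [hRHS x]
    rw [e1, Finset.sum_add_distrib, Finset.sum_const, card_univ, hF, smul_eq_mul, mul_one,
      ← hdouble, hLHS]
  have hcomp : ∑ x : F, N (g x) = ∑ a : F, N a * N a := by
    rw [← Finset.sum_fiberwise_of_maps_to (g := g)
      (fun x (_ : x ∈ (univ : Finset F)) => mem_univ (g x)) (fun x : F => N (g x))]
    refine Finset.sum_congr rfl ?_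
    intro a _
    have e1 : ∀ x ∈ univ.filter fun x : F => g x = a, N (g x) = N a := by
      intro x hx
      rw [(mem_filter.mp hx).2]
    rw [Finset.sum_congr rfl e1, Finset.sum_const, smul_eq_mul, hN]
  have hNN : ∑ a : F, N a * N a = 2 * (2 ^ (k - 1) - 1) + 2 ^ k := by
    rw [← hcomp, hsum2]
  have hsum1 : ∑ a : F, N a = 2 ^ k := by
    have hcf := card_eq_sum_card_fiberwise
      (f := g) (s := (univ : Finset F)) (t := (univ : Finset F)) (fun x _ => mem_univ (g x))
    rw [card_univ, hF] at hcf
    simp only [hN]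
    exact hcf.symm
  have hN0 : N 0 = 2 := by
    have hset : (univ.filter fun x : F => g x = 0) = {0, 1} := by
      ext x
      simp only [mem_filter, mem_univ, true_and, mem_insert, mem_singleton, hg]
      constructor
      · intro h
        have hfac : x * (x ^ 2 ^ l + 1) = 0 := by linear_combination h
        rcases mul_eq_zero.mp hfac with h' | h'
        · exact Or.inl h'
        · right
          have : x ^ 2 ^ l = 1 ^ 2 ^ l := by rw [one_pow]; linear_combination h' - h2
          exact aux_frob_inj hF l this
      · rintro (rfl | rfl)
        · rw [zero_pow (Nat.succ_ne_zero (2^l)), add_zero]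
        · rw [one_pow]
          linear_combination h2
      
    rw [hN]
    simp only [hset]
    rw [card_insert_of_notMem (by simp), card_singleton]
  have hl1 := aux_lpos hgcd hk2
  have hQ1 : (2:ℕ) ^ l - 1 ≠ 0 := by
    have := Nat.one_lt_two_pow_iff.mpr (by omega : l ≠ 0)
    omega
  have hopt : ∀ a : F, a ≠ 0 → N a = 0 ∨ N a = 1 ∨ N a = 3 := by
    intro a ha
    rcases Finset.eq_empty_or_nonempty (univ.filter fun x : F => g x = a) with hem | ⟨x0, hx0⟩
    · left
      simp only [hN]
      rw [hem, card_empty]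
    · have hgx0 : g x0 = a := (mem_filter.mp hx0).2
      have hNa : (univ.filter fun e : F =>
          (x0 ^ 2 ^ l + 1) * e ^ 2 ^ l + x0 * e = 1).card + 1 = N a := by
        rw [← hgx0]
        exact hRHS x0
      have hx00 : x0 ≠ 0 := by
        intro h
        apply ha
        rw [← hgx0, h]
        simp only [hg]
        rw [zero_pow (Nat.succ_ne_zero (2 ^ l)), add_zero]
      have hx01 : x0 ≠ 1 := by
        intro h
        apply ha
        rw [← hgx0, h]
        simp only [hg]
        rw [one_pow]
        linear_combination h2
      have hxq1 : x0 ^ 2 ^ l + 1 ≠ 0 := by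
        intro hq
        apply hx01
        have : x0 ^ 2 ^ l = 1 ^ 2 ^ l := by
          rw [one_pow]
          linear_combination hq - h2
        exact aux_frob_inj hF l this
      obtain ⟨e0, he0⟩ := aux_pow_q1_surj hF hgcd hk2 (x0 * (x0 ^ 2 ^ l + 1)⁻¹)
      simp only at he0
      have hrhs0 : x0 * (x0 ^ 2 ^ l + 1)⁻¹ ≠ 0 := mul_ne_zero hx00 (inv_ne_zero hxq1)
      have he00 : e0 ≠ 0 := by
        intro h
        rw [h, zero_pow hQ1] at he0
        exact hrhs0 he0.symm
      have hker : ∀ z : F, z ≠ 0 → (x0 ^ 2 ^ l + 1) * z ^ 2 ^ l + x0 * z = 0 → z = e0 := by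
        intro z hz0 hz
        apply aux_pow_q1_inj hF hgcd hk2
        simp only
        rw [he0]
        have hzq : z ^ 2 ^ l = z ^ (2 ^ l - 1) * z := by
          rw [← pow_succ]
          congr 1
          omega
        have h5 : ((x0 ^ 2 ^ l + 1) * z ^ (2 ^ l - 1)) * z = x0 * z := by
          rw [mul_assoc, ← hzq]
          linear_combination hz - x0 * z * h2
        have h6 : (x0 ^ 2 ^ l + 1) * z ^ (2 ^ l - 1) = x0 := mul_right_cancel₀ hz0 h5
        rw [eq_comm, mul_inv_eq_iff_eq_mul₀ hxq1]
        linear_combination - h6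
      have hadd : ∀ z1 z2 : F, ((x0 ^ 2 ^ l + 1) * z1 ^ 2 ^ l + x0 * z1 = 1) →
          ((x0 ^ 2 ^ l + 1) * z2 ^ 2 ^ l + x0 * z2 = 1) →
          (x0 ^ 2 ^ l + 1) * (z1 + z2) ^ 2 ^ l + x0 * (z1 + z2) = 0 := by
        intro z1 z2 hz1 hz2
        rw [aux_frob_add hF l]
        linear_combination hz1 + hz2 + h2
      have he0C : (x0 ^ 2 ^ l + 1) * e0 ^ 2 ^ l + x0 * e0 = 0 := by
        have hzq : e0 ^ 2 ^ l = e0 ^ (2 ^ l - 1) * e0 := by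
          rw [← pow_succ]
          congr 1
          omega
        have hcc : (x0 ^ 2 ^ l + 1) * (x0 * (x0 ^ 2 ^ l + 1)⁻¹) = x0 := by
          field_simp
        rw [hzq, he0, ← mul_assoc, hcc]
        linear_combination x0 * e0 * h2
      rcases Finset.eq_empty_or_nonempty (univ.filter fun e : F =>
          (x0 ^ 2 ^ l + 1) * e ^ 2 ^ l + x0 * e = 1) with hE | ⟨e1, he1⟩
      · right; left
        rw [← hNa, hE, card_empty]
      · right; right
        have he1' : (x0 ^ 2 ^ l + 1) * e1 ^ 2 ^ l + x0 * e1 = 1 := (mem_filter.mp he1).2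
        have hEset : (univ.filter fun e : F =>
            (x0 ^ 2 ^ l + 1) * e ^ 2 ^ l + x0 * e = 1) = {e1, e1 + e0} := by
          ext e
          simp only [mem_filter, mem_univ, true_and, mem_insert, mem_singleton]
          constructor
          · intro he
            rcases eq_or_ne e e1 with h | hne
            · exact Or.inl h
            · right
              have hz0 : e + e1 ≠ 0 := fun hz => hne (by linear_combination hz - e1 * h2)
              have hee := hker (e + e1) hz0 (hadd e e1 he he1')
              linear_combination hee - e1 * h2
          · rintro (rfl | rfl)
            · exact he1'
            · rw [aux_frob_add hF l]
              linear_combination he1' + he0C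
        rw [← hNa, hEset, card_insert_of_notMem, card_singleton]
        intro hmem
        rw [mem_singleton] at hmem
        exact he00 (by linear_combination - hmem)
  -- final assembly
  set s : Finset F := univ.filter (fun a : F => a ≠ 0) with hs
  have hsmem : ∀ a : F, a ∈ s → a ≠ 0 := by
    intro a ha
    exact (mem_filter.mp ha).2
  have hscard : s.card = 2 ^ k - 1 := by
    rw [hs, filter_ne', card_erase_of_mem (mem_univ 0), card_univ, hF]
  have hserase : s = univ.erase 0 := by rw [hs, filter_ne']
  have hs1 : ∑ a ∈ s, N a + 2 = 2 ^ k := by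
    have h := Finset.sum_erase_add univ N (mem_univ (0:F))
    rw [hN0, hsum1] at h
    rw [hserase]
    exact h
  have hs2 : ∑ a ∈ s, (N a * N a) + 4 = 2 * (2 ^ (k - 1) - 1) + 2 ^ k := by
    have h := Finset.sum_erase_add univ (fun a => N a * N a) (mem_univ (0:F))
    rw [hN0, hNN] at h
    rw [hserase]
    omega
  have hff : (s.filter (fun a => ¬ N a = 1)).filter (fun a => N a = 3)
      = s.filter (fun a => N a = 3) := by
    rw [filter_filter]
    apply filter_congr
    intro a _
    constructor
    · exact fun h => h.2
    · intro h
      exact ⟨by omega, h⟩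
  have hff0 : (s.filter (fun a => ¬ N a = 1)).filter (fun a => ¬ N a = 3)
      = s.filter (fun a => N a = 0) := by
    rw [filter_filter]
    apply filter_congr
    intro a ha
    have := hopt a (hsmem a ha)
    constructor
    · intro h
      omega
    · intro h
      omega
  have hpart : ∀ f : ℕ → ℕ, f 0 = 0 →
      ∑ a ∈ s, f (N a) = (s.filter (fun a => N a = 1)).card * f 1
        + (s.filter (fun a => N a = 3)).card * f 3 := by
    intro f hf0
    rw [← Finset.sum_filter_add_sum_filter_not s (fun a => N a = 1) (fun a => f (N a))]
    congr 1
    · rw [Finset.sum_congr rfl (fun a ha => by rw [(mem_filter.mp ha).2]),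
        Finset.sum_const, smul_eq_mul]
    · rw [← Finset.sum_filter_add_sum_filter_not (s.filter (fun a => ¬ N a = 1))
        (fun a => N a = 3) (fun a => f (N a)), hff, hff0]
      have hz : ∑ a ∈ s.filter (fun a => N a = 0), f (N a) = 0 := by
        apply Finset.sum_eq_zero
        intro a ha
        rw [(mem_filter.mp ha).2, hf0]
      rw [hz, add_zero]
      rw [Finset.sum_congr rfl (fun a ha => by rw [(mem_filter.mp ha).2]),
        Finset.sum_const, smul_eq_mul]
  have hpart1 := hpart (fun n => n) rfl
  have hpart2 := hpart (fun n => n * n) rfl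
  have hcard1 : (s.filter (fun a => N a = 1)).card
      + (s.filter (fun a => ¬ N a = 1)).card = s.card :=
    Finset.card_filter_add_card_filter_not _
  have hcard2 : ((s.filter (fun a => ¬ N a = 1)).filter (fun a => N a = 3)).card
      + ((s.filter (fun a => ¬ N a = 1)).filter (fun a => ¬ N a = 3)).card
      = (s.filter (fun a => ¬ N a = 1)).card :=
    Finset.card_filter_add_card_filter_not _
  rw [hff, hff0] at hcard2
  have hpow : (2:ℕ) ^ k = 2 * 2 ^ (k - 1) := by
    rw [← pow_succ']
    congr 1
    omega
  have hge : 2 ≤ (2:ℕ) ^ (k - 1) := by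
    have h := Nat.pow_le_pow_right (by norm_num : 1 ≤ 2) (by omega : 1 ≤ k - 1)
    simpa using h
  refine ⟨?_, ?_, ?_⟩
  · rw [hgoal 0]
    omega
  · rw [hgoal 1]
    omega
  · rw [hgoal 3]
    omega
end

section
/- Let l < k with gcd(l,k) = d, k = n d with n > 1, and define the sequence C_1(x)=1, C_2(x)=1, C_{i+2}(x) = C_{i+1}(x) + x^{2^{il}} C_i(x) over GF(2^k). Then for any u in GF(2^k) and 1 <= i <= n-1: C_i(u)^{2^l} C_{i+2}(u) + C_{i+1}(u)^{2^l+1} = prod_{j=1}^{i} u^{2^{jl}}. -/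
/-- The sequence `C_1 = C_2 = 1`, `C_{i+2}(x) = C_{i+1}(x) + x^(2^(i*l)) * C_i(x)`
(with `C_0 = 0`), evaluated at `u`. -/
def Cseq (l : ℕ) {F : Type*} [Field F] (u : F) : ℕ → F
  | 0 => 0
  | 1 => 1
  | 2 => 1
  | (i + 3) => Cseq l u (i + 2) + u ^ (2 ^ ((i + 1) * l)) * Cseq l u (i + 1)

/-- `Z_n(x) = C_{n+1}(x) + x * C_{n-1}(x)^(2^l)`, evaluated at `u`. -/
def Zseq (l n : ℕ) {F : Type*} [Field F] (u : F) : F :=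
  Cseq l u (n + 1) + u * (Cseq l u (n - 1)) ^ (2 ^ l)

lemma Cseq_add_three (l : ℕ) {F : Type*} [Field F] (u : F) (i : ℕ) :
    Cseq l u (i + 3) = Cseq l u (i + 2) + u ^ (2 ^ ((i + 1) * l)) * Cseq l u (i + 1) := rfl

lemma stmt5_aux (l : ℕ) {F : Type*} [Field F] [CharP F 2] (u : F) (m : ℕ) :
    (Cseq l u (m + 1)) ^ (2 ^ l) * Cseq l u (m + 3) + (Cseq l u (m + 2)) ^ (2 ^ l + 1)
      = ∏ j ∈ Finset.Icc 1 (m + 1), u ^ (2 ^ (j * l)) := by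
  have htwo : (2 : F) = 0 := by exact_mod_cast CharP.cast_eq_zero F 2
  induction m with
  | zero =>
      have h3 : Cseq l u 3 = 1 + u ^ (2 ^ (1 * l)) * 1 := Cseq_add_three l u 0
      simp only [show (0:ℕ)+1 = 1 from rfl, show (0:ℕ)+2 = 2 from rfl, show (0:ℕ)+3 = 3 from rfl,
        h3, Finset.Icc_self, Finset.prod_singleton]
      show (1:F) ^ (2^l) * (1 + u ^ (2 ^ (1*l)) * 1) + (1:F) ^ (2^l+1) = u ^ (2 ^ (1*l))
      linear_combination (1 : F) * htwo
  | succ m ih =>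
      have hC := Cseq_add_three l u m
      have hD : Cseq l u (m + 4) = Cseq l u (m + 3) + u ^ (2 ^ ((m + 2) * l)) * Cseq l u (m + 2) :=
        Cseq_add_three l u (m + 1)
      have hv : (u ^ (2 ^ ((m + 1) * l))) ^ (2 ^ l) = u ^ (2 ^ ((m + 2) * l)) := by
        rw [← pow_mul, ← pow_add]
        congr 1
        ring
      have hCq : (Cseq l u (m + 3)) ^ (2 ^ l)
          = (Cseq l u (m + 2)) ^ (2 ^ l) + u ^ (2 ^ ((m + 2) * l)) * (Cseq l u (m + 1)) ^ (2 ^ l) := by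
        rw [hC, add_pow_char_pow, mul_pow, hv]
      have hprod : ∏ j ∈ Finset.Icc 1 (m + 2), u ^ (2 ^ (j * l))
          = (∏ j ∈ Finset.Icc 1 (m + 1), u ^ (2 ^ (j * l))) * u ^ (2 ^ ((m + 2) * l)) := by
        rw [← Finset.prod_Icc_succ_top (by omega : 1 ≤ m + 2)]
      show (Cseq l u (m + 2)) ^ (2 ^ l) * Cseq l u (m + 4) + (Cseq l u (m + 3)) ^ (2 ^ l + 1)
          = ∏ j ∈ Finset.Icc 1 (m + 2), u ^ (2 ^ (j * l))
      rw [hD, hprod]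
      linear_combination (Cseq l u (m + 3)) * hCq + (u ^ (2 ^ ((m + 2) * l))) * ih
        + ((Cseq l u (m + 2)) ^ (2 ^ l) * Cseq l u (m + 3)) * htwo

/-- `C_i(u)^(2^l) * C_{i+2}(u) + C_{i+1}(u)^(2^l+1) = ∏_{j=1}^{i} u^(2^(jl))`. -/
theorem stmt_5 (k l d n : ℕ) (hlk : l < k) (hd : Nat.gcd l k = d) (hk : k = n * d)
    (hn : 1 < n)
    (F : Type*) [Field F] [Fintype F] (hF : Fintype.card F = 2 ^ k)
    (u : F) (i : ℕ) (hi1 : 1 ≤ i) (hi2 : i ≤ n - 1) :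
    (Cseq l u i) ^ (2 ^ l) * Cseq l u (i + 2) + (Cseq l u (i + 1)) ^ (2 ^ l + 1)
      = ∏ j ∈ Finset.Icc 1 i, u ^ (2 ^ (j * l)) := by
  have hchar : CharP F 2 := by
    obtain ⟨p, hp⟩ := CharP.exists F
    haveI := hp
    haveI : Fact (Nat.Prime p) := ⟨CharP.char_is_prime F p⟩
    obtain ⟨m, hm⟩ := FiniteField.card F p
    have hpk : p ∣ 2 ^ k := by
      rw [← hF, hm.2]
      exact dvd_pow_self p (by exact_mod_cast m.ne_zero)
    have : p = 2 := by
      rcases Nat.prime_two.eq_one_or_self_of_dvd p (this.out.dvd_of_dvd_pow hpk) with h | h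
      · exact absurd h this.out.ne_one
      · exact h
    rwa [this] at hp
  haveI := hchar
  obtain ⟨m, rfl⟩ : ∃ m, i = m + 1 := ⟨i - 1, by omega⟩
  exact stmt5_aux l u m
end

section
/- Let l < k with gcd(l,k) = d, k = n d with n > 1, and define C_i as C_1=C_2=1, C_{i+2}(x)=C_{i+1}(x)+x^{2^{il}}C_i(x). Then for any u in GF(2^k) and 1 <= i <= n-1: C_{i+2}(u) = C_{i+1}(u)^{2^l} + u^{2^l} C_i(u)^{2^{2l}}. -/
lemma char_two_of_card {F : Type*} [Field F] [Fintype F] {k : ℕ} (hk : 0 < k)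
    (hF : Fintype.card F = 2 ^ k) : CharP F 2 := by
  obtain ⟨p, hc⟩ := CharP.exists F
  haveI := hc
  have hp : p.Prime := CharP.char_is_prime F p
  haveI : Fact p.Prime := ⟨hp⟩
  obtain ⟨m, hp', hm⟩ := FiniteField.card F p
  have hdvd : p ∣ 2 ^ k := by
    rw [← hF, hm]
    exact dvd_pow_self p m.2.ne'
  have hp2 : p = 2 :=
    (Nat.prime_dvd_prime_iff_eq hp Nat.prime_two).mp (Nat.Prime.dvd_of_dvd_pow hp hdvd)
  rwa [hp2] at hc

lemma key_lemma {F : Type*} [Field F] [CharP F 2] (l : ℕ) (u : F) (i : ℕ) :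
    Cseq l u (i + 2) = (Cseq l u (i + 1)) ^ (2 ^ l) + u ^ (2 ^ l) * (Cseq l u i) ^ (2 ^ (2 * l)) := by
  haveI : Fact (Nat.Prime 2) := ⟨Nat.prime_two⟩
  induction i using Nat.twoStepInduction with
  | zero => simp [Cseq]
  | one => simp [Cseq]
  | more i ih1 ih2 =>
    have frob : ∀ a b : F, (a + b) ^ (2 ^ l) = a ^ (2 ^ l) + b ^ (2 ^ l) := fun a b =>
      add_pow_char_pow a b 2 l
    have hpow : ∀ (a : F) (e : ℕ), (a ^ (2 ^ e)) ^ (2 ^ l) = a ^ (2 ^ (e + l)) := by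
      intro a e
      rw [← pow_mul, ← pow_add]
    have h2l : ∀ a : F, a ^ (2 ^ (2 * l)) = (a ^ (2 ^ l)) ^ (2 ^ l) := by
      intro a
      rw [← pow_mul, ← pow_add, two_mul]
    have h3 : Cseq l u (i + 3) = Cseq l u (i + 2) + u ^ (2 ^ ((i + 1) * l)) * Cseq l u (i + 1) := rfl
    have h4 : Cseq l u (i + 2 + 2) = Cseq l u (i + 3) + u ^ (2 ^ ((i + 2) * l)) * Cseq l u (i + 2) := rfl
    have he : (i + 1) * l + l = (i + 2) * l := by ring
    have hE : (Cseq l u (i + 2)) ^ (2 ^ l)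
        = (Cseq l u (i + 1)) ^ (2 ^ l) + u ^ (2 ^ ((i + 1) * l)) * (Cseq l u i) ^ (2 ^ l) := by
      have h2 : Cseq l u (i + 2) = Cseq l u (i + 1) + u ^ (2 ^ (i * l)) * Cseq l u i := by
        cases i with
        | zero => simp [Cseq]
        | succ j => rfl
      rw [h2, frob, mul_pow, hpow]
      congr 3
      ring
    have F1 : (Cseq l u (i + 3)) ^ (2 ^ l)
        = (Cseq l u (i + 2)) ^ (2 ^ l) + u ^ (2 ^ ((i + 2) * l)) * (Cseq l u (i + 1)) ^ (2 ^ l) := by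
      rw [h3, frob, mul_pow, hpow, he]
    have F2 : (Cseq l u (i + 2)) ^ (2 ^ (2 * l))
        = (Cseq l u (i + 1)) ^ (2 ^ (2 * l)) + u ^ (2 ^ ((i + 2) * l)) * (Cseq l u i) ^ (2 ^ (2 * l)) := by
      rw [h2l (Cseq l u (i + 2)), hE, frob, hpow, mul_pow, hpow, he, hpow,
        show l + l = 2 * l from (two_mul l).symm]
    have ih2' : Cseq l u (i + 3)
        = (Cseq l u (i + 2)) ^ (2 ^ l) + u ^ (2 ^ l) * (Cseq l u (i + 1)) ^ (2 ^ (2 * l)) := ih2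
    rw [h4, F1, F2]
    linear_combination ih2' + u ^ (2 ^ ((i + 2) * l)) * ih1

/-- `C_{i+2}(u) = C_{i+1}(u)^(2^l) + u^(2^l) * C_i(u)^(2^(2l))`. -/
theorem stmt_6 (k l d n : ℕ) (hlk : l < k) (hd : Nat.gcd l k = d) (hk : k = n * d)
    (hn : 1 < n)
    (F : Type*) [Field F] [Fintype F] (hF : Fintype.card F = 2 ^ k)
    (u : F) (i : ℕ) (hi1 : 1 ≤ i) (hi2 : i ≤ n - 1) :
    Cseq l u (i + 2) = (Cseq l u (i + 1)) ^ (2 ^ l) + u ^ (2 ^ l) * (Cseq l u i) ^ (2 ^ (2 * l)) := by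
  haveI : CharP F 2 := char_two_of_card (lt_of_le_of_lt (Nat.zero_le l) hlk) hF
  exact key_lemma l u i
end

section
/- Let l < k with gcd(l,k) = d, k = n d with n > 1. Define Z_n(x) = C_{n+1}(x) + x C_{n-1}(x)^{2^l}, where C_i are given by C_1=C_2=1, C_{i+2}(x)=C_{i+1}(x)+x^{2^{il}}C_i(x). Then for every u in GF(2^k), Z_n(u) lies in the subfield GF(2^d). -/
/-- Recursion for `Cseq`, valid for all `m` (with `C_0 = 0`). -/
lemma Cseq_rec (l : ℕ) {F : Type*} [Field F] (u : F) (m : ℕ) :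
    Cseq l u (m + 2) = Cseq l u (m + 1) + u ^ (2 ^ (m * l)) * Cseq l u m := by
  match m with
  | 0 => simp [Cseq]
  | (i + 1) => rfl

lemma upow {F : Type*} [Field F] (u : F) (a b : ℕ) :
    (u ^ 2 ^ a) ^ 2 ^ b = u ^ 2 ^ (a + b) := by
  rw [← pow_mul, ← pow_add]

/-- If `x^(2^m) = x` then `x^(2^(m*q)) = x`. -/
lemma pow_pow_mul {F : Type*} [Monoid F] (m : ℕ) (x : F) (h : x ^ 2 ^ m = x) :
    ∀ q : ℕ, x ^ 2 ^ (m * q) = x := by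
  intro q
  induction q with
  | zero => simpa using rfl
  | succ q ih => rw [Nat.mul_succ, pow_add, pow_mul, ih, h]

/-- Fixed points of `x ↦ x^(2^l)` and `x ↦ x^(2^k)` are fixed by `x ↦ x^(2^(gcd l k))`. -/
lemma pow_pow_gcd {F : Type*} [Monoid F] :
    ∀ l k : ℕ, ∀ x : F, x ^ 2 ^ l = x → x ^ 2 ^ k = x → x ^ 2 ^ Nat.gcd l k = x := by
  intro l k
  induction l, k using Nat.gcd.induction with
  | H0 k => intro x _ hk; simpa using hk
  | H1 m n hm ih =>
    intro x hm' hn'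
    rw [Nat.gcd_rec]
    refine ih x ?_ hm'
    have h2 : x ^ 2 ^ (m * (n / m)) = x := pow_pow_mul m x hm' (n / m)
    have h3 : x ^ 2 ^ n = x ^ 2 ^ (n % m) := by
      conv_lhs => rw [← Nat.div_add_mod n m]
      rw [pow_add, pow_mul, h2]
    rw [← h3, hn']

/-- The key Frobenius identity: `C_{m+2} = C_{m+1}^(2^l) + u^(2^l) * (C_m^(2^l))^(2^l)`. -/
lemma Cseq_frob (l : ℕ) {F : Type*} [Field F] [CharP F 2] (u : F) :
    ∀ m : ℕ, Cseq l u (m + 2) =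
      (Cseq l u (m + 1)) ^ 2 ^ l + u ^ 2 ^ l * ((Cseq l u m) ^ 2 ^ l) ^ 2 ^ l
  | 0 => by simp [Cseq]
  | 1 => by
    haveI : Fact (Nat.Prime 2) := ⟨Nat.prime_two⟩
    have h3 : Cseq l u 3 = 1 + u ^ 2 ^ l := by
      have := Cseq_rec l u 1
      simpa [Cseq] using this
    simp [h3, Cseq]
  | (m + 2) => by
    haveI : Fact (Nat.Prime 2) := ⟨Nat.prime_two⟩
    have hfr : ∀ x y : F, (x + y) ^ 2 ^ l = x ^ 2 ^ l + y ^ 2 ^ l := fun x y =>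
      add_pow_char_pow x y 2 l
    have ih1 : Cseq l u (m + 2)
        = (Cseq l u (m + 1)) ^ 2 ^ l + u ^ 2 ^ l * ((Cseq l u m) ^ 2 ^ l) ^ 2 ^ l :=
      Cseq_frob l u m
    have ih2 : Cseq l u (m + 3)
        = (Cseq l u (m + 2)) ^ 2 ^ l + u ^ 2 ^ l * ((Cseq l u (m + 1)) ^ 2 ^ l) ^ 2 ^ l :=
      Cseq_frob l u (m + 1)
    have hrec0 : Cseq l u (m + 2)
        = Cseq l u (m + 1) + u ^ 2 ^ (m * l) * Cseq l u m := Cseq_rec l u m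
    have hrec1 : Cseq l u (m + 3)
        = Cseq l u (m + 2) + u ^ 2 ^ ((m + 1) * l) * Cseq l u (m + 1) := Cseq_rec l u (m + 1)
    have hrec2 : Cseq l u (m + 4)
        = Cseq l u (m + 3) + u ^ 2 ^ ((m + 2) * l) * Cseq l u (m + 2) := Cseq_rec l u (m + 2)
    have e1 : (u ^ 2 ^ ((m + 1) * l)) ^ 2 ^ l = u ^ 2 ^ ((m + 2) * l) := by
      rw [upow]; ring_nf
    have e2 : ((u ^ 2 ^ (m * l)) ^ 2 ^ l) ^ 2 ^ l = u ^ 2 ^ ((m + 2) * l) := by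
      rw [upow, upow]; ring_nf
    have hAq : ((Cseq l u (m + 2)) ^ 2 ^ l) ^ 2 ^ l
        = ((Cseq l u (m + 1)) ^ 2 ^ l) ^ 2 ^ l
          + u ^ 2 ^ ((m + 2) * l) * ((Cseq l u m) ^ 2 ^ l) ^ 2 ^ l := by
      rw [hrec0, hfr, mul_pow, hfr, mul_pow, e2]
    have h3q : (Cseq l u (m + 3)) ^ 2 ^ l
        = (Cseq l u (m + 2)) ^ 2 ^ l + u ^ 2 ^ ((m + 2) * l) * (Cseq l u (m + 1)) ^ 2 ^ l := by
      rw [hrec1, hfr, mul_pow, e1]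
    show Cseq l u (m + 4)
        = (Cseq l u (m + 3)) ^ 2 ^ l + u ^ 2 ^ l * ((Cseq l u (m + 2)) ^ 2 ^ l) ^ 2 ^ l
    linear_combination hrec2 + ih2 + u ^ 2 ^ ((m + 2) * l) * ih1 - h3q - u ^ 2 ^ l * hAq

/-- `Z_n(u)` lies in the subfield `GF(2^d)` of `GF(2^k)`,
i.e. it is fixed by the map `x ↦ x^(2^d)`. -/
theorem stmt_7 (k l d n : ℕ) (hlk : l < k) (hd : Nat.gcd l k = d) (hk : k = n * d)
    (hn : 1 < n)
    (F : Type*) [Field F] [Fintype F] (hF : Fintype.card F = 2 ^ k)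
    (u : F) :
    (Zseq l n u) ^ (2 ^ d) = Zseq l n u := by
  -- characteristic 2
  have hk0 : 0 < k := by omega
  have hchar2 : ringChar F = 2 := by
    rw [FiniteField.even_card_iff_char_two, hF]
    have : (2:ℕ) ∣ 2 ^ k := dvd_pow_self 2 (by omega)
    omega
  haveI : CharP F 2 := ringChar.of_eq hchar2
  haveI : Fact (Nat.Prime 2) := ⟨Nat.prime_two⟩
  have hfr : ∀ x y : F, (x + y) ^ 2 ^ l = x ^ 2 ^ l + y ^ 2 ^ l := fun x y =>
    add_pow_char_pow x y 2 l
  -- every element is fixed by x ↦ x^(2^k)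
  have hcard : ∀ x : F, x ^ 2 ^ k = x := by
    intro x; rw [← hF]; exact FiniteField.pow_card x
  -- u is fixed by x ↦ x^(2^(n*l))
  have hdl : d ∣ l := hd ▸ Nat.gcd_dvd_left l k
  obtain ⟨t, ht⟩ := hdl
  have hnl : n * l = k * t := by rw [hk, ht]; ring
  have hun : u ^ 2 ^ (n * l) = u := by rw [hnl]; exact pow_pow_mul k u (hcard u) t
  -- write n = m + 2
  obtain ⟨m, rfl⟩ : ∃ m, n = m + 2 := ⟨n - 2, by omega⟩
  have hZ : Zseq l (m + 2) u = Cseq l u (m + 3) + u * (Cseq l u (m + 1)) ^ 2 ^ l := rfl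
  -- Z is fixed by x ↦ x^(2^l)
  have hkey := Cseq_frob l u (m + 1)
  have hrec1 := Cseq_rec l u (m + 1)
  have he : (u ^ 2 ^ ((m + 1) * l)) ^ 2 ^ l = u := by
    rw [upow]
    have : (m + 1) * l + l = (m + 2) * l := by ring
    rw [this]; exact hun
  have hc3q : (Cseq l u (m + 3)) ^ 2 ^ l
      = (Cseq l u (m + 2)) ^ 2 ^ l + u * (Cseq l u (m + 1)) ^ 2 ^ l := by
    rw [hrec1, hfr, mul_pow, he]
  have hZl : (Zseq l (m + 2) u) ^ 2 ^ l = Zseq l (m + 2) u := by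
    rw [hZ, hfr, mul_pow, hc3q, hkey]
    ring
  have hfin := pow_pow_gcd l k _ hZl (hcard _)
  rwa [hd] at hfin
end

section
/- Let l < k with gcd(l,k) = d, k = n d, n > 1, and let v be in GF(2^k) \ GF(2^d). Set V = v^{2^{2l}+1} / (v + v^{2^l})^{2^l+1}. Then C_n(V) = (Tr^k_d(v) / (v^{2^l} + v^{2^{2l}})) * prod_{j=2}^{n-1} (v / (v + v^{2^l}))^{2^{jl}}, where C_n is defined by C_1=C_2=1, C_{i+2}(x)=C_{i+1}(x)+x^{2^{il}}C_i(x) and Tr^k_d is the trace from GF(2^k) to GF(2^d). -/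
section Helpers

variable {F : Type*} [Field F]

/-- `x ↦ v ^ (2^(i*l))`. -/
def ttt (l : ℕ) {F : Type*} [Field F] (v : F) (i : ℕ) : F := v ^ (2 ^ (i * l))

lemma cyc (k : ℕ) (x : F) (hx : x ^ 2 ^ k = x) : ∀ c, x ^ 2 ^ (c * k) = x
  | 0 => by simp
  | (c + 1) => by
    rw [show (c + 1) * k = c * k + k by ring, pow_add, pow_mul, cyc k x hx c, hx]

lemma cyc' (k : ℕ) (x : F) (hx : x ^ 2 ^ k = x) (a c : ℕ) :
    x ^ 2 ^ (a + c * k) = x ^ 2 ^ a := by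
  have h : (x ^ 2 ^ a) ^ 2 ^ k = x ^ 2 ^ a := by
    rw [← pow_mul, mul_comm, pow_mul, hx]
  rw [pow_add, pow_mul]
  exact cyc k _ h c

lemma fix_gcd (x : F) : ∀ l, ∀ k, x ^ 2 ^ l = x → x ^ 2 ^ k = x →
    x ^ 2 ^ (Nat.gcd l k) = x := by
  intro l
  induction l using Nat.strong_induction_on with
  | _ l ih =>
    intro k hl hk
    rcases Nat.eq_zero_or_pos l with h0 | hpos
    · subst h0; simpa using hk
    · rw [Nat.gcd_rec l k]
      refine ih (k % l) (Nat.mod_lt _ hpos) l ?_ hl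
      have h := cyc' l x hl (k % l) (k / l)
      rw [Nat.mod_add_div'] at h
      exact h.symm.trans hk

lemma frob_t (l : ℕ) (v : F) (i j : ℕ) : (ttt l v j) ^ 2 ^ (i * l) = ttt l v (i + j) := by
  unfold ttt
  rw [← pow_mul, ← pow_add, show j * l + i * l = (i + j) * l by ring]

variable [CharP F 2]

lemma frob_add (a b : F) (mm : ℕ) : (a + b) ^ 2 ^ mm = a ^ 2 ^ mm + b ^ 2 ^ mm := by
  haveI : Fact (Nat.Prime 2) := ⟨Nat.prime_two⟩
  exact add_pow_char_pow ..

lemma frob_w (l : ℕ) (v : F) (i j : ℕ) :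
    (ttt l v j + ttt l v (j + 1)) ^ 2 ^ (i * l) = ttt l v (i + j) + ttt l v (i + j + 1) := by
  rw [frob_add, frob_t, frob_t, show i + (j + 1) = i + j + 1 by ring]

lemma hV (l : ℕ) (v : F) :
    v ^ (2 ^ (2 * l) + 1) / (v + v ^ 2 ^ l) ^ (2 ^ l + 1)
      = ttt l v 2 * ttt l v 0 / ((ttt l v 1 + ttt l v 2) * (ttt l v 0 + ttt l v 1)) := by
  have h1 : v ^ (2 ^ (2 * l) + 1) = ttt l v 2 * ttt l v 0 := by
    simp [ttt, pow_add]
  have hvw : v + v ^ 2 ^ l = ttt l v 0 + ttt l v 1 := by simp [ttt]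
  have h2 : (v + v ^ 2 ^ l) ^ (2 ^ l + 1)
      = (ttt l v 1 + ttt l v 2) * (ttt l v 0 + ttt l v 1) := by
    rw [pow_add, pow_one, hvw]
    congr 1
    have := frob_w l v 1 0
    simpa using this
  rw [h1, h2]

lemma hVpow (l : ℕ) (v : F) (i : ℕ) :
    (v ^ (2 ^ (2 * l) + 1) / (v + v ^ 2 ^ l) ^ (2 ^ l + 1)) ^ 2 ^ (i * l)
      = ttt l v (i + 2) * ttt l v i
        / ((ttt l v (i + 1) + ttt l v (i + 2)) * (ttt l v i + ttt l v (i + 1))) := by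
  rw [hV, div_pow, mul_pow, mul_pow, frob_t, frob_t, frob_w, frob_w]
  norm_num

lemma keymul_aux (l : ℕ) (v V : F)
    (hwne : ∀ j, ttt l v j + ttt l v (j + 1) ≠ 0)
    (hVp : ∀ i, V ^ 2 ^ (i * l) = ttt l v (i + 2) * ttt l v i
      / ((ttt l v (i + 1) + ttt l v (i + 2)) * (ttt l v i + ttt l v (i + 1)))) :
    ∀ m : ℕ,
      (Cseq l V (m + 2) * ∏ j ∈ Finset.Icc 1 (m + 1), (ttt l v j + ttt l v (j + 1))
        = (∑ i ∈ Finset.Icc 1 (m + 2), ttt l v i) * ∏ j ∈ Finset.Icc 2 (m + 1), ttt l v j)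
      ∧ (Cseq l V (m + 3) * ∏ j ∈ Finset.Icc 1 (m + 2), (ttt l v j + ttt l v (j + 1))
        = (∑ i ∈ Finset.Icc 1 (m + 3), ttt l v i) * ∏ j ∈ Finset.Icc 2 (m + 2), ttt l v j) := by
  have h2 : (2 : F) = 0 := by
    have := CharP.cast_eq_zero F 2
    exact_mod_cast this
  intro m
  induction m with
  | zero =>
    constructor
    · show (1 : F) * _ = _
      rw [show Finset.Icc 2 1 = (∅ : Finset ℕ) from rfl, Finset.prod_empty,
        Finset.Icc_self, Finset.prod_singleton,
        Finset.sum_Icc_succ_top (by omega), Finset.Icc_self, Finset.sum_singleton]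
      ring
    · have hC : Cseq l V 3 = 1 + V ^ 2 ^ (1 * l) * 1 := rfl
      rw [hC, hVp 1,
        Finset.prod_Icc_succ_top (show 1 ≤ 1 + 1 by omega), Finset.Icc_self,
        Finset.prod_singleton,
        Finset.sum_Icc_succ_top (show 1 ≤ 2 + 1 by omega),
        Finset.sum_Icc_succ_top (show 1 ≤ 1 + 1 by omega),
        Finset.Icc_self, Finset.sum_singleton, Finset.Icc_self, Finset.prod_singleton]
      norm_num
      have hdiv : ttt l v 3 * ttt l v 1
          / ((ttt l v 2 + ttt l v 3) * (ttt l v 1 + ttt l v 2))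
          * ((ttt l v 2 + ttt l v 3) * (ttt l v 1 + ttt l v 2))
          = ttt l v 3 * ttt l v 1 :=
        div_mul_cancel₀ _ (mul_ne_zero (hwne 2) (hwne 1))
      linear_combination hdiv + ttt l v 1 * ttt l v 3 * h2
  | succ m ih =>
    obtain ⟨ih1, ih2⟩ := ih
    refine ⟨ih2, ?_⟩
    have hC : Cseq l V (m + 4) = Cseq l V (m + 3) + V ^ 2 ^ ((m + 2) * l) * Cseq l V (m + 2) :=
      rfl
    rw [show m + 1 + 3 = m + 4 by omega, show m + 1 + 2 = m + 3 by omega, hC, hVp (m + 2),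
      show m + 2 + 2 = m + 4 by omega, show m + 2 + 1 = m + 3 by omega,
      Finset.prod_Icc_succ_top (show 1 ≤ m + 2 + 1 by omega),
      Finset.prod_Icc_succ_top (show 1 ≤ m + 1 + 1 by omega),
      Finset.sum_Icc_succ_top (show 1 ≤ m + 3 + 1 by omega),
      Finset.sum_Icc_succ_top (show 1 ≤ m + 2 + 1 by omega),
      Finset.prod_Icc_succ_top (show 2 ≤ m + 2 + 1 by omega),
      Finset.prod_Icc_succ_top (show 2 ≤ m + 1 + 1 by omega)]
    rw [Finset.prod_Icc_succ_top (show 1 ≤ m + 1 + 1 by omega),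
      Finset.sum_Icc_succ_top (show 1 ≤ m + 2 + 1 by omega),
      Finset.prod_Icc_succ_top (show 2 ≤ m + 1 + 1 by omega)] at ih2
    have hdiv : ttt l v (m + 4) * ttt l v (m + 2)
        / ((ttt l v (m + 3) + ttt l v (m + 4)) * (ttt l v (m + 2) + ttt l v (m + 3)))
        * ((ttt l v (m + 3) + ttt l v (m + 4)) * (ttt l v (m + 2) + ttt l v (m + 3)))
        = ttt l v (m + 4) * ttt l v (m + 2) :=
      div_mul_cancel₀ _ (mul_ne_zero (hwne (m + 3)) (hwne (m + 2)))
    linear_combination (ttt l v (m + 3) + ttt l v (m + 4)) * ih2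
      + Cseq l V (m + 2) * (∏ j ∈ Finset.Icc 1 (m + 1), (ttt l v j + ttt l v (j + 1))) * hdiv
      + ttt l v (m + 4) * ttt l v (m + 2) * ih1
      + (∑ i ∈ Finset.Icc 1 (m + 2), ttt l v i)
        * (∏ j ∈ Finset.Icc 2 (m + 1), ttt l v j)
        * ttt l v (m + 2) * ttt l v (m + 4) * h2

end Helpers

/-- value of `C_n` at `V = v^(2^(2l)+1)/(v+v^(2^l))^(2^l+1)` for
`v ∈ GF(2^k) \ GF(2^d)`. -/
theorem stmt_8 (k l d n : ℕ) (hlk : l < k) (hd : Nat.gcd l k = d) (hk : k = n * d)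
    (hn : 1 < n)
    (F : Type*) [Field F] [Fintype F] (hF : Fintype.card F = 2 ^ k)
    (v : F) (hv : v ^ (2 ^ d) ≠ v) :
    Cseq l (v ^ (2 ^ (2 * l) + 1) / (v + v ^ (2 ^ l)) ^ (2 ^ l + 1)) n
      = ((∑ i ∈ Finset.range n, v ^ (2 ^ (i * d))) / (v ^ (2 ^ l) + v ^ (2 ^ (2 * l))))
          * ∏ j ∈ Finset.Icc 2 (n - 1), (v / (v + v ^ (2 ^ l))) ^ (2 ^ (j * l)) := by
  -- characteristic 2
  have hk0 : 0 < k := lt_of_le_of_lt (Nat.zero_le l) hlk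
  obtain ⟨p, hp⟩ := CharP.exists F
  haveI := hp
  have hprime : p.Prime := CharP.char_is_prime F p
  haveI : Fact p.Prime := ⟨hprime⟩
  obtain ⟨np, -, hcard⟩ := FiniteField.card F p
  have hpk : (2 : ℕ) ^ k = p ^ (np : ℕ) := by rw [← hF, hcard]
  have hp2 : p = 2 := by
    have hdvd : p ∣ 2 ^ k := hpk ▸ dvd_pow_self p np.ne_zero
    have := hprime.dvd_of_dvd_pow hdvd
    exact (Nat.prime_dvd_prime_iff_eq hprime Nat.prime_two).mp this
  subst hp2
  have h2 : (2 : F) = 0 := by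
    have := CharP.cast_eq_zero F 2
    exact_mod_cast this
  -- basic facts
  have frobk : ∀ x : F, x ^ 2 ^ k = x := by
    intro x; rw [← hF]; exact FiniteField.pow_card x
  have hd0 : 0 < d := by
    rcases Nat.eq_zero_or_pos d with h | h
    · subst h; simp at hk; omega
    · exact h
  have hdl : d ∣ l := hd ▸ Nat.gcd_dvd_left l k
  have hvl : v ^ 2 ^ l ≠ v := by
    intro h
    exact hv (by have := fix_gcd v l k h (frobk v); rwa [hd] at this)
  have hw0 : v + v ^ 2 ^ l ≠ 0 := by
    intro h
    exact hvl (by linear_combination h - v * h2)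
  obtain ⟨m, rfl⟩ : ∃ m, n = m + 2 := ⟨n - 2, by omega⟩
  -- nonvanishing of the w's
  have hwne : ∀ j, ttt l v j + ttt l v (j + 1) ≠ 0 := by
    intro j
    have hfrob := frob_w l v j 0
    simp only [Nat.add_zero] at hfrob
    have h0 : ttt l v 0 + ttt l v 1 = v + v ^ 2 ^ l := by simp [ttt]
    rw [← hfrob, h0]
    exact pow_ne_zero _ hw0
  have key := (keymul_aux l v _ hwne (hVpow l v) m).1
  -- trace rewriting
  obtain ⟨m₀, hm₀⟩ := hdl
  have hld : l / d = m₀ := by rw [hm₀]; exact Nat.mul_div_cancel_left m₀ hd0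
  have hkd : k / d = m + 2 := by rw [hk]; exact Nat.mul_div_cancel _ hd0
  have hcop : Nat.Coprime m₀ (m + 2) := by
    have := Nat.coprime_div_gcd_div_gcd (m := l) (n := k) (by rw [hd]; exact hd0)
    rwa [hd, hld, hkd] at this
  obtain ⟨m', -, hm'⟩ := Nat.exists_mul_mod_eq_one_of_coprime hcop (by omega)
  have hsum : ∑ i ∈ Finset.range (m + 2), v ^ 2 ^ (i * d)
      = ∑ i ∈ Finset.Icc 1 (m + 2), ttt l v i := by
    have step1 : ∑ i ∈ Finset.Icc 1 (m + 2), ttt l v i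
        = ∑ i ∈ Finset.range (m + 2), ttt l v i := by
      rw [Finset.sum_Icc_succ_top (show 1 ≤ m + 1 + 1 by omega),
        Finset.range_eq_Ico, Finset.sum_eq_sum_Ico_succ_bot (by omega),
        (show Finset.Ico (0 + 1) (m + 2) = Finset.Icc (0 + 1) (m + 1) from
          Finset.Ico_add_one_right_eq_Icc _ _)]
      have htn : ttt l v (m + 2) = ttt l v 0 := by
        have : (m + 2) * l = m₀ * k := by rw [hm₀, hk]; ring
        simp only [ttt, this, Nat.zero_mul, pow_zero, pow_one]
        exact cyc k v (frobk v) m₀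
      rw [htn]
      have : ttt l v 0 = v ^ 2 ^ (0 * l) := rfl
      ring
    rw [step1]
    refine (Finset.sum_nbij' (fun i => i * m₀ % (m + 2)) (fun j => j * m' % (m + 2))
      ?_ ?_ ?_ ?_ ?_).symm
    · intro a _; exact Finset.mem_range.mpr (Nat.mod_lt _ (by omega))
    · intro a _; exact Finset.mem_range.mpr (Nat.mod_lt _ (by omega))
    · intro a ha
      have ha' := Finset.mem_range.mp ha
      show a * m₀ % (m + 2) * m' % (m + 2) = a
      rw [Nat.mod_mul_mod, mul_assoc, Nat.mul_mod, hm', mul_one, Nat.mod_mod_of_dvd _ dvd_rfl,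
        Nat.mod_eq_of_lt ha']
    · intro a ha
      have ha' := Finset.mem_range.mp ha
      show a * m' % (m + 2) * m₀ % (m + 2) = a
      rw [Nat.mod_mul_mod, mul_assoc, Nat.mul_mod, mul_comm m' m₀, hm', mul_one,
        Nat.mod_mod_of_dvd _ dvd_rfl, Nat.mod_eq_of_lt ha']
    · intro a _
      show ttt l v a = v ^ 2 ^ (a * m₀ % (m + 2) * d)
      have hmod := Nat.mod_add_div (a * m₀) (m + 2)
      have hexp : a * l = a * m₀ % (m + 2) * d + a * m₀ / (m + 2) * k :=
        calc a * l = (a * m₀) * d := by rw [hm₀]; ring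
          _ = (a * m₀ % (m + 2) + (m + 2) * (a * m₀ / (m + 2))) * d := by rw [hmod]
          _ = a * m₀ % (m + 2) * d + a * m₀ / (m + 2) * k := by rw [hk]; ring
      unfold ttt
      rw [hexp]
      exact cyc' k v (frobk v) _ _
  -- denominator rewriting
  have hden1 : v ^ 2 ^ l + v ^ 2 ^ (2 * l) = ttt l v 1 + ttt l v 2 := by simp [ttt]
  have hprod : ∏ j ∈ Finset.Icc 2 (m + 2 - 1), (v / (v + v ^ 2 ^ l)) ^ 2 ^ (j * l)
      = (∏ j ∈ Finset.Icc 2 (m + 1), ttt l v j)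
        / ∏ j ∈ Finset.Icc 2 (m + 1), (ttt l v j + ttt l v (j + 1)) := by
    rw [show m + 2 - 1 = m + 1 by omega, ← Finset.prod_div_distrib]
    refine Finset.prod_congr rfl ?_
    intro j _
    have h0 : v + v ^ 2 ^ l = ttt l v 0 + ttt l v 1 := by simp [ttt]
    have hden : (v + v ^ 2 ^ l) ^ 2 ^ (j * l) = ttt l v j + ttt l v (j + 1) := by
      rw [h0]
      simpa using frob_w l v j 0
    rw [div_pow, hden]
    rfl
  have hQQ : ∏ j ∈ Finset.Icc 1 (m + 1), (ttt l v j + ttt l v (j + 1))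
      = (ttt l v 1 + ttt l v 2)
        * ∏ j ∈ Finset.Icc 2 (m + 1), (ttt l v j + ttt l v (j + 1)) := by
    rw [← Finset.Ico_add_one_right_eq_Icc,
      Finset.prod_eq_prod_Ico_succ_bot (show 1 < m + 1 + 1 by omega),
      show (1 : ℕ) + 1 = 2 from rfl, Finset.Ico_add_one_right_eq_Icc]
  have hQne : (∏ j ∈ Finset.Icc 1 (m + 1), (ttt l v j + ttt l v (j + 1))) ≠ 0 :=
    Finset.prod_ne_zero_iff.mpr fun j _ => hwne j
  have hQne2 : (ttt l v 1 + ttt l v 2)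
      * (∏ j ∈ Finset.Icc 2 (m + 1), (ttt l v j + ttt l v (j + 1))) ≠ 0 := by
    rw [← hQQ]; exact hQne
  rw [hsum, hden1, hprod, div_mul_div_comm, eq_div_iff hQne2]
  linear_combination key
    - Cseq l (v ^ (2 ^ (2 * l) + 1) / (v + v ^ 2 ^ l) ^ (2 ^ l + 1)) (m + 2) * hQQ
end

section
/- Let l < k with gcd(l,k) = d, k = n d, n > 1. For any a in GF(2^k)*, the polynomial P_a(x) = x^{2^l+1} + x + a has 0, 1, 2, or 2^d + 1 zeros in GF(2^k). -/
/-- gcd of Mersenne-type numbers. -/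
lemma gcd_two_pow_sub_one (l k : ℕ) :
    Nat.gcd (2 ^ l - 1) (2 ^ k - 1) = 2 ^ (Nat.gcd l k) - 1 := by
  set g := Nat.gcd (2 ^ l - 1) (2 ^ k - 1) with hg
  apply Nat.dvd_antisymm
  · have h2 : ∀ m : ℕ, g ∣ 2 ^ m - 1 → (2 : ZMod g) ^ m = 1 := by
      intro m hm
      have h1 : ((2 ^ m - 1 : ℕ) : ZMod g) = 0 := (ZMod.natCast_eq_zero_iff _ _).2 hm
      rw [Nat.cast_sub Nat.one_le_two_pow] at h1
      push_cast at h1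
      linear_combination h1
    have hl := h2 l (Nat.gcd_dvd_left _ _)
    have hk := h2 k (Nat.gcd_dvd_right _ _)
    have hgcd : (2 : ZMod g) ^ Nat.gcd l k = 1 := pow_gcd_eq_one.2 ⟨hl, hk⟩
    have : ((2 ^ Nat.gcd l k - 1 : ℕ) : ZMod g) = 0 := by
      rw [Nat.cast_sub Nat.one_le_two_pow]; push_cast; rw [hgcd]; ring
    exact (ZMod.natCast_eq_zero_iff _ _).1 this
  · have key : ∀ m : ℕ, Nat.gcd l k ∣ m → 2 ^ Nat.gcd l k - 1 ∣ 2 ^ m - 1 := by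
      rintro m ⟨c, rfl⟩
      rw [pow_mul]
      simpa using Nat.sub_dvd_pow_sub_pow (2 ^ Nat.gcd l k) 1 c
    exact Nat.dvd_gcd (key l (Nat.gcd_dvd_left _ _)) (key k (Nat.gcd_dvd_right _ _))

/-- Number of `e`-th roots of unity in a finite field, when `e ∣ q - 1`. -/
lemma card_pow_eq_one_finField (F : Type*) [Field F] [Fintype F] [DecidableEq F] {e : ℕ}
    (he : 0 < e) (hdvd : e ∣ Fintype.card F - 1) :
    (Finset.univ.filter (fun u : F => u ^ e = 1)).card = e := by
  obtain ⟨g, hgen⟩ := IsCyclic.exists_generator (α := Fˣ)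
  have hordg : orderOf g = Fintype.card F - 1 := by
    rw [orderOf_eq_card_of_forall_mem_zpowers hgen, Nat.card_eq_fintype_card,
      Fintype.card_units]
  obtain ⟨c, hc⟩ := hdvd
  have hpos : 0 < Fintype.card F - 1 := by
    have := Fintype.one_lt_card (α := F)
    omega
  have hprim : IsPrimitiveRoot g (Fintype.card F - 1) := hordg ▸ IsPrimitiveRoot.orderOf g
  have hprim2 : IsPrimitiveRoot (g ^ c) e := hprim.pow hpos (by rw [hc, mul_comm])
  have hprimF : IsPrimitiveRoot ((g ^ c : Fˣ) : F) e :=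
    IsPrimitiveRoot.coe_units_iff.mpr hprim2
  have hset : Finset.univ.filter (fun u : F => u ^ e = 1) = Polynomial.nthRootsFinset e (1 : F) := by
    ext u
    simp [Polynomial.mem_nthRootsFinset he]
  rw [hset, hprimF.card_nthRootsFinset]

/-- Fibers of an additive map are empty or have the cardinality of the kernel. -/
lemma affine_fiber_card {F : Type*} [Field F] [Fintype F] [DecidableEq F] (f : F → F)
    (hf : ∀ x y, f (x + y) = f x + f y) (t : F) :
    (Finset.univ.filter (fun w => f w = t)).card = 0 ∨
    (Finset.univ.filter (fun w => f w = t)).card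
      = (Finset.univ.filter (fun w => f w = 0)).card := by
  rcases Finset.eq_empty_or_nonempty (Finset.univ.filter (fun w => f w = t)) with h | ⟨w0, hw0⟩
  · left; simp [h]
  · right
    have hw0' : f w0 = t := (Finset.mem_filter.1 hw0).2
    have hsub : ∀ x y, f (x - y) = f x - f y := by
      intro x y
      have h := hf (x - y) y
      rw [sub_add_cancel] at h
      exact eq_sub_iff_add_eq.2 h.symm
    apply Finset.card_nbij' (fun w => w - w0) (fun w => w + w0)
    · intro w hw
      rw [Finset.mem_coe, Finset.mem_filter] at hw ⊢
      refine ⟨Finset.mem_univ _, ?_⟩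
      rw [hsub, hw.2, hw0', sub_self]
    · intro w hw
      rw [Finset.mem_coe, Finset.mem_filter] at hw ⊢
      refine ⟨Finset.mem_univ _, ?_⟩
      rw [hf, hw.2, hw0', zero_add]
    · intro w _; simp
    · intro w _; simp

/-- `P_a(x) = x^(2^l+1) + x + a` has `0`, `1`, `2` or `2^d+1`
zeros in `GF(2^k)`, where `d = gcd(l,k)`. -/
theorem stmt_10 (k l d n : ℕ) (hlk : l < k) (hd : Nat.gcd l k = d) (hk : k = n * d)
    (hn : 1 < n)
    (F : Type*) [Field F] [Fintype F] [DecidableEq F] (hF : Fintype.card F = 2 ^ k)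
    (a : F) (ha : a ≠ 0) :
    (Finset.univ.filter (fun x : F => x ^ (2 ^ l + 1) + x + a = 0)).card ∈
      ({0, 1, 2, 2 ^ d + 1} : Set ℕ) := by
  have hk0 : 0 < k := lt_of_le_of_lt (Nat.zero_le l) hlk
  have hl0 : 0 < l := by
    rcases Nat.eq_zero_or_pos l with h | h
    · exfalso
      subst h
      rw [Nat.gcd_zero_left] at hd
      have h2 : 2 * d ≤ n * d := Nat.mul_le_mul_right d hn
      have h3 : k = n * d := hk
      linarith [hk0, hd]
    · exact h
  have hd0 : 0 < d := by
    have : d ∣ l := hd ▸ Nat.gcd_dvd_left l k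
    exact Nat.pos_of_dvd_of_pos this hl0
  have hQ1 : 2 ≤ 2 ^ l := by
    calc 2 = 2 ^ 1 := (pow_one 2).symm
    _ ≤ 2 ^ l := Nat.pow_le_pow_right (by norm_num) hl0
  have hM0 : 2 ^ l - 1 ≠ 0 := by omega
  have he0 : 0 < 2 ^ d - 1 := by
    have : 2 ≤ 2 ^ d := by
      calc 2 = 2 ^ 1 := (pow_one 2).symm
      _ ≤ 2 ^ d := Nat.pow_le_pow_right (by norm_num) hd0
    omega
  -- characteristic 2
  obtain ⟨p, hp⟩ := CharP.exists F
  haveI := hp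
  obtain ⟨m, hpprime, hcard⟩ := FiniteField.card F p
  have hp2 : p = 2 := by
    have h1 : p ∣ 2 ^ k := by
      rw [← hF, hcard]
      exact dvd_pow_self p m.ne_zero
    have h2 : p ∣ 2 := hpprime.dvd_of_dvd_pow h1
    exact (Nat.prime_dvd_prime_iff_eq hpprime Nat.prime_two).1 h2
  subst hp2
  haveI : Fact (Nat.Prime 2) := ⟨Nat.prime_two⟩
  have htwo : (2 : F) = 0 := CharP.cast_eq_zero F 2
  have hfrob : ∀ x y : F, (x + y) ^ 2 ^ l = x ^ 2 ^ l + y ^ 2 ^ l := by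
    intro x y
    exact add_pow_char_pow x y 2 l
  set S := Finset.univ.filter (fun x : F => x ^ (2 ^ l + 1) + x + a = 0) with hSdef
  rcases Finset.eq_empty_or_nonempty S with hSe | ⟨x1, hx1S⟩
  · simp [hSe]
  have hx1 : x1 ^ 2 ^ l * x1 + x1 + a = 0 := by
    have h := (Finset.mem_filter.1 hx1S).2
    rw [pow_succ] at h
    exact h
  have hx1ne : x1 ≠ 0 := by
    intro h
    rw [h] at hx1
    simp at hx1
    exact ha hx1
  set W := Finset.univ.filter
      (fun w : F => (x1 ^ 2 ^ l + 1) * w ^ 2 ^ l + x1 * w = 1) with hWdef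
  -- S.card = W.card + 1, via the bijection x ↦ (x + x1)⁻¹
  have hScard : S.card = W.card + 1 := by
    rw [← Finset.card_erase_add_one hx1S]
    congr 1
    apply Finset.card_nbij' (fun x => (x + x1)⁻¹) (fun w => w⁻¹ + x1)
    · intro x hx
      rw [Finset.mem_coe, Finset.mem_erase] at hx
      obtain ⟨hxne, hxS⟩ := hx
      have hxroot : x ^ 2 ^ l * x + x + a = 0 := by
        have h := (Finset.mem_filter.1 hxS).2
        rw [pow_succ] at h
        exact h
      have hu : x + x1 ≠ 0 := by
        intro h
        apply hxne
        linear_combination h - CharTwo.add_self_eq_zero x1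
      rw [Finset.mem_coe, Finset.mem_filter]
      refine ⟨Finset.mem_univ _, ?_⟩
      have huQ : (x + x1) ^ 2 ^ l ≠ 0 := pow_ne_zero _ hu
      have hfr : (x + x1) ^ 2 ^ l = x ^ 2 ^ l + x1 ^ 2 ^ l := hfrob x x1
      have hinv : (x + x1)⁻¹ * (x + x1) = 1 := inv_mul_cancel₀ hu
      have hinvQ : ((x + x1)⁻¹) ^ 2 ^ l * (x + x1) ^ 2 ^ l = 1 := by
        rw [← mul_pow, hinv, one_pow]
      show (x1 ^ 2 ^ l + 1) * ((x + x1)⁻¹) ^ 2 ^ l + x1 * (x + x1)⁻¹ = 1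
      apply mul_right_cancel₀ (mul_ne_zero huQ hu)
      linear_combination ((x1 ^ 2 ^ l + 1) * (x + x1)) * hinvQ
        + (x1 * (x + x1) ^ 2 ^ l) * hinv - x * hfr + hx1 - hxroot + x * htwo
    · intro w hw
      rw [Finset.mem_coe, Finset.mem_filter] at hw
      have hweq : (x1 ^ 2 ^ l + 1) * w ^ 2 ^ l + x1 * w = 1 := hw.2
      have hwne : w ≠ 0 := by
        intro h
        rw [h, zero_pow (by omega : 2 ^ l ≠ 0), mul_zero, mul_zero, add_zero] at hweq
        exact one_ne_zero hweq.symm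
      have hinv : w * w⁻¹ = 1 := mul_inv_cancel₀ hwne
      have hinvQ : w ^ 2 ^ l * (w⁻¹) ^ 2 ^ l = 1 := by
        rw [← mul_pow, hinv, one_pow]
      have hfr2 : (w⁻¹ + x1) ^ 2 ^ l = (w⁻¹) ^ 2 ^ l + x1 ^ 2 ^ l := hfrob _ _
      rw [Finset.mem_coe, Finset.mem_erase]
      constructor
      · intro h
        have h0 : w⁻¹ = 0 := by linear_combination h
        exact hwne (inv_eq_zero.1 h0)
      · rw [Finset.mem_filter]
        refine ⟨Finset.mem_univ _, ?_⟩
        show (w⁻¹ + x1) ^ (2 ^ l + 1) + (w⁻¹ + x1) + a = 0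
        rw [pow_succ]
        linear_combination (w⁻¹ + x1) * hfr2 + hx1 + ((w⁻¹) ^ 2 ^ l * w⁻¹) * hweq
          + ((x1 ^ 2 ^ l + 1) * w⁻¹) * hinvQ + (x1 * (w⁻¹) ^ 2 ^ l) * hinv
          + (x1 ^ 2 ^ l * w⁻¹ + w⁻¹ + x1 * (w⁻¹) ^ 2 ^ l
            - w * w⁻¹ * (w⁻¹) ^ 2 ^ l * x1 - w ^ 2 ^ l * w⁻¹ * (w⁻¹) ^ 2 ^ l
            - w ^ 2 ^ l * w⁻¹ * (w⁻¹) ^ 2 ^ l * x1 ^ 2 ^ l + w⁻¹ * (w⁻¹) ^ 2 ^ l) * htwo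
    · intro x hx
      have h1 : x1 + x1 = 0 := CharTwo.add_self_eq_zero x1
      beta_reduce
      rw [inv_inv]
      linear_combination h1
    · intro w hw
      have h1 : x1 + x1 = 0 := CharTwo.add_self_eq_zero x1
      have h2 : w⁻¹ + x1 + x1 = w⁻¹ := by linear_combination h1
      beta_reduce
      rw [h2, inv_inv]
  -- the kernel of the linearized map
  set K := Finset.univ.filter
      (fun w : F => (x1 ^ 2 ^ l + 1) * w ^ 2 ^ l + x1 * w = 0) with hKdef
  have hKcard : K.card = 1 ∨ K.card = 2 ^ d := by
    by_cases hc0 : x1 ^ 2 ^ l + 1 = 0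
    · left
      have : K = {0} := by
        ext w
        rw [hKdef, Finset.mem_filter, Finset.mem_singleton]
        constructor
        · rintro ⟨-, h⟩
          rw [hc0, zero_mul, zero_add] at h
          exact (mul_eq_zero.1 h).resolve_left hx1ne
        · rintro rfl
          refine ⟨Finset.mem_univ _, ?_⟩
          rw [zero_pow (by omega : 2 ^ l ≠ 0), mul_zero, mul_zero, add_zero]
      rw [this, Finset.card_singleton]
    · -- nonzero kernel elements satisfy w^(2^l-1) = b
      set b := x1 / (x1 ^ 2 ^ l + 1) with hbdef
      have hb : b ≠ 0 := div_ne_zero hx1ne hc0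
      set T' := Finset.univ.filter (fun w : F => w ^ (2 ^ l - 1) = b) with hT'def
      have hKeq : K = insert (0 : F) T' := by
        ext w
        rw [hKdef, hT'def, Finset.mem_insert, Finset.mem_filter, Finset.mem_filter]
        constructor
        · rintro ⟨-, h⟩
          rcases eq_or_ne w 0 with rfl | hwne
          · exact Or.inl rfl
          · right
            refine ⟨Finset.mem_univ _, ?_⟩
            have hsplit : w ^ 2 ^ l = w ^ (2 ^ l - 1) * w := by
              rw [← pow_succ]
              congr 1
              omega
            rw [hbdef, eq_div_iff hc0]
            apply mul_right_cancel₀ hwne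
            rw [hsplit] at h
            linear_combination h - x1 * w * htwo
        · rintro (rfl | ⟨-, h⟩)
          · refine ⟨Finset.mem_univ _, ?_⟩
            rw [zero_pow (by omega : 2 ^ l ≠ 0), mul_zero, mul_zero, add_zero]
          · refine ⟨Finset.mem_univ _, ?_⟩
            have hsplit : w ^ 2 ^ l = w ^ (2 ^ l - 1) * w := by
              rw [← pow_succ]
              congr 1
              omega
            have hb' : w ^ (2 ^ l - 1) * (x1 ^ 2 ^ l + 1) = x1 := by
              rw [h, hbdef, div_mul_cancel₀ _ hc0]
            rw [hsplit]
            linear_combination w * hb' + x1 * w * htwo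
      have h0T' : (0 : F) ∉ T' := by
        rw [hT'def, Finset.mem_filter]
        rintro ⟨-, h⟩
        rw [zero_pow hM0] at h
        exact hb h.symm
      rw [hKeq, Finset.card_insert_of_notMem h0T']
      -- count T'
      rcases Finset.eq_empty_or_nonempty T' with hTe | ⟨w0, hw0⟩
      · left; rw [hTe]; simp
      · right
        have hw0eq : w0 ^ (2 ^ l - 1) = b := (Finset.mem_filter.1 hw0).2
        have hw0ne : w0 ≠ 0 := by
          rintro rfl
          rw [zero_pow hM0] at hw0eq
          exact hb hw0eq.symm
        have hgcdeq : Nat.gcd (2 ^ l - 1) (2 ^ k - 1) = 2 ^ d - 1 := by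
          rw [gcd_two_pow_sub_one, hd]
        have hedvdM : 2 ^ d - 1 ∣ 2 ^ l - 1 := hgcdeq ▸ Nat.gcd_dvd_left _ _
        have hedvdq : 2 ^ d - 1 ∣ 2 ^ k - 1 := hgcdeq ▸ Nat.gcd_dvd_right _ _
        have hT'card : T'.card
            = (Finset.univ.filter (fun u : F => u ^ (2 ^ l - 1) = 1)).card := by
          apply Finset.card_nbij' (fun w => w * w0⁻¹) (fun u => u * w0)
          · intro w hw
            rw [Finset.mem_coe, hT'def, Finset.mem_filter] at hw
            rw [Finset.mem_coe, Finset.mem_filter]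
            refine ⟨Finset.mem_univ _, ?_⟩
            rw [mul_pow, inv_pow, hw0eq, hw.2, mul_inv_cancel₀ hb]
          · intro u hu
            rw [Finset.mem_coe, Finset.mem_filter] at hu
            rw [Finset.mem_coe, hT'def, Finset.mem_filter]
            refine ⟨Finset.mem_univ _, ?_⟩
            rw [mul_pow, hu.2, one_mul, hw0eq]
          · intro w _
            field_simp
          · intro u _
            field_simp
        have hTeq : (Finset.univ.filter (fun u : F => u ^ (2 ^ l - 1) = 1))
            = (Finset.univ.filter (fun u : F => u ^ (2 ^ d - 1) = 1)) := by
          ext u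
          rw [Finset.mem_filter, Finset.mem_filter]
          constructor
          · rintro ⟨-, h⟩
            refine ⟨Finset.mem_univ _, ?_⟩
            have hune : u ≠ 0 := by
              rintro rfl
              rw [zero_pow hM0] at h
              exact one_ne_zero h.symm
            have hq : u ^ (2 ^ k - 1) = 1 := by
              have := FiniteField.pow_card_sub_one_eq_one u hune
              rwa [hF] at this
            have := pow_gcd_eq_one.2 ⟨h, hq⟩
            rwa [hgcdeq] at this
          · rintro ⟨-, h⟩
            refine ⟨Finset.mem_univ _, ?_⟩
            obtain ⟨t, ht⟩ := hedvdM
            rw [ht, pow_mul, h, one_pow]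
        have hcount : (Finset.univ.filter (fun u : F => u ^ (2 ^ d - 1) = 1)).card
            = 2 ^ d - 1 := by
          apply card_pow_eq_one_finField F he0
          rw [hF]
          exact hedvdq
        rw [hT'card, hTeq, hcount]
        have : 1 ≤ 2 ^ d := Nat.one_le_two_pow
        omega
  -- put it together
  have haff := affine_fiber_card (fun w : F => (x1 ^ 2 ^ l + 1) * w ^ 2 ^ l + x1 * w)
      (by
        intro x y
        have := hfrob x y
        linear_combination (x1 ^ 2 ^ l + 1) * this) 1
  have haff' : W.card = 0 ∨ W.card = K.card := haff
  rcases haff' with hW0 | hWK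
  · have hS1 : S.card = 1 := by omega
    simp [hS1]
  · rcases hKcard with h | h
    · have hS2 : S.card = 2 := by omega
      simp [hS2]
    · have hS3 : S.card = 2 ^ d + 1 := by omega
      simp [hS3]
end

section
/- Let l < k with gcd(l,k) = d, k = n d, n > 1, and a in GF(2^k)*. Then P_a(x) = x^{2^l+1}+x+a has exactly two zeros in GF(2^k) if and only if Z_n(a) != 0 and Tr_d(N^k_d(a)/Z_n(a)^2) = 0, where Tr_d is the absolute trace of GF(2^d) and N^k_d is the norm from GF(2^k) to GF(2^d). -/
open Finset Polynomial
set_option linter.unusedSectionVars false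
set_option linter.unusedVariables false
set_option maxHeartbeats 1000000

section Generic

variable {F : Type*} [Field F] (l : ℕ) (u : F)

lemma HKpp (x : F) (A B : ℕ) : (x ^ (2 ^ A)) ^ (2 ^ B) = x ^ (2 ^ (A + B)) := by
  rw [← pow_mul, ← pow_add]

lemma HKfrob [CharP F 2] (x y : F) (m : ℕ) :
    (x + y) ^ (2 ^ m) = x ^ (2 ^ m) + y ^ (2 ^ m) := by
  haveI : Fact (Nat.Prime 2) := ⟨Nat.prime_two⟩
  exact add_pow_char_pow x y 2 m

lemma HKtop (m : ℕ) :
    Cseq l u (m + 2) = Cseq l u (m + 1) + u ^ (2 ^ (m * l)) * Cseq l u m := by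
  match m with
  | 0 => simp [Cseq]
  | (i + 1) => rfl

lemma HKbot [CharP F 2] (m : ℕ) :
    Cseq l u (m + 2) = (Cseq l u (m + 1)) ^ (2 ^ l)
      + u ^ (2 ^ l) * (Cseq l u m) ^ (2 ^ (2 * l)) := by
  induction m using Nat.twoStepInduction with
  | zero => simp [Cseq]
  | one =>
      show Cseq l u 3 = _
      rw [HKtop l u 1]
      simp [Cseq, HKfrob, one_mul, one_pow]
  | more m ih0 ih1 =>
      have t2 := HKtop l u (m + 2)
      have t1 := HKtop l u (m + 1)
      have t0 := HKtop l u m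
      have e1 : (Cseq l u (m + 3)) ^ (2 ^ l)
          = (Cseq l u (m + 2)) ^ (2 ^ l)
            + u ^ (2 ^ ((m + 2) * l)) * (Cseq l u (m + 1)) ^ (2 ^ l) := by
        rw [t1, HKfrob, mul_pow, HKpp]
        congr 3
        ring
      have e0 : (Cseq l u (m + 2)) ^ (2 ^ (2 * l))
          = (Cseq l u (m + 1)) ^ (2 ^ (2 * l))
            + u ^ (2 ^ ((m + 2) * l)) * (Cseq l u m) ^ (2 ^ (2 * l)) := by
        rw [t0, HKfrob, mul_pow, HKpp]
        congr 3
        ring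
      show Cseq l u (m + 4) = _
      linear_combination t2 + ih1 + u ^ (2 ^ ((m + 2) * l)) * ih0 - e1 - u ^ (2 ^ l) * e0

lemma HKdet [CharP F 2] (m : ℕ) :
    Cseq l u (m + 2) * (Cseq l u m) ^ (2 ^ l)
      + (Cseq l u (m + 1)) ^ (2 ^ l + 1)
      = ∏ j ∈ range m, u ^ (2 ^ ((j + 1) * l)) := by
  induction m with
  | zero => simp [Cseq]
  | succ m ih =>
      have t1 := HKtop l u (m + 1)
      have e1 : (Cseq l u (m + 2)) ^ (2 ^ l)
          = (Cseq l u (m + 1)) ^ (2 ^ l)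
            + u ^ (2 ^ ((m + 1) * l)) * (Cseq l u m) ^ (2 ^ l) := by
        rw [HKtop l u m, HKfrob, mul_pow, HKpp]
        congr 3
        ring
      have h2 : (2 : F) = 0 := CharTwo.two_eq_zero
      rw [prod_range_succ, ← ih]
      linear_combination t1 * (Cseq l u (m + 1)) ^ (2 ^ l)
        + e1 * Cseq l u (m + 2)
        + h2 * (Cseq l u (m + 2) * (Cseq l u (m + 1)) ^ (2 ^ l))

end Generic

open Polynomial
set_option linter.unusedSectionVars false
set_option maxHeartbeats 1000000

section Count
variable {F : Type*} [Field F] [Fintype F] [DecidableEq F]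

lemma HKpoly_count (m : ℕ) (hm : m ≠ 0) (c : F) :
    (univ.filter fun x : F => x ^ m = c).card ≤ m := by
  have hp : (X ^ m - C c : F[X]).Monic := monic_X_pow_sub_C c hm
  calc (univ.filter fun x : F => x ^ m = c).card
      ≤ (X ^ m - C c : F[X]).roots.toFinset.card := by
        apply card_le_card
        intro x hx
        simp only [mem_filter, mem_univ, true_and] at hx
        rw [Multiset.mem_toFinset, mem_roots']
        exact ⟨hp.ne_zero, by simp [IsRoot, hx]⟩
    _ ≤ Multiset.card (X ^ m - C c : F[X]).roots := Multiset.toFinset_card_le _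
    _ ≤ (X ^ m - C c : F[X]).natDegree := card_roots' _
    _ = m := natDegree_X_pow_sub_C

lemma HKtrace_bound (d : ℕ) (hd : d ≠ 0) :
    (univ.filter fun x : F => ∑ i ∈ range d, x ^ (2 ^ i) = 0).card ≤ 2 ^ (d - 1) := by
  set p : F[X] := ∑ i ∈ range d, X ^ (2 ^ i) with hpdef
  have hcoeff : p.coeff (2 ^ (d - 1)) = 1 := by
    rw [hpdef, finset_sum_coeff]
    rw [Finset.sum_eq_single_of_mem (d - 1) (by simp; omega)]
    · simp [coeff_X_pow]
    · intro i hi hne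
      rw [coeff_X_pow, if_neg]
      intro h
      exact hne (Nat.pow_right_injective le_rfl h.symm)
  have hne : p ≠ 0 := fun h => by simp [h] at hcoeff
  have hdeg : p.natDegree ≤ 2 ^ (d - 1) := by
    refine natDegree_sum_le_of_forall_le _ _ ?_
    intro i hi
    rw [natDegree_X_pow]
    exact Nat.pow_le_pow_right (by norm_num) (by simp at hi; omega)
  calc (univ.filter fun x : F => ∑ i ∈ range d, x ^ (2 ^ i) = 0).card
      ≤ p.roots.toFinset.card := by
        apply card_le_card
        intro x hx
        simp only [mem_filter, mem_univ, true_and] at hx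
        rw [Multiset.mem_toFinset, mem_roots']
        refine ⟨hne, ?_⟩
        simp [IsRoot, hpdef, eval_finset_sum, hx]
    _ ≤ Multiset.card p.roots := Multiset.toFinset_card_le _
    _ ≤ p.natDegree := card_roots' _
    _ ≤ 2 ^ (d - 1) := hdeg

lemma HKfix_iter (x : F) (m : ℕ) (h : x ^ (2 ^ m) = x) : ∀ t, x ^ (2 ^ (m * t)) = x := by
  intro t
  induction t with
  | zero => simp
  | succ t ih =>
      have h2 : x ^ (2 ^ (m * t + m)) = x := by
        rw [← HKpp x (m * t) m, ih, h]
      rwa [show m * (t + 1) = m * t + m by ring]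

lemma HKfix_gcd (l : ℕ) : ∀ (k : ℕ) (x : F), x ^ (2 ^ l) = x → x ^ (2 ^ k) = x →
    x ^ (2 ^ (Nat.gcd l k)) = x := by
  induction l using Nat.strong_induction_on with
  | _ l ih =>
    intro k x hl hk
    rcases Nat.eq_zero_or_pos l with h0 | hpos
    · subst h0; rwa [Nat.gcd_zero_left]
    · rw [Nat.gcd_rec l k]
      refine ih (k % l) (Nat.mod_lt k hpos) l x ?_ hl
      calc x ^ (2 ^ (k % l)) = (x ^ (2 ^ (l * (k / l)))) ^ (2 ^ (k % l)) := by
            rw [HKfix_iter x l hl (k / l)]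
        _ = x ^ (2 ^ (l * (k / l) + k % l)) := HKpp _ _ _
        _ = x := by rw [Nat.div_add_mod]; exact hk

lemma HKcardG (k : ℕ) (hF : Fintype.card F = 2 ^ k) :
    (univ.filter fun x : F => x ≠ 0).card = 2 ^ k - 1 := by
  rw [filter_ne', card_erase_of_mem (mem_univ 0), card_univ, hF]

lemma HKpowim (k d l S : ℕ) (hF : Fintype.card F = 2 ^ k) (hk : k ≠ 0)
    (hgcd : Nat.gcd l k = d) (hd : d ≠ 0) (hdl : d ∣ l)
    (hS : (2 ^ d - 1) * S + 1 = 2 ^ k)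
    (r : F) (hr : r ≠ 0) (hrS : r ^ S = 1) :
    ∃ z : F, z ≠ 0 ∧ z ^ (2 ^ l - 1) = r := by
  have h2d : (2:ℕ) ≤ 2 ^ d := by
    calc (2:ℕ) = 2 ^ 1 := (pow_one 2).symm
    _ ≤ 2 ^ d := Nat.pow_le_pow_right (by norm_num) (by omega)
  have h2k : (2:ℕ) ≤ 2 ^ k := by
    calc (2:ℕ) = 2 ^ 1 := (pow_one 2).symm
    _ ≤ 2 ^ k := Nat.pow_le_pow_right (by norm_num) (by omega)
  have h2d1 : 2 ^ d - 1 ≠ 0 := by omega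
  have hSne : S ≠ 0 := by rintro rfl; omega
  have hprod : (2 ^ d - 1) * S = 2 ^ k - 1 := by omega
  have powk : ∀ x : F, x ^ (2 ^ k) = x := by
    intro x; have h := FiniteField.pow_card x; rwa [hF] at h
  have hcard1 : ∀ x : F, x ≠ 0 → x ^ (2 ^ k - 1) = 1 := by
    intro x hx; have h := FiniteField.pow_card_sub_one_eq_one x hx; rwa [hF] at h
  classical
  set G := univ.filter (fun x : F => x ≠ 0) with hG
  have hGcard : G.card = 2 ^ k - 1 := HKcardG k hF
  have hKER : (univ.filter fun c : F => c ^ (2 ^ d - 1) = 1).card ≤ 2 ^ d - 1 :=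
    HKpoly_count _ h2d1 1
  have hfib : ∀ b ∈ G.image (fun x => x ^ (2 ^ l - 1)),
      (G.filter fun x => x ^ (2 ^ l - 1) = b).card ≤ 2 ^ d - 1 := by
    intro b hb
    obtain ⟨x0, hx0G, hx0⟩ := mem_image.mp hb
    have hx0ne : x0 ≠ 0 := by
      have := mem_filter.mp hx0G; exact this.2
    have hbne : b ≠ 0 := by rw [← hx0]; exact pow_ne_zero _ hx0ne
    refine le_trans (Finset.card_le_card_of_injOn (fun u => u * x0⁻¹) ?_ ?_) hKER
    · intro u hu
      rw [mem_coe, mem_filter] at hu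
      have hune : u ≠ 0 := (mem_filter.mp hu.1).2
      have huf : u ^ (2 ^ l - 1) = b := hu.2
      set c := u * x0⁻¹ with hc
      have hcne : c ≠ 0 := mul_ne_zero hune (inv_ne_zero hx0ne)
      have hc1 : c ^ (2 ^ l - 1) = 1 := by
        rw [hc, mul_pow, inv_pow, huf, hx0, mul_inv_cancel₀ hbne]
      have hcl : c ^ (2 ^ l) = c := by
        have e : 2 ^ l = (2 ^ l - 1) + 1 := by
          have : (1:ℕ) ≤ 2 ^ l := Nat.one_le_two_pow
          omega
        rw [e, pow_succ, hc1, one_mul]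
      have hcd : c ^ (2 ^ d) = c := by
        rw [← hgcd]; exact HKfix_gcd l k c hcl (powk c)
      have : c ^ (2 ^ d - 1) = 1 := by
        have e : 2 ^ d = (2 ^ d - 1) + 1 := by omega
        rw [e, pow_succ] at hcd
        exact mul_right_cancel₀ hcne (by rw [hcd, one_mul])
      simp only [coe_filter, mem_univ, true_and]
      exact this
    · intro u hu u' hu' h
      exact mul_right_cancel₀ (inv_ne_zero hx0ne) h
  have hGle : G.card ≤ (2 ^ d - 1) * (G.image (fun x => x ^ (2 ^ l - 1))).card :=
    Finset.card_le_mul_card_image _ _ hfib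
  obtain ⟨l1, hl1⟩ := hdl
  have hdvd : (2 ^ d - 1) ∣ (2 ^ l - 1) := by
    rw [hl1, pow_mul]
    have := Nat.sub_dvd_pow_sub_pow (2 ^ d) 1 l1
    simpa using this
  obtain ⟨M, hM⟩ := hdvd
  have himgMU : G.image (fun x => x ^ (2 ^ l - 1)) ⊆ univ.filter (fun x : F => x ^ S = 1) := by
    intro b hb
    obtain ⟨x, hxG, rfl⟩ := mem_image.mp hb
    have hxne : x ≠ 0 := (mem_filter.mp hxG).2
    simp only [mem_filter, mem_univ, true_and]
    rw [← pow_mul]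
    have e : (2 ^ l - 1) * S = (2 ^ k - 1) * M := by
      rw [hM, ← hprod]; ring
    rw [e, pow_mul, hcard1 x hxne, one_pow]
  have hMU : (univ.filter fun x : F => x ^ S = 1).card ≤ S := HKpoly_count S hSne 1
  have himgcard : S ≤ (G.image (fun x => x ^ (2 ^ l - 1))).card := by
    rw [hGcard, ← hprod] at hGle
    exact Nat.le_of_mul_le_mul_left hGle (by omega)
  have heq : G.image (fun x => x ^ (2 ^ l - 1)) = univ.filter (fun x : F => x ^ S = 1) :=
    eq_of_subset_of_card_le himgMU (le_trans hMU himgcard)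
  have hrmem : r ∈ univ.filter (fun x : F => x ^ S = 1) := by
    simp only [mem_filter, mem_univ, true_and]; exact hrS
  rw [← heq] at hrmem
  obtain ⟨z, hzG, hz⟩ := mem_image.mp hrmem
  exact ⟨z, (mem_filter.mp hzG).2, hz⟩

end Count

section H90
variable {F : Type*} [Field F] [Fintype F] [DecidableEq F] [CharP F 2]

lemma HKh90 (k d S : ℕ) (hF : Fintype.card F = 2 ^ k) (hk : k ≠ 0) (hd : d ≠ 0)
    (hS : (2 ^ d - 1) * S + 1 = 2 ^ k)
    (t : F) (ht : t ^ (2 ^ d) = t) (htr : ∑ i ∈ range d, t ^ (2 ^ i) = 0) :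
    ∃ v : F, v ^ (2 ^ d) = v ∧ v ^ 2 + v = t := by
  have h2d : (2:ℕ) ≤ 2 ^ d := by
    calc (2:ℕ) = 2 ^ 1 := (pow_one 2).symm
    _ ≤ 2 ^ d := Nat.pow_le_pow_right (by norm_num) (by omega)
  have h2k : (2:ℕ) ≤ 2 ^ k := by
    calc (2:ℕ) = 2 ^ 1 := (pow_one 2).symm
    _ ≤ 2 ^ k := Nat.pow_le_pow_right (by norm_num) (by omega)
  have h2d1 : 2 ^ d - 1 ≠ 0 := by omega
  have hSne : S ≠ 0 := by rintro rfl; omega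
  have hprod : (2 ^ d - 1) * S = 2 ^ k - 1 := by omega
  have hcard1 : ∀ x : F, x ≠ 0 → x ^ (2 ^ k - 1) = 1 := by
    intro x hx; have h := FiniteField.pow_card_sub_one_eq_one x hx; rwa [hF] at h
  classical
  set Kf := univ.filter (fun v : F => v ^ (2 ^ d) = v) with hKf
  -- upper bound on Kf.card
  have hKER : (univ.filter fun c : F => c ^ (2 ^ d - 1) = 1).card ≤ 2 ^ d - 1 :=
    HKpoly_count _ h2d1 1
  have hup : Kf.card ≤ 2 ^ d := by
    have hsub : Kf ⊆ insert (0:F) (univ.filter fun c : F => c ^ (2 ^ d - 1) = 1) := by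
      intro v hv
      have hvd : v ^ (2 ^ d) = v := (mem_filter.mp hv).2
      by_cases hv0 : v = 0
      · rw [hv0]; exact mem_insert_self _ _
      · apply mem_insert_of_mem
        simp only [mem_filter, mem_univ, true_and]
        have e : 2 ^ d = (2 ^ d - 1) + 1 := by omega
        rw [e, pow_succ] at hvd
        exact mul_right_cancel₀ hv0 (by rw [hvd, one_mul])
    calc Kf.card ≤ _ := card_le_card hsub
      _ ≤ (univ.filter fun c : F => c ^ (2 ^ d - 1) = 1).card + 1 := card_insert_le _ _
      _ ≤ 2 ^ d := by omega
  -- lower bound on Kf.card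
  set G := univ.filter (fun x : F => x ≠ 0) with hG
  have hGcard : G.card = 2 ^ k - 1 := HKcardG k hF
  have hS2d : S * 2 ^ d = (2 ^ k - 1) + S := by
    have e : (2:ℕ) ^ d = (2 ^ d - 1) + 1 := by omega
    calc S * 2 ^ d = S * ((2 ^ d - 1) + 1) := by rw [← e]
      _ = S * (2 ^ d - 1) + S := by ring
      _ = (2 ^ k - 1) + S := by rw [mul_comm S, hprod]
  have hmemKf : ∀ x : F, x ≠ 0 → (x ^ S) ^ (2 ^ d) = x ^ S := by
    intro x hx
    rw [← pow_mul, hS2d, pow_add, hcard1 x hx, one_mul]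
  have h0notin : (0:F) ∉ G.image (fun x => x ^ S) := by
    intro h
    obtain ⟨x, hxG, hx⟩ := mem_image.mp h
    exact pow_ne_zero S ((mem_filter.mp hxG).2) hx
  have hsub2 : insert (0:F) (G.image (fun x => x ^ S)) ⊆ Kf := by
    intro b hb
    rcases mem_insert.mp hb with rfl | hb
    · simp only [hKf, mem_filter, mem_univ, true_and]
      exact zero_pow (by positivity)
    · obtain ⟨x, hxG, rfl⟩ := mem_image.mp hb
      simp only [hKf, mem_filter, mem_univ, true_and]
      exact hmemKf x ((mem_filter.mp hxG).2)
  have hfibS : ∀ b ∈ G.image (fun x => x ^ S), (G.filter fun x => x ^ S = b).card ≤ S := by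
    intro b hb
    calc (G.filter fun x => x ^ S = b).card
        ≤ (univ.filter fun x : F => x ^ S = b).card := by
          apply card_le_card
          intro x hx
          simp only [mem_filter, mem_univ, true_and]
          exact (mem_filter.mp hx).2
      _ ≤ S := HKpoly_count S hSne b
  have hGle : G.card ≤ S * (G.image (fun x => x ^ S)).card :=
    Finset.card_le_mul_card_image _ _ hfibS
  have himgN : 2 ^ d - 1 ≤ (G.image (fun x => x ^ S)).card := by
    rw [hGcard, ← hprod, mul_comm] at hGle
    exact Nat.le_of_mul_le_mul_left hGle (by omega)
  have hlow : 2 ^ d ≤ Kf.card := by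
    calc 2 ^ d = (2 ^ d - 1) + 1 := by omega
      _ ≤ (G.image (fun x => x ^ S)).card + 1 := by omega
      _ = (insert (0:F) (G.image (fun x => x ^ S))).card := (card_insert_of_notMem h0notin).symm
      _ ≤ Kf.card := card_le_card hsub2
  have hKfcard : Kf.card = 2 ^ d := le_antisymm hup hlow
  -- the squaring map on Kf
  have hfrob2 : ∀ x y : F, (x + y) ^ 2 = x ^ 2 + y ^ 2 := by
    intro x y
    have := HKfrob (F := F) x y 1
    simpa using this
  have hfib2 : ∀ b ∈ Kf.image (fun v => v ^ 2 + v),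
      (Kf.filter fun v => v ^ 2 + v = b).card ≤ 2 := by
    intro b hb
    obtain ⟨v0, hv0Kf, hv0⟩ := mem_image.mp hb
    have hsub3 : (Kf.filter fun v => v ^ 2 + v = b) ⊆ ({v0, v0 + 1} : Finset F) := by
      intro v hv
      have hvb : v ^ 2 + v = b := (mem_filter.mp hv).2
      have hw : (v + v0) ^ 2 = v + v0 := by
        rw [hfrob2]
        have h1 : v ^ 2 + v0 ^ 2 + (v + v0) = (v ^ 2 + v) + (v0 ^ 2 + v0) := by ring
        have h2 : (v ^ 2 + v) + (v0 ^ 2 + v0) = b + b := by rw [hvb, hv0]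
        have h3 : b + b = 0 := CharTwo.add_self_eq_zero b
        have h4 : v ^ 2 + v0 ^ 2 + (v + v0) = 0 := by rw [h1, h2, h3]
        have h5 : v ^ 2 + v0 ^ 2 = v + v0 := by
          have := CharTwo.add_self_eq_zero (v + v0)
          linear_combination h4 - this
        exact h5
      have h2 : (2:F) = 0 := CharTwo.two_eq_zero
      have hz : (v + v0) * ((v + v0) + 1) = 0 := by
        linear_combination hw + CharTwo.add_self_eq_zero (v + v0)
      rcases mul_eq_zero.mp hz with h | h
      · have : v = v0 := by linear_combination h - v0 * h2
        simp [this]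
      · have : v = v0 + 1 := by linear_combination h - (v0 + 1) * h2
        simp [this]
    calc (Kf.filter fun v => v ^ 2 + v = b).card ≤ ({v0, v0 + 1} : Finset F).card :=
          card_le_card hsub3
      _ ≤ 2 := card_insert_le _ _ |>.trans (by simp)
  have hKle : Kf.card ≤ 2 * (Kf.image (fun v => v ^ 2 + v)).card :=
    Finset.card_le_mul_card_image _ _ hfib2
  have himg2 : 2 ^ (d - 1) ≤ (Kf.image (fun v => v ^ 2 + v)).card := by
    have e : (2:ℕ) ^ d = 2 * 2 ^ (d - 1) := by
      rw [← pow_succ']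
      congr 1
      omega
    rw [hKfcard, e] at hKle
    exact Nat.le_of_mul_le_mul_left hKle (by norm_num)
  set T := univ.filter (fun s : F => s ^ (2 ^ d) = s ∧ ∑ i ∈ range d, s ^ (2 ^ i) = 0) with hT
  have himg2T : Kf.image (fun v => v ^ 2 + v) ⊆ T := by
    intro b hb
    obtain ⟨v, hvKf, rfl⟩ := mem_image.mp hb
    have hvd : v ^ (2 ^ d) = v := (mem_filter.mp hvKf).2
    simp only [hT, mem_filter, mem_univ, true_and]
    constructor
    · rw [HKfrob]
      rw [show (v ^ 2) ^ (2 ^ d) = (v ^ (2 ^ d)) ^ 2 by rw [← pow_mul, mul_comm, pow_mul]]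
      rw [hvd]
    · have hpt : ∀ i, (v ^ 2 + v) ^ (2 ^ i) = v ^ (2 ^ (i + 1)) - v ^ (2 ^ i) := by
        intro i
        rw [HKfrob, CharTwo.sub_eq_add]
        congr 1
        rw [← pow_mul, show 2 * 2 ^ i = 2 ^ (i + 1) by rw [pow_succ']]
      calc ∑ i ∈ range d, (v ^ 2 + v) ^ (2 ^ i)
          = ∑ i ∈ range d, (v ^ (2 ^ (i + 1)) - v ^ (2 ^ i)) := by
            apply Finset.sum_congr rfl; intro i _; exact hpt i
        _ = v ^ (2 ^ d) - v ^ (2 ^ 0) := sum_range_sub (fun i => v ^ (2 ^ i)) d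
        _ = 0 := by rw [hvd, pow_zero, pow_one, sub_self]
  have hTcard : T.card ≤ 2 ^ (d - 1) := by
    calc T.card ≤ (univ.filter fun x : F => ∑ i ∈ range d, x ^ (2 ^ i) = 0).card := by
          apply card_le_card
          intro s hs
          simp only [hT, mem_filter, mem_univ, true_and] at hs
          simp only [mem_filter, mem_univ, true_and]
          exact hs.2
      _ ≤ 2 ^ (d - 1) := HKtrace_bound d hd
  have heq : Kf.image (fun v => v ^ 2 + v) = T :=
    eq_of_subset_of_card_le himg2T (le_trans hTcard himg2)
  have htmem : t ∈ T := by
    simp only [hT, mem_filter, mem_univ, true_and]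
    exact ⟨ht, htr⟩
  rw [← heq] at htmem
  obtain ⟨v, hvKf, hv⟩ := mem_image.mp htmem
  exact ⟨v, (mem_filter.mp hvKf).2, hv⟩

end H90

section Aux

lemma HKmodinv (a n : ℕ) (h : Nat.Coprime a n) (hn : 1 < n) :
    ∃ b, (a * b) % n = 1 % n := by
  haveI : NeZero n := ⟨by omega⟩
  refine ⟨((a : ZMod n)⁻¹).val, ?_⟩
  have h1 : ((a : ZMod n)) * ((a : ZMod n)⁻¹) = 1 := ZMod.coe_mul_inv_eq_one a h
  have h2 : ((a * ((a : ZMod n)⁻¹).val : ℕ) : ZMod n) = ((1 : ℕ) : ZMod n) := by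
    push_cast
    rw [ZMod.natCast_val, ZMod.cast_id]
    exact h1
  exact (ZMod.natCast_eq_natCast_iff _ _ _).mp h2

lemma HKgeo (d : ℕ) : ∀ m : ℕ, (2 ^ d - 1) * (∑ j ∈ range m, 2 ^ (j * d)) + 1 = 2 ^ (m * d) := by
  intro m
  induction m with
  | zero => simp
  | succ m ih =>
      rw [sum_range_succ, show (m + 1) * d = m * d + d by ring, pow_add]
      have h1 : (1:ℕ) ≤ 2 ^ d := Nat.one_le_two_pow
      have h2 : (1:ℕ) ≤ 2 ^ (m * d) := Nat.one_le_two_pow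
      zify [h1] at ih ⊢
      linear_combination ih

lemma HKcharP {F : Type*} [Field F] [Fintype F] (k : ℕ) (hk : k ≠ 0)
    (hF : Fintype.card F = 2 ^ k) : CharP F 2 := by
  obtain ⟨p, hc⟩ := CharP.exists F
  haveI := hc
  have hprime : p.Prime := CharP.char_is_prime F p
  obtain ⟨m, hm1, hm2⟩ := FiniteField.card F p
  rw [hF] at hm2
  have hdvd : p ∣ 2 ^ k := by
    rw [hm2]
    exact dvd_pow_self p (by exact_mod_cast m.2.ne')
  have hp2 : p = 2 := (Nat.prime_dvd_prime_iff_eq hprime Nat.prime_two).mp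
    (hprime.dvd_of_dvd_pow hdvd)
  rwa [hp2] at hc

lemma HKtelescope {F : Type*} [Field F] [CharP F 2] (d : ℕ) (v : F) (hv : v ^ (2 ^ d) = v) :
    ∑ i ∈ range d, (v ^ 2 + v) ^ (2 ^ i) = 0 := by
  have hpt : ∀ i : ℕ, (v ^ 2 + v) ^ (2 ^ i) = v ^ (2 ^ (i + 1)) - v ^ (2 ^ i) := by
    intro i
    rw [HKfrob, CharTwo.sub_eq_add]
    congr 1
    rw [← pow_mul, show 2 * 2 ^ i = 2 ^ (i + 1) by rw [pow_succ']]
  calc ∑ i ∈ range d, (v ^ 2 + v) ^ (2 ^ i)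
      = ∑ i ∈ range d, (v ^ (2 ^ (i + 1)) - v ^ (2 ^ i)) := by
        exact Finset.sum_congr rfl (fun i _ => hpt i)
    _ = v ^ (2 ^ d) - v ^ (2 ^ 0) := sum_range_sub (fun i => v ^ (2 ^ i)) d
    _ = 0 := by rw [hv, pow_zero, pow_one, sub_self]

lemma HKperm {F : Type*} [Field F] [Fintype F] [DecidableEq F] (k d n l1 : ℕ)
    (hF : Fintype.card F = 2 ^ k) (hk : k = n * d) (hn : 1 < n)
    (hcop : Nat.Coprime l1 n) (x : F) :
    ∏ j ∈ range n, x ^ (2 ^ ((l1 * j) * d)) = ∏ j ∈ range n, x ^ (2 ^ (j * d)) := by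
  have hn0 : 0 < n := by omega
  obtain ⟨m1, hm1⟩ := HKmodinv l1 n hcop hn
  have hm1' : l1 * m1 ≡ 1 [MOD n] := hm1
  have powk : ∀ y : F, y ^ (2 ^ k) = y := fun y => by rw [← hF]; exact FiniteField.pow_card y
  have hred : ∀ m : ℕ, x ^ (2 ^ (m * d)) = x ^ (2 ^ (m % n * d)) := by
    intro m
    have e : m * d = k * (m / n) + m % n * d := by
      calc m * d = (n * (m / n) + m % n) * d := by rw [Nat.div_add_mod]
        _ = k * (m / n) + m % n * d := by rw [hk]; ring
    rw [e, ← HKpp, HKfix_iter x k (powk x) (m / n)]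
  have hmod2 : ∀ c b : ℕ, (c * (b % n)) % n = (c * b) % n := by
    intro c b
    conv_lhs => rw [Nat.mul_mod]
    conv_rhs => rw [Nat.mul_mod]
    rw [Nat.mod_mod_of_dvd _ (dvd_refl n)]
  have hinv1 : ∀ j, j < n → (m1 * ((l1 * j) % n)) % n = j := by
    intro j hj
    rw [hmod2]
    have : m1 * (l1 * j) ≡ 1 * j [MOD n] := by
      rw [show m1 * (l1 * j) = (l1 * m1) * j by ring]
      exact Nat.ModEq.mul_right j hm1'
    rw [Nat.ModEq] at this
    rw [this, one_mul, Nat.mod_eq_of_lt hj]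
  have hinv2 : ∀ j, j < n → (l1 * ((m1 * j) % n)) % n = j := by
    intro j hj
    rw [hmod2]
    have : l1 * (m1 * j) ≡ 1 * j [MOD n] := by
      rw [show l1 * (m1 * j) = (l1 * m1) * j by ring]
      exact Nat.ModEq.mul_right j hm1'
    rw [Nat.ModEq] at this
    rw [this, one_mul, Nat.mod_eq_of_lt hj]
  refine Finset.prod_nbij' (fun j => (l1 * j) % n) (fun j => (m1 * j) % n) ?_ ?_ ?_ ?_ ?_
  · intro j hj
    exact mem_range.mpr (Nat.mod_lt _ hn0)
  · intro j hj
    exact mem_range.mpr (Nat.mod_lt _ hn0)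
  · intro j hj
    exact hinv1 j (mem_range.mp hj)
  · intro j hj
    exact hinv2 j (mem_range.mp hj)
  · intro j hj
    exact hred (l1 * j)

end Aux

/-- `P_a` has exactly two zeros in `GF(2^k)` iff `Z_n(a) ≠ 0` and
`Tr_d(N^k_d(a)/Z_n(a)^2) = 0`, where `Tr_d` is the absolute trace of `GF(2^d)`
and `N^k_d` the norm from `GF(2^k)` to `GF(2^d)`. -/
theorem stmt_12 (k l d n : ℕ) (hlk : l < k) (hd : Nat.gcd l k = d) (hk : k = n * d)
    (hn : 1 < n)
    (F : Type*) [Field F] [Fintype F] [DecidableEq F] (hF : Fintype.card F = 2 ^ k)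
    (a : F) (ha : a ≠ 0) :
    (Finset.univ.filter (fun x : F => x ^ (2 ^ l + 1) + x + a = 0)).card = 2 ↔
      (Zseq l n a ≠ 0 ∧
        ∑ i ∈ Finset.range d,
          ((∏ j ∈ Finset.range n, a ^ (2 ^ (j * d))) / (Zseq l n a) ^ 2) ^ (2 ^ i) = 0) := by
  classical
  have hk0 : k ≠ 0 := by omega
  haveI hchar : CharP F 2 := HKcharP k hk0 hF
  have hch2 : (2:F) = 0 := CharTwo.two_eq_zero
  have hd0 : d ≠ 0 := by intro h; rw [h, mul_zero] at hk; exact hk0 hk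
  have hl0 : l ≠ 0 := by
    intro h
    rw [h, Nat.gcd_zero_left] at hd
    rw [← hd] at hk
    have h1 : 1 * k = n * k := by rw [one_mul, ← hk]
    have := Nat.eq_of_mul_eq_mul_right (Nat.pos_of_ne_zero hk0) h1
    omega
  obtain ⟨l1, hl1⟩ : d ∣ l := by rw [← hd]; exact Nat.gcd_dvd_left l k
  have hcop : Nat.Coprime l1 n := by
    have hgcd2 : Nat.gcd (d * l1) (d * n) = d * Nat.gcd l1 n := Nat.gcd_mul_left d l1 n
    rw [← hl1, show d * n = k from by rw [hk]; ring, hd] at hgcd2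
    have h1 : d * 1 = d * Nat.gcd l1 n := by rw [mul_one]; exact hgcd2
    have := Nat.eq_of_mul_eq_mul_left (Nat.pos_of_ne_zero hd0) h1
    exact (Nat.coprime_iff_gcd_eq_one.mpr this.symm)
  have powk : ∀ x : F, x ^ (2 ^ k) = x := fun x => by rw [← hF]; exact FiniteField.pow_card x
  have ha1 : a ^ (2 ^ k - 1) = 1 := by
    have h := FiniteField.pow_card_sub_one_eq_one a ha; rwa [hF] at h
  have powln : ∀ x : F, x ^ (2 ^ (n * l)) = x := by
    intro x
    have e : n * l = k * l1 := by rw [hl1, hk]; ring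
    rw [e]; exact HKfix_iter x k (powk x) l1
  set S := ∑ j ∈ Finset.range n, 2 ^ (j * d) with hSdef
  have hSk : (2 ^ d - 1) * S + 1 = 2 ^ k := by rw [hSdef, HKgeo d n, ← hk]
  have hperm : ∀ x : F, ∏ j ∈ Finset.range n, x ^ (2 ^ (j * l)) = x ^ S := by
    intro x
    calc ∏ j ∈ Finset.range n, x ^ (2 ^ (j * l))
        = ∏ j ∈ Finset.range n, x ^ (2 ^ ((l1 * j) * d)) := by
          refine Finset.prod_congr rfl (fun j _ => ?_)
          rw [show j * l = (l1 * j) * d from by rw [hl1]; ring]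
      _ = ∏ j ∈ Finset.range n, x ^ (2 ^ (j * d)) := HKperm k d n l1 hF hk hn hcop x
      _ = x ^ S := Finset.prod_pow_eq_pow_sum _ _ _
  have hNa : (∏ j ∈ Finset.range n, a ^ (2 ^ (j * d))) = a ^ S :=
    Finset.prod_pow_eq_pow_sum _ _ _
  rw [hNa]
  obtain ⟨m0, rfl⟩ : ∃ m0, n = m0 + 2 := ⟨n - 2, by omega⟩
  set Z := Zseq l (m0 + 2) a with hZs
  have hZeq : Z = Cseq l a (m0 + 3) + a * (Cseq l a (m0 + 1)) ^ (2 ^ l) := by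
    rw [hZs]
    show Zseq l (m0 + 2) a = _
    rw [Zseq]
    norm_num
  have htopn1 := HKtop l a (m0 + 1)
  have htopn := HKtop l a (m0 + 2)
  have hbotn1 := HKbot l a (m0 + 1)
  have hbotn := HKbot l a (m0 + 2)
  have hdetn := HKdet l a (m0 + 1)
  have haln : a ^ (2 ^ ((m0 + 2) * l)) = a := powln a
  have hE : (Cseq l a (m0+3))^(2^l) + (Cseq l a (m0+2))^(2^l)
      = a * (Cseq l a (m0+1))^(2^l) := by
    have hsum : Cseq l a (m0+3) + Cseq l a (m0+2)
        = a^(2^((m0+1)*l)) * Cseq l a (m0+1) := by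
      linear_combination htopn1 + hch2 * Cseq l a (m0+2)
    have h := congrArg (· ^ (2^l)) hsum
    rw [HKfrob, mul_pow, HKpp, show (m0+1)*l + l = (m0+2)*l by ring, haln] at h
    exact h
  have hZ' : Z = Cseq l a (m0+3) + (Cseq l a (m0+3))^(2^l) + (Cseq l a (m0+2))^(2^l) := by
    rw [hZeq]; linear_combination -hE
  have hZq : Z ^ (2^l) = Z := by
    rw [hZeq]
    rw [HKfrob, mul_pow, HKpp, show l + l = 2*l by ring]
    linear_combination hbotn1 + hE
      + hch2 * (a^(2^l) * (Cseq l a (m0+1))^(2^(2*l)) - Cseq l a (m0+3))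
  have hNeq : a * (Cseq l a (m0+3) * (Cseq l a (m0+1))^(2^l)
      + (Cseq l a (m0+2))^(2^l + 1)) = a ^ S := by
    rw [hdetn, ← hperm a, Finset.prod_range_succ' (fun j => a ^ (2 ^ (j * l))) (m0+1)]
    norm_num [mul_comm]
  have hCn0Z : Cseq l a (m0+2) = 0 → Z = 0 := by
    intro h0
    have h1 : Cseq l a (m0+4) = Cseq l a (m0+3) := by
      rw [htopn, h0, mul_zero, add_zero]
    have h2' : Cseq l a (m0+4) = (Cseq l a (m0+3))^(2^l) := by
      rw [hbotn, h0, zero_pow (by positivity), mul_zero, add_zero]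
    have h3 : Cseq l a (m0+3) = (Cseq l a (m0+3))^(2^l) := h1 ▸ h2'
    have h4 : a * (Cseq l a (m0+1))^(2^l) = Cseq l a (m0+3) := by
      have h5 := hE
      rw [h0, zero_pow (by positivity), add_zero] at h5
      rw [← h5, ← h3]
    rw [hZeq, ← h4]
    exact CharTwo.add_self_eq_zero _
  set R := Finset.filter (fun x : F => x ^ (2 ^ l + 1) + x + a = 0) Finset.univ with hRs
  have hmemR : ∀ x : F, x ∈ R ↔ x ^ (2^l + 1) + x + a = 0 := by
    intro x; rw [hRs]; simp
  have hrne : ∀ x ∈ R, x ≠ 0 := by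
    intro x hx h0
    rw [hmemR] at hx
    rw [h0, zero_pow (by positivity), add_zero, zero_add] at hx
    exact ha hx
  have hre : ∀ x ∈ R, x ^ (2^l) * x = x + a := by
    intro x hx
    rw [hmemR] at hx
    have e : x ^ (2^l + 1) = x ^ (2^l) * x := pow_succ x (2^l)
    linear_combination hx - e - hch2 * (x + a)
  have hw : ∀ x ∈ R, ∀ j : ℕ,
      Cseq l a (j+2) * x + a * (Cseq l a (j+1))^(2^l)
        = x * (Cseq l a (j+1) * x + a * (Cseq l a j)^(2^l))^(2^l) := by
    intro x hx j
    have hb := HKbot l a j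
    have hxr := hre x hx
    have e1 : (Cseq l a (j+1) * x + a * (Cseq l a j)^(2^l))^(2^l)
        = (Cseq l a (j+1))^(2^l) * x^(2^l) + a^(2^l) * (Cseq l a j)^(2^(2*l)) := by
      rw [HKfrob, mul_pow, mul_pow, HKpp, show l + l = 2*l by ring]
    rw [e1]
    linear_combination x * hb - (Cseq l a (j+1))^(2^l) * hxr
  have hwp : ∀ x ∈ R, ∀ i : ℕ,
      Cseq l a (i+1) * x + a * (Cseq l a i)^(2^l)
        = ∏ j ∈ Finset.range (i+1), x ^ (2^(j*l)) := by
    intro x hx i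
    induction i with
    | zero =>
        show Cseq l a 1 * x + a * (Cseq l a 0)^(2^l) = _
        rw [show (Cseq l a 0 : F) = 0 from rfl, show (Cseq l a 1 : F) = 1 from rfl]
        rw [zero_pow (by positivity), mul_zero, add_zero, one_mul]
        simp
    | succ i ih =>
        rw [hw x hx i, ih, ← Finset.prod_pow]
        rw [Finset.prod_range_succ' (fun j => x ^ (2^(j*l))) (i+1)]
        rw [mul_comm]
        congr 1
        · refine Finset.prod_congr rfl (fun j _ => ?_)
          rw [HKpp, show j*l + l = (j+1)*l by ring]
        · norm_num
  have hL1 : ∀ x ∈ R, Cseq l a (m0+2) * x + a * (Cseq l a (m0+1))^(2^l) = x ^ S := by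
    intro x hx
    rw [hwp x hx (m0+1), hperm x]
  have hstar : ∀ x ∈ R,
      Cseq l a (m0+2) * x^2 + Z * x + a * (Cseq l a (m0+2))^(2^l) = 0 := by
    intro x hx
    have h1 := hwp x hx (m0+2)
    have h2' : (∏ j ∈ Finset.range (m0+3), x^(2^(j*l)))
        = (∏ j ∈ Finset.range (m0+2), x^(2^(j*l))) * x := by
      rw [Finset.prod_range_succ]
      congr 1
      exact powln x
    have h3 := hwp x hx (m0+1)
    have h4 : Cseq l a (m0+3)*x + a*(Cseq l a (m0+2))^(2^l)
        = (Cseq l a (m0+2)*x + a*(Cseq l a (m0+1))^(2^l))*x := by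
      rw [h1, h2', ← h3]
    rw [hZeq]
    linear_combination h4 + hch2 * (Cseq l a (m0+2)*x^2 + a*(Cseq l a (m0+1))^(2^l)*x)
  have hsum2 : ∀ x ∈ R, ∀ y ∈ R, x ≠ y → Cseq l a (m0+2) * (x + y) = Z := by
    intro x hx y hy hxy
    have hx' := hstar x hx
    have hy' := hstar y hy
    have hxyne : x + y ≠ 0 := by
      intro h; apply hxy; linear_combination h - hch2 * y
    have hdiff : Cseq l a (m0+2) * (x+y)^2 + Z*(x+y) = 0 := by
      have hsq : (x+y)^2 = x^2 + y^2 := by linear_combination hch2 * (x*y)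
      rw [hsq]
      linear_combination hx' + hy' - hch2 * (a*(Cseq l a (m0+2))^(2^l))
    have hfac : (x+y) * (Cseq l a (m0+2)*(x+y) + Z) = 0 := by linear_combination hdiff
    rcases mul_eq_zero.mp hfac with h | h
    · exact absurd h hxyne
    · linear_combination h - hch2 * Z
  constructor
  · -- Forward direction
    intro hcard
    obtain ⟨x, y, hxy, hRxy⟩ := Finset.card_eq_two.mp hcard
    have hxR : x ∈ R := by rw [hRxy]; simp
    have hyR : y ∈ R := by rw [hRxy]; simp
    have hxne := hrne x hxR
    have hyne := hrne y hyR
    have hsplitl : ∀ u : F, u ^ (2^l) = u ^ (2^l - 1) * u := by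
      intro u
      conv_lhs => rw [show (2:ℕ)^l = (2^l - 1) + 1 from by
        have : (1:ℕ) ≤ 2^l := Nat.one_le_two_pow
        omega]
      rw [pow_succ]
    by_cases hA2 : Cseq l a (m0+2) = 0
    · exfalso
      have hx1 := hL1 x hxR
      have hy1 := hL1 y hyR
      rw [hA2, zero_mul, zero_add] at hx1 hy1
      have hxS : x ^ S ≠ 0 := pow_ne_zero _ hxne
      have hxyS : (y * x⁻¹) ^ S = 1 := by
        rw [mul_pow, inv_pow, ← hy1, hx1, mul_inv_cancel₀ hxS]
      obtain ⟨z, hz0, hzq⟩ := HKpowim k d l S hF hk0 hd hd0 ⟨l1, hl1⟩ hSk (y * x⁻¹)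
        (mul_ne_zero hyne (inv_ne_zero hxne)) hxyS
      have hyx : x * z ^ (2^l - 1) = y := by rw [hzq]; field_simp
      have hzQ : z ^ (2^l) = z * (y * x⁻¹) := by
        rw [hsplitl z, hzq]; ring
      have hzne : z ^ (2^l) ≠ z := by
        rw [hzQ]
        intro h
        have h9 : y * x⁻¹ = 1 := mul_left_cancel₀ hz0 (h.trans (mul_one z).symm)
        field_simp [hxne] at h9
        exact hxy h9.symm
      have hkeyP : ∀ u : F,
          u * ((x * u^(2^l - 1))^(2^l + 1) + (x * u^(2^l - 1)) + a)
            = (x + a) * u^(2^(2*l)) + x * u^(2^l) + a * u := by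
        intro u
        have h1 : (1:ℕ) ≤ 2^l := Nat.one_le_two_pow
        have he : (2^l - 1) * (2^l + 1) + 1 = 2^(2*l) := by
          rw [show (2:ℕ)^(2*l) = 2^l * 2^l from by rw [two_mul, pow_add]]
          zify [h1]
          ring
        have hxq := hre x hxR
        have e1 : (x * u^(2^l - 1))^(2^l + 1)
            = (x^(2^l) * x) * u^((2^l - 1) * (2^l + 1)) := by
          rw [mul_pow, ← pow_mul, pow_succ]
        rw [e1, hxq]
        have e2 : u * ((x + a) * u^((2^l - 1)*(2^l + 1))) = (x + a) * u^(2^(2*l)) := by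
          rw [← he, pow_succ]; ring
        have e3 : u * (x * u^(2^l - 1)) = x * u^(2^l) := by
          rw [hsplitl u]; ring
        calc u * ((x + a) * u^((2^l-1)*(2^l+1)) + x * u^(2^l - 1) + a)
            = u * ((x+a) * u^((2^l-1)*(2^l+1))) + u * (x * u^(2^l - 1)) + a * u := by ring
          _ = (x + a) * u^(2^(2*l)) + x * u^(2^l) + a * u := by rw [e2, e3]
      have hshift : ∀ u : F, u ≠ 0 →
          (x + a) * u^(2^(2*l)) + x * u^(2^l) + a * u = 0 → x * u^(2^l - 1) ∈ R := by
        intro u hu hL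
        rw [hmemR]
        have key := hkeyP u
        rw [hL] at key
        exact (mul_eq_zero.mp key).resolve_left hu
      have hLz : (x + a) * z^(2^(2*l)) + x * z^(2^l) + a * z = 0 := by
        rw [← hkeyP z, hyx, (hmemR y).mp hyR, mul_zero]
      have hz1ne : z + 1 ≠ 0 := by
        intro h
        have hz1 : z = 1 := by linear_combination h - hch2
        rw [hz1, one_pow] at hzq
        field_simp [hxne] at hzq
        exact hxy hzq
      have hLz1 : (x + a) * (z+1)^(2^(2*l)) + x * (z+1)^(2^l) + a * (z+1) = 0 := by
        rw [HKfrob z 1 (2*l), HKfrob z 1 l, one_pow, one_pow]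
        linear_combination hLz + hch2 * (x + a)
      have hx3R : x * (z+1)^(2^l - 1) ∈ R := hshift (z+1) hz1ne hLz1
      have hx3x : x * (z+1)^(2^l - 1) ≠ x := by
        intro h
        have h1 : (z+1)^(2^l - 1) = 1 := by
          apply mul_left_cancel₀ hxne
          rw [mul_one]; exact h
        have h2q : (z+1)^(2^l) = z + 1 := by rw [hsplitl, h1, one_mul]
        rw [HKfrob, one_pow] at h2q
        exact hzne (by linear_combination h2q)
      have hx3y : x * (z+1)^(2^l - 1) ≠ y := by
        intro h
        rw [← hyx] at h
        have h1 : (z+1)^(2^l - 1) = z^(2^l - 1) := mul_left_cancel₀ hxne h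
        have h2q : (z+1)^(2^l) * z = z^(2^l) * (z+1) := by
          rw [hsplitl (z+1), hsplitl z, h1]; ring
        rw [HKfrob, one_pow] at h2q
        exact hzne (by linear_combination -h2q)
      have hsub : ({x, y, x * (z+1)^(2^l - 1)} : Finset F) ⊆ R := by
        intro u hu
        rcases Finset.mem_insert.mp hu with rfl | hu
        · exact hxR
        rcases Finset.mem_insert.mp hu with rfl | hu
        · exact hyR
        rw [Finset.mem_singleton.mp hu]
        exact hx3R
      have hc3 : ({x, y, x * (z+1)^(2^l - 1)} : Finset F).card = 3 :=
        Finset.card_eq_three.mpr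
          ⟨x, y, x * (z+1)^(2^l - 1), hxy, fun h => hx3x h.symm, fun h => hx3y h.symm, rfl⟩
      have hle := Finset.card_le_card hsub
      rw [hc3, hcard] at hle
      omega
    · -- A2 ≠ 0
      have hZne : Z ≠ 0 := by
        intro hZ0
        apply hxy
        have hx' := hstar x hxR
        have hy' := hstar y hyR
        rw [hZ0, zero_mul] at hx' hy'
        have h6 : Cseq l a (m0+2) * x^2 = Cseq l a (m0+2) * y^2 := by
          linear_combination hx' - hy'
        have h7 : x^2 = y^2 := mul_left_cancel₀ hA2 h6
        have h8 : (x + y)^2 = 0 := by linear_combination h7 + hch2*(x*y + y^2)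
        have h9 : x + y = 0 := by
          exact pow_eq_zero_iff (by norm_num : (2:ℕ) ≠ 0) |>.mp h8
        linear_combination h9 - hch2 * y
      refine ⟨hZne, ?_⟩
      set v := (Cseq l a (m0+2) * x + Cseq l a (m0+3)) / Z with hvs
      have hfixnum : (Cseq l a (m0+2) * x + Cseq l a (m0+3))^(2^l)
          = Cseq l a (m0+2) * x + Cseq l a (m0+3) := by
        rw [HKfrob, mul_pow]
        apply mul_left_cancel₀ hxne
        have hxq := hre x hxR
        have hsx := hstar x hxR
        linear_combination (Cseq l a (m0+2))^(2^l) * hxq - hsx - x * hZ'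
          + hch2 * (a * (Cseq l a (m0+2))^(2^l) + Z*x - Cseq l a (m0+3)*x)
      have hvq : v ^ (2^l) = v := by
        rw [hvs, div_pow, hZq, hfixnum]
      have hvd : v ^ (2^d) = v := by
        rw [← hd]; exact HKfix_gcd l k v hvq (powk v)
      have hAy : Cseq l a (m0+2) * y + Cseq l a (m0+3)
          = (Cseq l a (m0+2) * x + Cseq l a (m0+3)) + Z := by
        have h5 := hsum2 x hxR y hyR hxy
        linear_combination h5 - hch2 * (Cseq l a (m0+2) * x)
      have hnum : (Cseq l a (m0+2)*x + Cseq l a (m0+3))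
          * (Cseq l a (m0+2)*y + Cseq l a (m0+3)) = a ^ S := by
        have hsx := hstar x hxR
        linear_combination (Cseq l a (m0+2)*x + Cseq l a (m0+3)) * hAy
          + Cseq l a (m0+2) * hsx + hNeq - Cseq l a (m0+3) * hZeq
          + hch2 * (Cseq l a (m0+2) * Cseq l a (m0+3) * x + Cseq l a (m0+3) * Z
              - a * Cseq l a (m0+2) * (Cseq l a (m0+2))^(2^l)
              - a * (Cseq l a (m0+1))^(2^l) * Cseq l a (m0+3))
      have hv1 : v + 1 = (Cseq l a (m0+2)*y + Cseq l a (m0+3)) / Z := by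
        rw [hAy, add_div, div_self hZne, hvs]
      have hveq : v^2 + v = a^S / Z^2 := by
        calc v^2 + v = v * (v+1) := by ring
          _ = ((Cseq l a (m0+2)*x + Cseq l a (m0+3)) / Z)
              * ((Cseq l a (m0+2)*y + Cseq l a (m0+3)) / Z) := by rw [hv1, hvs]
          _ = ((Cseq l a (m0+2)*x + Cseq l a (m0+3))
              * (Cseq l a (m0+2)*y + Cseq l a (m0+3))) / Z^2 := by
                rw [div_mul_div_comm, ← pow_two]
          _ = a^S / Z^2 := by rw [hnum]
      rw [← hveq]
      exact HKtelescope d v hvd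
  · -- Backward direction
    rintro ⟨hZne, htr⟩
    have hA2ne : Cseq l a (m0+2) ≠ 0 := fun h => hZne (hCn0Z h)
    set t := a ^ S / Z ^ 2 with hts
    have hZd : Z ^ (2^d) = Z := by
      rw [← hd]; exact HKfix_gcd l k Z hZq (powk Z)
    have hprodS : (2^d - 1) * S = 2^k - 1 := Nat.eq_sub_of_add_eq hSk
    have haS : (a ^ S) ^ (2^d) = a ^ S := by
      rw [← pow_mul]
      have e2 : (2:ℕ)^d = (2^d - 1) + 1 := by
        have : (1:ℕ) ≤ 2^d := Nat.one_le_two_pow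
        omega
      have e : S * 2^d = (2^k - 1) + S := by
        calc S * 2^d = S * ((2^d - 1) + 1) := by rw [← e2]
          _ = (2^d - 1) * S + S := by ring
          _ = (2^k - 1) + S := by rw [hprodS]
      rw [e, pow_add, ha1, one_mul]
    have ht2 : t ^ (2^d) = t := by
      rw [hts, div_pow, haS,
        show (Z^2)^(2^d) = (Z^(2^d))^2 from by rw [← pow_mul, mul_comm, pow_mul], hZd]
    obtain ⟨v, hvd, hvsq⟩ := HKh90 k d S hF hk0 hd0 hSk t ht2 htr
    have hvq : v ^ (2^l) = v := by
      have h := HKfix_iter v d hvd l1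
      rwa [← hl1] at h
    have hZt : Z^2 * t = a^S := by
      rw [hts]; field_simp
    have hroot : ∀ w : F, w ^ (2^l) = w → w^2 + w = t →
        ((Z * w + Cseq l a (m0+3)) / Cseq l a (m0+2)) ∈ R := by
      intro w hwq hwt
      have hID : (Z*w + (Cseq l a (m0+3))^(2^l)) * (Z*w + Cseq l a (m0+3))
          + (Cseq l a (m0+2))^(2^l) * (Z*w + Cseq l a (m0+3))
          + a * ((Cseq l a (m0+2))^(2^l) * Cseq l a (m0+2)) = 0 := by
        linear_combination Z^2 * hwt + hZt - Z*w*hZ' + hNeq + Cseq l a (m0+3) * hE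
          + hch2 * (a^S)
      set x := (Z * w + Cseq l a (m0+3)) / Cseq l a (m0+2) with hxs
      have e1 : Cseq l a (m0+2) * x = Z * w + Cseq l a (m0+3) := by
        rw [hxs]; field_simp
      have e2 : (Cseq l a (m0+2))^(2^l) * x^(2^l) = Z * w + (Cseq l a (m0+3))^(2^l) := by
        have h := congrArg (· ^ (2^l)) e1
        rw [mul_pow, HKfrob, mul_pow, hZq, hwq] at h
        exact h
      have hA2p : (Cseq l a (m0+2))^(2^l) * Cseq l a (m0+2) ≠ 0 :=
        mul_ne_zero (pow_ne_zero _ hA2ne) hA2ne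
      have expand : ((Cseq l a (m0+2))^(2^l) * Cseq l a (m0+2)) * (x^(2^l + 1) + x + a)
          = ((Cseq l a (m0+2))^(2^l) * x^(2^l)) * (Cseq l a (m0+2) * x)
            + (Cseq l a (m0+2))^(2^l) * (Cseq l a (m0+2) * x)
            + a * ((Cseq l a (m0+2))^(2^l) * Cseq l a (m0+2)) := by ring
      have key : ((Cseq l a (m0+2))^(2^l) * Cseq l a (m0+2)) * (x^(2^l+1) + x + a) = 0 := by
        rw [expand, e2, e1]
        linear_combination hID
      rw [hmemR]
      exact (mul_eq_zero.mp key).resolve_left hA2p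
    have hw1q : (v+1)^(2^l) = v + 1 := by rw [HKfrob, hvq, one_pow]
    have hw1t : (v+1)^2 + (v+1) = t := by linear_combination hvsq + hch2 * (v + 1)
    have hx1R : (Z * v + Cseq l a (m0+3)) / Cseq l a (m0+2) ∈ R := hroot v hvq hvsq
    have hx2R : (Z * (v+1) + Cseq l a (m0+3)) / Cseq l a (m0+2) ∈ R := hroot (v+1) hw1q hw1t
    have hx12 : (Z * v + Cseq l a (m0+3)) / Cseq l a (m0+2)
        ≠ (Z * (v+1) + Cseq l a (m0+3)) / Cseq l a (m0+2) := by
      intro h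
      rw [div_eq_div_iff hA2ne hA2ne] at h
      have hZA : Z * Cseq l a (m0+2) = 0 := by linear_combination -h
      exact hZne ((mul_eq_zero.mp hZA).resolve_right hA2ne)
    have hRsub : R = {(Z * v + Cseq l a (m0+3)) / Cseq l a (m0+2),
        (Z * (v+1) + Cseq l a (m0+3)) / Cseq l a (m0+2)} := by
      apply Finset.Subset.antisymm
      · intro u hu
        simp only [Finset.mem_insert, Finset.mem_singleton]
        by_contra hcon
        push_neg at hcon
        obtain ⟨hu1, hu2⟩ := hcon
        apply hu2
        have e1 := hsum2 u hu _ hx1R hu1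
        have e2 := hsum2 _ hx1R _ hx2R hx12
        have h5 : u + (Z * v + Cseq l a (m0+3)) / Cseq l a (m0+2)
            = (Z * v + Cseq l a (m0+3)) / Cseq l a (m0+2)
              + (Z * (v+1) + Cseq l a (m0+3)) / Cseq l a (m0+2) :=
          mul_left_cancel₀ hA2ne (e1.trans e2.symm)
        linear_combination h5
      · intro u hu
        simp only [Finset.mem_insert, Finset.mem_singleton] at hu
        rcases hu with rfl | rfl
        exacts [hx1R, hx2R]
    rw [hRsub, Finset.card_insert_of_notMem (by simp [hx12]), Finset.card_singleton]
end
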